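/- arXiv:1710.06374 — 7 statements merged into one kernel-verified Lean document; each statement's English description precedes it below -/
import Mathlib

section
/- Let d, n, d_1, ..., d_n be positive integers and let L_j : ℝ^d → ℝ^{d_j} (1 ≤ j ≤ n) be surjective linear maps whose Hölder–Brascamp–Lieb polytope 𝒫 is nonempty. Let B : [0,∞)^n → [0,∞) be Borel measurable, nondecreasing in each coordinate, with B(y_1,...,y_n) = 0 whenever some y_j = 0. If B is an HBL function for {L_j}, then there exists c > 0 such that B(λ_1 y_1, ..., λ_n y_n) ≥ c · min_{s ∈ 𝒫} λ_1^{s_1}···λ_n^{s_n} · B(y_1,...,y_n) for all 0 < λ_j, y_j < ∞. -/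
open Module

noncomputable section

lemma adapted_basis {E : Type*} [AddCommGroup E] [Module ℝ E] [FiniteDimensional ℝ E]
    (W : Submodule ℝ E) :
    ∃ b : Basis (Fin (finrank ℝ E)) ℝ E,
      (∀ i : Fin (finrank ℝ E), (i : ℕ) < finrank ℝ W → b i ∈ W) ∧
      (∀ x ∈ W, ∀ k : Fin (finrank ℝ E), finrank ℝ W ≤ (k : ℕ) → b.repr x k = 0) := by
  obtain ⟨W', hc⟩ := W.exists_isCompl
  set w := finrank ℝ W
  set w' := finrank ℝ W'
  have hdim : w + w' = finrank ℝ E := Submodule.finrank_add_eq_of_isCompl hc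
  let bW : Basis (Fin w) ℝ W := Module.finBasis ℝ W
  let bW' : Basis (Fin w') ℝ W' := Module.finBasis ℝ W'
  let g : (W × W') ≃ₗ[ℝ] E := Submodule.prodEquivOfIsCompl W W' hc
  let b0 : Basis (Fin w ⊕ Fin w') ℝ E := (bW.prod bW').map g
  let eqv : (Fin w ⊕ Fin w') ≃ Fin (finrank ℝ E) := finSumFinEquiv.trans (finCongr hdim)
  refine ⟨b0.reindex eqv, ?_, ?_⟩
  · intro i hi
    have hsymm : eqv.symm i = Sum.inl ⟨(i : ℕ), hi⟩ := by
      rw [Equiv.symm_apply_eq]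
      ext
      simp [eqv]
    rw [Basis.reindex_apply, hsymm, Basis.map_apply, Basis.prod_apply]
    simp [g, Submodule.coe_prodEquivOfIsCompl']
  · intro x hx k hk
    have hsymm : ∃ j : Fin w', eqv.symm k = Sum.inr j := by
      have hk2 : (k : ℕ) - w < w' := by omega
      refine ⟨⟨(k : ℕ) - w, hk2⟩, ?_⟩
      rw [Equiv.symm_apply_eq]
      ext
      simp [eqv]
      omega
    obtain ⟨j, hj⟩ := hsymm
    rw [Basis.repr_reindex_apply, hj, Basis.map_repr]
    have hgs : g.symm x = (⟨x, hx⟩, 0) := by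
      have h2 := Submodule.prodEquivOfIsCompl_symm_apply_left (p := W) (q := W') hc ⟨x, hx⟩
      simpa [g] using h2
    rw [LinearEquiv.trans_apply]
    show (bW.prod bW').repr (g.symm x) (Sum.inr j) = 0
    rw [hgs, Basis.prod_repr_inr]
    simp

lemma card_filter_fin_lt {d r : ℕ} (h : r ≤ d) :
    (Finset.univ.filter (fun i : Fin d => (i : ℕ) < r)).card = r := by
  have e : {i : Fin d // (i : ℕ) < r} ≃ Fin r :=
    { toFun := fun x => ⟨x.1, x.2⟩
      invFun := fun y => ⟨⟨y.1, lt_of_lt_of_le y.2 h⟩, y.2⟩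
      left_inv := fun x => by ext; rfl
      right_inv := fun y => rfl }
  rw [← Fintype.card_subtype]
  rw [Fintype.card_congr e, Fintype.card_fin]

lemma adapted_basis' (m : ℕ) (W : Submodule ℝ (Fin m → ℝ)) :
    ∃ b : Basis (Fin m) ℝ (Fin m → ℝ),
      (∀ i : Fin m, (i : ℕ) < finrank ℝ W → b i ∈ W) ∧
      (∀ x ∈ W, ∀ k : Fin m, finrank ℝ W ≤ (k : ℕ) → b.repr x k = 0) := by
  have hm : finrank ℝ (Fin m → ℝ) = m := by simp
  obtain ⟨b, h1, h2⟩ := adapted_basis W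
  refine ⟨b.reindex (finCongr hm), fun i hi => ?_, fun x hx k hk => ?_⟩
  · rw [Basis.reindex_apply]
    exact h1 _ (by simpa using hi)
  · rw [Basis.repr_reindex_apply]
    exact h2 x hx _ (by simpa using hk)

lemma prod_ite_pow {m q : ℕ} (h : q ≤ m) (a c : ℝ) :
    (∏ i : Fin m, if (i : ℕ) < q then a else c) = a ^ q * c ^ (m - q) := by
  rw [Finset.prod_ite, Finset.prod_const, Finset.prod_const, card_filter_fin_lt h]
  have h2 : (Finset.univ.filter (fun i : Fin m => ¬((i : ℕ) < q))).card = m - q := by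
    have h3 := Finset.card_filter_add_card_filter_not
      (s := (Finset.univ : Finset (Fin m))) (p := fun i : Fin m => (i : ℕ) < q)
    rw [card_filter_fin_lt h, Finset.card_univ, Fintype.card_fin] at h3
    omega
  rw [h2]

open MeasureTheory

set_option maxHeartbeats 1000000 in
lemma hbl_step (d n : ℕ) (dj : Fin n → ℕ)
    (L : (j : Fin n) → (Fin d → ℝ) →ₗ[ℝ] (Fin (dj j) → ℝ))
    (B : (Fin n → ℝ) → ℝ)
    (hBnonneg : ∀ y : Fin n → ℝ, (∀ j, 0 ≤ y j) → 0 ≤ B y)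
    (hBmono : ∀ y z : Fin n → ℝ, (∀ j, 0 ≤ y j) → (∀ j, y j ≤ z j) → B y ≤ B z)
    (C : ℝ)
    (hC : ∀ f : (j : Fin n) → (Fin (dj j) → ℝ) → ℝ,
      (∀ j, ∀ y, 0 ≤ f j y) → (∀ j, Integrable (f j)) →
      ∫⁻ x : Fin d → ℝ, ENNReal.ofReal (B (fun j => f j (L j x)))
        ≤ ENNReal.ofReal (C * B (fun j => ∫ y, f j y)))
    (V : Submodule ℝ (Fin d → ℝ)) :
    ∃ c₀ CC : ℝ, 0 < c₀ ∧ 1 ≤ CC ∧ ∀ t δ : ℝ, 0 < t → 0 < δ → δ ≤ 1 →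
      ∀ y : Fin n → ℝ, (∀ j, 0 < y j) →
      c₀ * (t ^ d * δ ^ (d - finrank ℝ V)) * B y
        ≤ B (fun j => CC * (t ^ (dj j) * δ ^ (dj j - finrank ℝ (V.map (L j)))) * y j) := by
  have hrd : finrank ℝ V ≤ d := by
    have := Submodule.finrank_le V
    simpa using this
  set r := finrank ℝ V with hrdef
  obtain ⟨b, hb1, -⟩ := adapted_basis' d V
  have hβ := fun j => adapted_basis' (dj j) (V.map (L j))
  choose β hβ1 hβ2 using hβ
  set ρ : Fin n → ℕ := fun j => finrank ℝ (V.map (L j)) with hρdef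
  have hρd : ∀ j, ρ j ≤ dj j := by
    intro j
    have := Submodule.finrank_le (V.map (L j))
    simpa [hρdef] using this
  set A : Fin n → ℝ := fun j => 1 + ∑ i, ∑ k, |(β j).repr (L j (b i)) k| with hAdef
  have hA1 : ∀ j, 1 ≤ A j := by
    intro j
    have : (0:ℝ) ≤ ∑ i, ∑ k, |(β j).repr (L j (b i)) k| :=
      Finset.sum_nonneg fun i _ => Finset.sum_nonneg fun k _ => abs_nonneg _
    simp only [hAdef]; linarith
  have hA0 : ∀ j, 0 < A j := fun j => lt_of_lt_of_le one_pos (hA1 j)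
  have hAg : ∀ j (i : Fin d) (k : Fin (dj j)), |(β j).repr (L j (b i)) k| ≤ A j - 1 := by
    intro j i k
    simp only [hAdef, add_sub_cancel_left]
    calc |(β j).repr (L j (b i)) k| ≤ ∑ k', |(β j).repr (L j (b i)) k'| :=
          Finset.single_le_sum (f := fun k' => |(β j).repr (L j (b i)) k'|)
            (fun k' _ => abs_nonneg _) (Finset.mem_univ k)
      _ ≤ ∑ i', ∑ k', |(β j).repr (L j (b i')) k'| :=
          Finset.single_le_sum (f := fun i' => ∑ k', |(β j).repr (L j (b i')) k'|)
            (fun i' _ => Finset.sum_nonneg fun k' _ => abs_nonneg _) (Finset.mem_univ i)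
  set T : (Fin d → ℝ) →ₗ[ℝ] (Fin d → ℝ) := b.equivFun.symm.toLinearMap with hTdef
  set Dsrc : ℝ := |LinearMap.det T| with hDsrcdef
  have hDsrc : 0 < Dsrc := by
    rw [hDsrcdef]
    exact abs_pos.mpr (LinearEquiv.isUnit_det' b.equivFun.symm).ne_zero
  set DT : Fin n → ℝ := fun j => |LinearMap.det ((β j).equivFun.symm.toLinearMap)| with hDTdef
  have hDT0 : ∀ j, 0 ≤ DT j := fun j => abs_nonneg _
  set CC : ℝ := 1 + ∑ j, DT j * (2 * A j) ^ (dj j) with hCCdef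
  have hterm0 : ∀ j, 0 ≤ DT j * (2 * A j) ^ (dj j) := by
    intro j
    exact mul_nonneg (hDT0 j) (pow_nonneg (by linarith [hA0 j]) _)
  have hCC1 : 1 ≤ CC := by
    have : (0:ℝ) ≤ ∑ j, DT j * (2 * A j) ^ (dj j) := Finset.sum_nonneg fun j _ => hterm0 j
    simp only [hCCdef]; linarith
  have hCCj : ∀ j, DT j * (2 * A j) ^ (dj j) ≤ CC := by
    intro j
    have h1 : DT j * (2 * A j) ^ (dj j) ≤ ∑ j', DT j' * (2 * A j') ^ (dj j') :=
      Finset.single_le_sum (fun j' _ => hterm0 j') (Finset.mem_univ j)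
    simp only [hCCdef]; linarith
  set C'' : ℝ := max C 1 with hC''def
  have hC''pos : (0:ℝ) < C'' := lt_of_lt_of_le one_pos (le_max_right _ _)
  refine ⟨Dsrc * 2 ^ d / C'', CC, by positivity, hCC1, ?_⟩
  intro t δ ht hδ hδ1 y hy
  have hδt : 0 < δ * t := mul_pos hδ ht
  have hδtt : δ * t ≤ t := by nlinarith
  set sides : Fin d → ℝ := fun i => if (i : ℕ) < r then t else δ * t with hsidesdef
  have hsp : ∀ i, 0 < sides i := by
    intro i; simp only [hsidesdef]; split <;> [exact ht; exact hδt]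
  have hst : ∀ i, sides i ≤ t := by
    intro i; simp only [hsidesdef]; split <;> [exact le_rfl; exact hδtt]
  set box : Set (Fin d → ℝ) := Set.univ.pi fun i => Set.Icc (-(sides i)) (sides i) with hboxdef
  have hboxc : IsCompact box := isCompact_univ_pi fun i => isCompact_Icc
  set K : Set (Fin d → ℝ) := ⇑T '' box with hKdef
  have hKc : IsCompact K := hboxc.image T.continuous_of_finiteDimensional
  have hKm : MeasurableSet K := hKc.isClosed.measurableSet
  set E : (j : Fin n) → Set (Fin (dj j) → ℝ) := fun j => ⇑(L j) '' K with hEdef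
  have hEc : ∀ j, IsCompact (E j) := fun j => hKc.image (L j).continuous_of_finiteDimensional
  have hEm : ∀ j, MeasurableSet (E j) := fun j => (hEc j).isClosed.measurableSet
  have hElt : ∀ j, volume (E j) < ⊤ := fun j => (hEc j).measure_lt_top
  set f : (j : Fin n) → (Fin (dj j) → ℝ) → ℝ := fun j => (E j).indicator (fun _ => y j)
    with hfdef
  have hf0 : ∀ j, ∀ z, 0 ≤ f j z := fun j z => Set.indicator_nonneg (fun _ _ => (hy j).le) _
  have hfint : ∀ j, Integrable (f j) := by
    intro j
    rw [hfdef]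
    exact (integrable_indicator_iff (hEm j)).2 (integrableOn_const (hElt j).ne)
  have key := hC f hf0 hfint
  -- lower bound for the lintegral
  have hlow : ENNReal.ofReal (B y) * volume K
      ≤ ∫⁻ x, ENNReal.ofReal (B fun j => f j (L j x)) := by
    have h1 : ∫⁻ x, K.indicator (fun _ => ENNReal.ofReal (B y)) x
        = ENNReal.ofReal (B y) * volume K := by
      rw [lintegral_indicator hKm, setLIntegral_const]
    rw [← h1]
    refine lintegral_mono fun x => ?_
    by_cases hx : x ∈ K
    · rw [Set.indicator_of_mem hx]
      have hfx : (fun j => f j (L j x)) = y := by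
        funext j
        exact Set.indicator_of_mem (Set.mem_image_of_mem _ hx) _
      rw [hfx]
    · rw [Set.indicator_of_notMem hx]
      exact zero_le
  -- volume of K
  have hprodbox : volume box = ENNReal.ofReal ((2*t)^r * (2*(δ*t))^(d-r)) := by
    rw [hboxdef, volume_pi_pi]
    have hv : ∀ i : Fin d, volume (Set.Icc (-(sides i)) (sides i))
        = ENNReal.ofReal (2 * sides i) := by
      intro i; rw [Real.volume_Icc]; congr 1; ring
    simp_rw [hv]
    rw [← ENNReal.ofReal_prod_of_nonneg (fun i _ => by have := hsp i; positivity)]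
    congr 1
    have hv2 : ∀ i : Fin d, 2 * sides i = if (i : ℕ) < r then 2*t else 2*(δ*t) := by
      intro i; simp only [hsidesdef]; split <;> ring
    simp_rw [hv2]
    exact prod_ite_pow hrd _ _
  have hvolK : volume K = ENNReal.ofReal (Dsrc * ((2*t)^r * (2*(δ*t))^(d-r))) := by
    rw [hKdef, MeasureTheory.Measure.addHaar_image_linearMap, hprodbox,
      ← ENNReal.ofReal_mul (abs_nonneg _)]
  -- upper bound for volume of E j
  have hEvol : ∀ j, (volume (E j)).toReal
      ≤ DT j * (2*A j)^(dj j) * (t ^ (dj j) * δ ^ (dj j - ρ j)) := by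
    intro j
    set sj : Fin (dj j) → ℝ := fun k => if (k : ℕ) < ρ j then A j * t else A j * (δ * t)
      with hsjdef
    have hsj0 : ∀ k, 0 < sj k := by
      intro k; simp only [hsjdef]
      split
      · exact mul_pos (hA0 j) ht
      · exact mul_pos (hA0 j) hδt
    set boxj : Set (Fin (dj j) → ℝ) := Set.univ.pi fun k => Set.Icc (-(sj k)) (sj k)
      with hboxjdef
    have hsub : E j ⊆ ⇑((β j).equivFun.symm.toLinearMap) '' boxj := by
      rintro z ⟨x, hxK, rfl⟩
      rcases hxK with ⟨c, hcbox, rfl⟩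
      have hxrepr : T c = ∑ i, c i • b i := by
        rw [hTdef]
        exact b.equivFun_symm_apply c
      have hz : L j (T c) = ∑ i, c i • (L j (b i)) := by
        rw [hxrepr, map_sum]
        simp_rw [_root_.map_smul]
      have hcb : ∀ i, |c i| ≤ sides i := by
        intro i
        have h4 := hcbox i (Set.mem_univ i)
        rw [Set.mem_Icc] at h4
        exact abs_le.2 ⟨by linarith [h4.1], h4.2⟩
      refine ⟨(β j).equivFun (L j (T c)), ?_, ?_⟩
      · intro k _
        have hval : (β j).repr (L j (T c)) k = ∑ i, c i * (β j).repr (L j (b i)) k := by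
          rw [hz, map_sum, Finsupp.finset_sum_apply]
          congr 1
          funext i
          rw [_root_.map_smul, Finsupp.smul_apply, smul_eq_mul]
        have habs : |(β j).repr (L j (T c)) k| ≤ sj k := by
          rw [hval]
          refine le_trans (Finset.abs_sum_le_sum_abs _ _) ?_
          by_cases hk : (k : ℕ) < ρ j
          · have hbd : ∀ i : Fin d, |c i * (β j).repr (L j (b i)) k|
                ≤ t * |(β j).repr (L j (b i)) k| := by
              intro i
              rw [abs_mul]
              exact mul_le_mul_of_nonneg_right ((hcb i).trans (hst i)) (abs_nonneg _)
            refine le_trans (Finset.sum_le_sum fun i _ => hbd i) ?_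
            rw [← Finset.mul_sum]
            have hsum : ∑ i, |(β j).repr (L j (b i)) k| ≤ A j - 1 + (A j - 1) * 0 := by
              simp only [mul_zero, add_zero]
              calc ∑ i, |(β j).repr (L j (b i)) k|
                  ≤ ∑ i, ∑ k', |(β j).repr (L j (b i)) k'| :=
                    Finset.sum_le_sum fun i _ =>
                      Finset.single_le_sum (f := fun k' => |(β j).repr (L j (b i)) k'|)
                        (fun k' _ => abs_nonneg _) (Finset.mem_univ k)
                _ = A j - 1 := by simp only [hAdef]; ring
            simp only [mul_zero, add_zero] at hsum
            have : t * (∑ i, |(β j).repr (L j (b i)) k|) ≤ t * (A j - 1) :=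
              mul_le_mul_of_nonneg_left hsum ht.le
            simp only [hsjdef, if_pos hk]
            nlinarith [hA0 j, ht]
          · have hbd : ∀ i : Fin d, |c i * (β j).repr (L j (b i)) k|
                ≤ (δ * t) * |(β j).repr (L j (b i)) k| := by
              intro i
              by_cases hi : (i : ℕ) < r
              · have hzero : (β j).repr (L j (b i)) k = 0 := by
                  refine hβ2 j (L j (b i)) ?_ k ?_
                  · exact Submodule.mem_map_of_mem (hb1 i hi)
                  · exact not_lt.1 hk
                rw [hzero]
                simp [abs_nonneg, mul_nonneg hδt.le (abs_nonneg _)]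
              · rw [abs_mul]
                have : |c i| ≤ δ * t := by
                  have h5 := hcb i
                  simpa only [hsidesdef, if_neg hi] using h5
                exact mul_le_mul_of_nonneg_right this (abs_nonneg _)
            refine le_trans (Finset.sum_le_sum fun i _ => hbd i) ?_
            rw [← Finset.mul_sum]
            have hsum : ∑ i, |(β j).repr (L j (b i)) k| ≤ A j - 1 := by
              calc ∑ i, |(β j).repr (L j (b i)) k|
                  ≤ ∑ i, ∑ k', |(β j).repr (L j (b i)) k'| :=
                    Finset.sum_le_sum fun i _ =>
                      Finset.single_le_sum (f := fun k' => |(β j).repr (L j (b i)) k'|)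
                        (fun k' _ => abs_nonneg _) (Finset.mem_univ k)
                _ = A j - 1 := by simp only [hAdef]; ring
            have : (δ * t) * (∑ i, |(β j).repr (L j (b i)) k|) ≤ (δ * t) * (A j - 1) :=
              mul_le_mul_of_nonneg_left hsum hδt.le
            simp only [hsjdef, if_neg hk]
            nlinarith [hA0 j, hδt]
        rw [Set.mem_Icc]
        rw [Basis.equivFun_apply]
        constructor
        · linarith [abs_le.1 habs |>.1]
        · exact (abs_le.1 habs).2
      · exact (β j).equivFun.symm_apply_apply _
    have hvolEj : volume (E j) ≤ ENNReal.ofReal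
        (DT j * ((2*(A j * t))^(ρ j) * (2*(A j * (δ*t)))^(dj j - ρ j))) := by
      refine le_trans (measure_mono hsub) ?_
      rw [MeasureTheory.Measure.addHaar_image_linearMap]
      have hbj : volume boxj = ENNReal.ofReal ((2*(A j * t))^(ρ j) * (2*(A j * (δ*t)))^(dj j - ρ j)) := by
        rw [hboxjdef, volume_pi_pi]
        have hv : ∀ k, volume (Set.Icc (-(sj k)) (sj k)) = ENNReal.ofReal (2 * sj k) := by
          intro k; rw [Real.volume_Icc]; congr 1; ring
        simp_rw [hv]
        rw [← ENNReal.ofReal_prod_of_nonneg (fun k _ => by have := hsj0 k; positivity)]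
        congr 1
        have hv2 : ∀ k : Fin (dj j), 2 * sj k
            = if (k : ℕ) < ρ j then 2*(A j * t) else 2*(A j * (δ*t)) := by
          intro k; simp only [hsjdef]; split <;> ring
        simp_rw [hv2]
        exact prod_ite_pow (hρd j) _ _
      rw [hbj, ← ENNReal.ofReal_mul (abs_nonneg _)]
    have harith : (2*(A j * t))^(ρ j) * (2*(A j * (δ*t)))^(dj j - ρ j)
        = (2*A j)^(dj j) * (t^(dj j) * δ^(dj j - ρ j)) := by
      have h3 : ρ j + (dj j - ρ j) = dj j := Nat.add_sub_cancel' (hρd j)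
      have e1 : (2*(A j * t))^(ρ j) = (2*A j)^(ρ j) * t^(ρ j) := by
        rw [← mul_assoc, mul_pow]
      have e2 : (2*(A j*(δ*t)))^(dj j - ρ j)
          = (2*A j)^(dj j - ρ j) * (δ^(dj j - ρ j) * t^(dj j - ρ j)) := by
        rw [← mul_assoc, mul_pow, mul_pow δ t]
      rw [e1, e2]
      calc (2*A j)^(ρ j) * t^(ρ j) * ((2*A j)^(dj j - ρ j) * (δ^(dj j - ρ j) * t^(dj j - ρ j)))
          = ((2*A j)^(ρ j) * (2*A j)^(dj j - ρ j))
            * ((t^(ρ j) * t^(dj j - ρ j)) * δ^(dj j - ρ j)) := by ring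
        _ = (2*A j)^(dj j) * (t^(dj j) * δ^(dj j - ρ j)) := by
            rw [← pow_add, ← pow_add, h3]
    refine ENNReal.toReal_le_of_le_ofReal ?_ ?_
    · have := hA0 j; positivity
    · refine le_trans hvolEj (le_of_eq ?_)
      congr 1
      rw [harith]
      ring
  -- conclude
  have hwle : ∀ j, (volume (E j)).toReal * y j
      ≤ CC * (t ^ (dj j) * δ ^ (dj j - ρ j)) * y j := by
    intro j
    have h1 := hEvol j
    have h2 : DT j * (2*A j)^(dj j) * (t^(dj j)*δ^(dj j - ρ j))
        ≤ CC * (t^(dj j)*δ^(dj j - ρ j)) :=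
      mul_le_mul_of_nonneg_right (hCCj j) (by positivity)
    exact mul_le_mul_of_nonneg_right (h1.trans h2) (hy j).le
  set w : Fin n → ℝ := fun j => (volume (E j)).toReal * y j with hwdef
  have hw0 : ∀ j, 0 ≤ w j := fun j => mul_nonneg ENNReal.toReal_nonneg (hy j).le
  have hintf : (fun j => ∫ z, f j z) = w := by
    funext j
    rw [hfdef]
    rw [MeasureTheory.integral_indicator_const (y j) (hEm j)]
    simp [hwdef, smul_eq_mul, mul_comm, Measure.real]
  rw [hintf] at key
  have hBw : B w ≤ B (fun j => CC * (t ^ (dj j) * δ ^ (dj j - ρ j)) * y j) :=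
    hBmono _ _ hw0 hwle
  by_cases hBy : B y = 0
  · rw [hBy, mul_zero]
    refine hBnonneg _ (fun j => ?_)
    have := hy j
    have h6 : (0:ℝ) < CC := lt_of_lt_of_le one_pos hCC1
    positivity
  · have hBy0 : 0 < B y := lt_of_le_of_ne (hBnonneg y fun j => (hy j).le) (Ne.symm hBy)
    have hBw0 : 0 ≤ B w := hBnonneg w hw0
    have hreal : B y * (Dsrc * ((2*t)^r * (2*(δ*t))^(d-r))) ≤ C'' * B w := by
      have h1 : ENNReal.ofReal (B y * (Dsrc * ((2*t)^r * (2*(δ*t))^(d-r))))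
          ≤ ENNReal.ofReal (C * B w) := by
        rw [ENNReal.ofReal_mul hBy0.le, ← hvolK]
        exact le_trans hlow key
      have h2 := ENNReal.toReal_mono ENNReal.ofReal_ne_top h1
      rw [ENNReal.toReal_ofReal (by positivity), ENNReal.toReal_ofReal'] at h2
      refine le_trans h2 (max_le ?_ ?_)
      · exact mul_le_mul_of_nonneg_right (le_max_left _ _) hBw0
      · positivity
    have hpowarith : (2*t)^r * (2*(δ*t))^(d-r) = 2^d * (t^d * δ^(d-r)) := by
      have h3 : r + (d - r) = d := Nat.add_sub_cancel' hrd
      have e1 : (2*t)^r = (2:ℝ)^r * t^r := mul_pow 2 t r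
      have e2 : (2*(δ*t))^(d-r) = (2:ℝ)^(d-r) * (δ^(d-r) * t^(d-r)) := by
        rw [mul_pow, mul_pow δ t]
      rw [e1, e2]
      calc (2:ℝ)^r * t^r * (2^(d-r) * (δ^(d-r) * t^(d-r)))
          = ((2:ℝ)^r * 2^(d-r)) * ((t^r * t^(d-r)) * δ^(d-r)) := by ring
        _ = 2^d * (t^d * δ^(d-r)) := by rw [← pow_add, ← pow_add, h3]
    rw [hpowarith] at hreal
    have h3 : C'' * B w ≤ C'' * B (fun j => CC * (t ^ (dj j) * δ ^ (dj j - ρ j)) * y j) :=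
      mul_le_mul_of_nonneg_left hBw hC''pos.le
    rw [div_mul_eq_mul_div, div_mul_eq_mul_div, div_le_iff₀ hC''pos]
    calc Dsrc * 2 ^ d * (t ^ d * δ ^ (d - r)) * B y
        = B y * (Dsrc * (2 ^ d * (t ^ d * δ ^ (d - r)))) := by ring
      _ ≤ C'' * B (fun j => CC * (t ^ (dj j) * δ ^ (dj j - ρ j)) * y j) :=
          le_trans hreal h3
      _ = B (fun j => CC * (t ^ (dj j) * δ ^ (dj j - ρ j)) * y j) * C'' := by ring

set_option maxHeartbeats 1000000 in
lemma hbl_chain (d n : ℕ) (dj : Fin n → ℕ)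
    (L : (j : Fin n) → (Fin d → ℝ) →ₗ[ℝ] (Fin (dj j) → ℝ))
    (B : (Fin n → ℝ) → ℝ)
    (hBnonneg : ∀ y : Fin n → ℝ, (∀ j, 0 ≤ y j) → 0 ≤ B y)
    (hBmono : ∀ y z : Fin n → ℝ, (∀ j, 0 ≤ y j) → (∀ j, y j ≤ z j) → B y ≤ B z)
    (C : ℝ)
    (hC : ∀ f : (j : Fin n) → (Fin (dj j) → ℝ) → ℝ,
      (∀ j, ∀ y, 0 ≤ f j y) → (∀ j, Integrable (f j)) →
      ∫⁻ x : Fin d → ℝ, ENNReal.ofReal (B (fun j => f j (L j x)))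
        ≤ ENNReal.ofReal (C * B (fun j => ∫ y, f j y)))
    (S : Finset ((Fin n → ℕ) × ℕ))
    (rep : ((Fin n → ℕ) × ℕ) → Submodule ℝ (Fin d → ℝ))
    (hrep : ∀ p ∈ S, (∀ j, finrank ℝ ((rep p).map (L j)) = p.1 j)
      ∧ finrank ℝ (rep p) = p.2) :
    ∃ c₁ C₁ : ℝ, 0 < c₁ ∧ 1 ≤ C₁ ∧ ∀ g : ((Fin n → ℕ) × ℕ) → ℝ, (∀ p, 0 ≤ g p) →
      ∀ y : Fin n → ℝ, (∀ j, 0 < y j) →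
      c₁ * Real.exp (-(∑ p ∈ S, g p * ((d:ℝ) - (p.2:ℝ)))) * B y
        ≤ B (fun j => C₁ * Real.exp (-(∑ p ∈ S, g p * ((dj j:ℝ) - (p.1 j:ℝ)))) * y j) := by
  classical
  induction S using Finset.induction_on with
  | empty =>
      refine ⟨1, 1, one_pos, le_rfl, ?_⟩
      intro g hg y hy
      have h1 : (fun j => (1:ℝ) * Real.exp (-(∑ p ∈ (∅ : Finset ((Fin n → ℕ) × ℕ)),
          g p * ((dj j:ℝ) - (p.1 j:ℝ)))) * y j) = y := by
        funext j; simp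
      rw [h1]
      simp
  | @insert p T hpT ih =>
      obtain ⟨c₁, C₁, hc₁, hC₁, hih⟩ := ih (fun q hq => hrep q (Finset.mem_insert_of_mem hq))
      obtain ⟨c₀, CC, hc₀, hCC, hstep⟩ := hbl_step d n dj L B hBnonneg hBmono C hC (rep p)
      have hrp := hrep p (Finset.mem_insert_self p T)
      refine ⟨c₀ * c₁, CC * C₁, mul_pos hc₀ hc₁, by nlinarith, ?_⟩
      intro g hg y hy
      set δ : ℝ := Real.exp (-(g p)) with hδdef
      have hδ0 : 0 < δ := Real.exp_pos _
      have hδ1 : δ ≤ 1 := by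
        rw [hδdef]
        calc Real.exp (-(g p)) ≤ Real.exp 0 := Real.exp_le_exp.2 (by linarith [hg p])
          _ = 1 := Real.exp_zero
      set z : Fin n → ℝ := fun j =>
        C₁ * Real.exp (-(∑ q ∈ T, g q * ((dj j:ℝ) - (q.1 j:ℝ)))) * y j with hzdef
      have hz0 : ∀ j, 0 < z j := by
        intro j
        have := Real.exp_pos (-(∑ q ∈ T, g q * ((dj j:ℝ) - (q.1 j:ℝ))))
        have := hy j
        have h6 : (0:ℝ) < C₁ := lt_of_lt_of_le one_pos hC₁
        simp only [hzdef]
        positivity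
      have hihz := hih g hg y hy
      have hstepz := hstep 1 δ one_pos hδ0 hδ1 z hz0
      -- rewrite the powers of δ
      have hp2d : p.2 ≤ d := by
        rw [← hrp.2]
        have := Submodule.finrank_le (rep p)
        simpa using this
      have hp1d : ∀ j, p.1 j ≤ dj j := by
        intro j
        rw [← hrp.1 j]
        have := Submodule.finrank_le ((rep p).map (L j))
        simpa using this
      have hδpow : ∀ (m k : ℕ), k ≤ m → δ ^ (m - k) = Real.exp (-(g p * ((m:ℝ) - (k:ℝ)))) := by
        intro m k hkm
        rw [hδdef, ← Real.exp_nat_mul]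
        congr 1
        have : ((m - k : ℕ) : ℝ) = (m:ℝ) - (k:ℝ) := by
          rw [Nat.cast_sub hkm]
        rw [this]
        ring
      have hd1 : δ ^ (d - finrank ℝ (rep p)) = Real.exp (-(g p * ((d:ℝ) - (p.2:ℝ)))) := by
        rw [hrp.2, hδpow d p.2 hp2d]
      have hd2 : ∀ j, δ ^ (dj j - finrank ℝ ((rep p).map (L j)))
          = Real.exp (-(g p * ((dj j:ℝ) - (p.1 j:ℝ)))) := by
        intro j
        rw [hrp.1 j, hδpow (dj j) (p.1 j) (hp1d j)]
      rw [hd1] at hstepz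
      -- combine
      have hsum1 : ∑ q ∈ insert p T, g q * ((d:ℝ) - (q.2:ℝ))
          = g p * ((d:ℝ) - (p.2:ℝ)) + ∑ q ∈ T, g q * ((d:ℝ) - (q.2:ℝ)) :=
        Finset.sum_insert hpT
      have hsum2 : ∀ j, ∑ q ∈ insert p T, g q * ((dj j:ℝ) - (q.1 j:ℝ))
          = g p * ((dj j:ℝ) - (p.1 j:ℝ)) + ∑ q ∈ T, g q * ((dj j:ℝ) - (q.1 j:ℝ)) :=
        fun j => Finset.sum_insert hpT
      have htarget : (fun j => CC * (1 ^ (dj j)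
            * δ ^ (dj j - finrank ℝ ((rep p).map (L j)))) * z j)
          = (fun j => (CC * C₁) * Real.exp (-(∑ q ∈ insert p T,
              g q * ((dj j:ℝ) - (q.1 j:ℝ)))) * y j) := by
        funext j
        rw [one_pow, one_mul, hd2 j, hsum2 j, neg_add, Real.exp_add]
        simp only [hzdef]
        ring
      rw [htarget] at hstepz
      refine le_trans ?_ hstepz
      rw [one_pow, one_mul, hsum1, neg_add, Real.exp_add]
      have hmul : c₀ * δ ^ (d - finrank ℝ (rep p)) ≥ 0 := by positivity
      calc c₀ * c₁ * (Real.exp (-(g p * ((d:ℝ) - (p.2:ℝ))))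
              * Real.exp (-(∑ q ∈ T, g q * ((d:ℝ) - (q.2:ℝ))))) * B y
          = (c₀ * Real.exp (-(g p * ((d:ℝ) - (p.2:ℝ)))))
            * (c₁ * Real.exp (-(∑ q ∈ T, g q * ((d:ℝ) - (q.2:ℝ)))) * B y) := by ring
        _ ≤ (c₀ * Real.exp (-(g p * ((d:ℝ) - (p.2:ℝ))))) * B z := by
            refine mul_le_mul_of_nonneg_left hihz ?_
            positivity
        _ = c₀ * Real.exp (-(g p * ((d:ℝ) - (p.2:ℝ)))) * B z := by ring

/-- The Hölder–Brascamp–Lieb polytope of a family of linear maps. -/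
def HBLpolytope (d n : ℕ) (dj : Fin n → ℕ)
    (L : (j : Fin n) → (Fin d → ℝ) →ₗ[ℝ] (Fin (dj j) → ℝ)) : Set (Fin n → ℝ) :=
  {s | (∀ j, 0 ≤ s j) ∧ (∑ j, s j * (dj j : ℝ)) = (d : ℝ) ∧
    ∀ V : Submodule ℝ (Fin d → ℝ),
      (Module.finrank ℝ V : ℝ) ≤ ∑ j, s j * (Module.finrank ℝ (V.map (L j)) : ℝ)}

/-- `B : [0,∞)^n → [0,∞)` is an HBL function for the family `L`. -/
def IsHBLFunction (d n : ℕ) (dj : Fin n → ℕ)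
    (L : (j : Fin n) → (Fin d → ℝ) →ₗ[ℝ] (Fin (dj j) → ℝ))
    (B : (Fin n → ℝ) → ℝ) : Prop :=
  ∃ C : ℝ, ∀ f : (j : Fin n) → (Fin (dj j) → ℝ) → ℝ,
    (∀ j, ∀ y, 0 ≤ f j y) → (∀ j, Integrable (f j)) →
    ∫⁻ x : Fin d → ℝ, ENNReal.ofReal (B (fun j => f j (L j x)))
      ≤ ENNReal.ofReal (C * B (fun j => ∫ y, f j y))

set_option maxHeartbeats 2000000 in
theorem stmt3 (d n : ℕ) (hd : 0 < d) (hn : 0 < n) (dj : Fin n → ℕ) (hdj : ∀ j, 0 < dj j)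
    (L : (j : Fin n) → (Fin d → ℝ) →ₗ[ℝ] (Fin (dj j) → ℝ))
    (hL : ∀ j, Function.Surjective (L j))
    (hP : (HBLpolytope d n dj L).Nonempty)
    (B : (Fin n → ℝ) → ℝ) (hBmeas : Measurable B)
    (hBnonneg : ∀ y : Fin n → ℝ, (∀ j, 0 ≤ y j) → 0 ≤ B y)
    (hBmono : ∀ y z : Fin n → ℝ, (∀ j, 0 ≤ y j) → (∀ j, y j ≤ z j) → B y ≤ B z)
    (hBzero : ∀ y : Fin n → ℝ, (∀ j, 0 ≤ y j) → (∃ j, y j = 0) → B y = 0)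
    (hB : IsHBLFunction d n dj L B) :
    ∃ c : ℝ, 0 < c ∧ ∀ lam y : Fin n → ℝ, (∀ j, 0 < lam j) → (∀ j, 0 < y j) →
      c * sInf ((fun s : Fin n → ℝ => ∏ j, lam j ^ s j) '' HBLpolytope d n dj L) * B y
        ≤ B (fun j => lam j * y j) := by
  classical
  obtain ⟨C, hC⟩ := hB
  have hdj1 : ∀ j, (1:ℝ) ≤ (dj j : ℝ) := fun j => by exact_mod_cast hdj j
  have hd1 : (1:ℝ) ≤ (d : ℝ) := by exact_mod_cast hd
  -- the (finite) set of profiles of subspaces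
  set pr : Submodule ℝ (Fin d → ℝ) → ((Fin n → ℕ) × ℕ) :=
    fun V => (fun j => finrank ℝ (V.map (L j)), finrank ℝ V) with hprdef
  have hprb : ∀ V : Submodule ℝ (Fin d → ℝ), (∀ j, (pr V).1 j ≤ dj j) ∧ (pr V).2 ≤ d := by
    intro V
    constructor
    · intro j
      have := Submodule.finrank_le (V.map (L j))
      simpa [hprdef] using this
    · have := Submodule.finrank_le V
      simpa [hprdef] using this
  have hfin : (Set.range pr).Finite := by
    refine Set.Finite.subset (Set.Finite.prod
      (Set.Finite.pi (fun j : Fin n => Set.finite_Iic (dj j))) (Set.finite_Iic d)) ?_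
    rintro _ ⟨V, rfl⟩
    refine ⟨?_, (hprb V).2⟩
    intro j _
    exact (hprb V).1 j
  set S : Finset ((Fin n → ℕ) × ℕ) := hfin.toFinset with hSdef
  have hprS : ∀ V : Submodule ℝ (Fin d → ℝ), pr V ∈ S := by
    intro V
    rw [hSdef, Set.Finite.mem_toFinset]
    exact ⟨V, rfl⟩
  set rep : ((Fin n → ℕ) × ℕ) → Submodule ℝ (Fin d → ℝ) := fun q =>
    if h : q ∈ Set.range pr then h.choose else ⊥ with hrepdef
  have hrep : ∀ q ∈ S, pr (rep q) = q := by
    intro q hq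
    rw [hSdef, Set.Finite.mem_toFinset] at hq
    simp only [hrepdef, dif_pos hq]
    exact hq.choose_spec
  have hrep' : ∀ q ∈ S, (∀ j, finrank ℝ ((rep q).map (L j)) = q.1 j)
      ∧ finrank ℝ (rep q) = q.2 := by
    intro q hq
    have h1 := hrep q hq
    constructor
    · intro j
      have := congrArg Prod.fst h1
      exact congrFun this j
    · exact congrArg Prod.snd h1
  obtain ⟨c₁, C₁, hc₁, hC₁, hchain⟩ := hbl_chain d n dj L B hBnonneg hBmono C hC S rep hrep'
  obtain ⟨c₀, CCt, hc₀, hCCt, hstep⟩ := hbl_step d n dj L B hBnonneg hBmono C hC ⊤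
  have hC₁0 : (0:ℝ) < C₁ := lt_of_lt_of_le one_pos hC₁
  have hCCt0 : (0:ℝ) < CCt := lt_of_lt_of_le one_pos hCCt
  have htopd : finrank ℝ (⊤ : Submodule ℝ (Fin d → ℝ)) = d := by simp
  have htopj : ∀ j, finrank ℝ ((⊤ : Submodule ℝ (Fin d → ℝ)).map (L j)) = dj j := by
    intro j
    rw [Submodule.map_top, LinearMap.range_eq_top.2 (hL j)]
    simp
  set Γ : ℝ := 1 + |Real.log (CCt * C₁)| with hΓdef
  have hΓ1 : 1 ≤ Γ := by
    have := abs_nonneg (Real.log (CCt * C₁))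
    simp only [hΓdef]; linarith
  have hΓ0 : 0 < Γ := lt_of_lt_of_le one_pos hΓ1
  set c : ℝ := c₀ * c₁ * Real.exp (-1 - Γ * d) with hcdef
  refine ⟨c, by positivity, ?_⟩
  intro lam y hlam hy
  set μ : Fin n → ℝ := fun j => Real.log (lam j) with hμdef
  set P : Set (Fin n → ℝ) := HBLpolytope d n dj L with hPdef
  set Q : Set ℝ := (fun s : Fin n → ℝ => ∑ j, s j * μ j) '' P with hQdef
  have hQne : Q.Nonempty := hP.image _
  have hsle : ∀ s ∈ P, ∀ j, s j ≤ (d:ℝ) := by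
    intro s hs j
    obtain ⟨hs0, hssum, -⟩ := hs
    have h1 : s j * (dj j:ℝ) ≤ ∑ i, s i * (dj i:ℝ) :=
      Finset.single_le_sum (f := fun i => s i * (dj i:ℝ))
        (fun i _ => mul_nonneg (hs0 i) (by positivity)) (Finset.mem_univ j)
    have h2 : s j ≤ s j * (dj j:ℝ) := by nlinarith [hs0 j, hdj1 j]
    rw [hssum] at h1
    linarith
  have hbddQ : BddBelow Q := by
    refine ⟨-(∑ j, (d:ℝ) * |μ j|), ?_⟩
    rintro _ ⟨s, hs, rfl⟩
    have h1 : ∀ j, -((d:ℝ) * |μ j|) ≤ s j * μ j := by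
      intro j
      have h2 : |s j * μ j| ≤ (d:ℝ) * |μ j| := by
        rw [abs_mul]
        refine mul_le_mul_of_nonneg_right ?_ (abs_nonneg _)
        rw [abs_of_nonneg (hs.1 j)]
        exact hsle s hs j
      linarith [(abs_le.1 h2).1]
    calc -(∑ j, (d:ℝ) * |μ j|) = ∑ j, -((d:ℝ) * |μ j|) := by rw [← Finset.sum_neg_distrib]
      _ ≤ ∑ j, s j * μ j := Finset.sum_le_sum fun j _ => h1 j
  set M : ℝ := sInf Q with hMdef
  have hsinf : sInf ((fun s : Fin n → ℝ => ∏ j, lam j ^ s j) '' P) = Real.exp M := by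
    have himg : ((fun s : Fin n → ℝ => ∏ j, lam j ^ s j) '' P) = Real.exp '' Q := by
      rw [hQdef, Set.image_image]
      refine Set.image_congr ?_
      intro s _
      rw [Real.exp_sum]
      refine Finset.prod_congr rfl fun j _ => ?_
      rw [Real.rpow_def_of_pos (hlam j), hμdef]
      ring_nf
    rw [himg, hMdef]
    exact (Monotone.map_csInf_of_continuousAt (Real.continuous_exp.continuousAt)
      Real.exp_monotone hQne hbddQ).symm
  rw [hsinf]
  -- the convex cone of achievable configurations
  set Cs : Set ((Fin n → ℝ) × ℝ) := {z | ∃ τ : ℝ, ∃ g : ((Fin n → ℕ) × ℕ) → ℝ,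
      (∀ q, 0 ≤ g q) ∧ ∃ bb : Fin n → ℝ, (∀ j, 0 ≤ bb j) ∧ ∃ e₀ : ℝ, 0 ≤ e₀ ∧
      z.1 = (fun j => τ * (dj j : ℝ) - (∑ q ∈ S, g q * ((dj j:ℝ) - (q.1 j:ℝ))) + bb j) ∧
      z.2 = τ * (d:ℝ) - (∑ q ∈ S, g q * ((d:ℝ) - (q.2:ℝ))) - e₀} with hCsdef
  have hmem : (μ, M) ∈ closure Cs := by
    by_contra hnot
    have hconv : Convex ℝ Cs := by
      rintro z1 hz1' z2 hz2' a b₂ ha hb hab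
      obtain ⟨τ1, g1, hg1, bb1, hbb1, e1, he1, hz11, hz12⟩ := hz1'
      obtain ⟨τ2, g2, hg2, bb2, hbb2, e2, he2, hz21, hz22⟩ := hz2'
      refine ⟨a * τ1 + b₂ * τ2, fun q => a * g1 q + b₂ * g2 q,
        fun q => by have h1 := hg1 q; have h2 := hg2 q; positivity,
        fun j => a * bb1 j + b₂ * bb2 j,
        fun j => by have h1 := hbb1 j; have h2 := hbb2 j; positivity,
        a * e1 + b₂ * e2, by positivity, ?_, ?_⟩
      · funext j
        have h1 := congrFun hz11 j
        have h2 := congrFun hz21 j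
        have hsg : ∑ q ∈ S, (a * g1 q + b₂ * g2 q) * ((dj j:ℝ) - (q.1 j:ℝ))
            = a * (∑ q ∈ S, g1 q * ((dj j:ℝ) - (q.1 j:ℝ)))
              + b₂ * (∑ q ∈ S, g2 q * ((dj j:ℝ) - (q.1 j:ℝ))) := by
          rw [Finset.mul_sum, Finset.mul_sum, ← Finset.sum_add_distrib]
          refine Finset.sum_congr rfl fun q _ => ?_
          ring
        show a * z1.1 j + b₂ * z2.1 j = _
        rw [h1, h2, hsg]
        ring
      · show a * z1.2 + b₂ * z2.2 = _
        have hsg : ∑ q ∈ S, (a * g1 q + b₂ * g2 q) * ((d:ℝ) - (q.2:ℝ))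
            = a * (∑ q ∈ S, g1 q * ((d:ℝ) - (q.2:ℝ)))
              + b₂ * (∑ q ∈ S, g2 q * ((d:ℝ) - (q.2:ℝ))) := by
          rw [Finset.mul_sum, Finset.mul_sum, ← Finset.sum_add_distrib]
          refine Finset.sum_congr rfl fun q _ => ?_
          ring
        rw [hz12, hz22, hsg]
        ring
    have hCsm : ∀ (k : ℝ), 0 ≤ k → ∀ z0 ∈ Cs, k • z0 ∈ Cs := by
      intro k hk z0 hz0'
      obtain ⟨τ1, g1, hg1, bb1, hbb1, e1, he1, hz11, hz12⟩ := hz0'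
      refine ⟨k * τ1, fun q => k * g1 q, fun q => mul_nonneg hk (hg1 q),
        fun j => k * bb1 j, fun j => mul_nonneg hk (hbb1 j),
        k * e1, mul_nonneg hk he1, ?_, ?_⟩
      · funext j
        have h1 := congrFun hz11 j
        have hsg : ∑ q ∈ S, (k * g1 q) * ((dj j:ℝ) - (q.1 j:ℝ))
            = k * (∑ q ∈ S, g1 q * ((dj j:ℝ) - (q.1 j:ℝ))) := by
          rw [Finset.mul_sum]
          refine Finset.sum_congr rfl fun q _ => ?_
          ring
        show k * z0.1 j = _
        rw [h1, hsg]
        ring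
      · show k * z0.2 = _
        have hsg : ∑ q ∈ S, (k * g1 q) * ((d:ℝ) - (q.2:ℝ))
            = k * (∑ q ∈ S, g1 q * ((d:ℝ) - (q.2:ℝ))) := by
          rw [Finset.mul_sum]
          refine Finset.sum_congr rfl fun q _ => ?_
          ring
        rw [hz12, hsg]
        ring
    obtain ⟨φ, u, hφx, hφC⟩ :=
      geometric_hahn_banach_point_closed hconv.closure isClosed_closure hnot
    have hCsub : ∀ z0 ∈ Cs, u < φ z0 := fun z0 hz0 => hφC z0 (subset_closure hz0)
    have h0mem : ((0 : Fin n → ℝ), (0:ℝ)) ∈ Cs := by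
      refine ⟨0, 0, fun q => le_rfl, 0, fun j => le_rfl, 0, le_rfl, ?_, ?_⟩
      · funext j; simp
      · simp
    have hu0 : u < 0 := by
      have h1 := hCsub _ h0mem
      have h2 : φ ((0 : Fin n → ℝ), (0:ℝ)) = 0 := by
        have : ((0 : Fin n → ℝ), (0:ℝ)) = (0 : (Fin n → ℝ) × ℝ) := rfl
        rw [this, map_zero]
      linarith [h1, h2.le]
    have hφnn : ∀ z0 ∈ Cs, 0 ≤ φ z0 := by
      intro z0 hz0
      by_contra hneg
      push_neg at hneg
      have hkpos : 0 ≤ u / φ z0 := le_of_lt (div_pos_of_neg_of_neg hu0 hneg)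
      have h1 := hCsub _ (hCsm _ hkpos z0 hz0)
      rw [_root_.map_smul, smul_eq_mul, div_mul_cancel₀ u (ne_of_lt hneg)] at h1
      exact lt_irrefl u h1
    set w : Fin n → ℝ := fun j => φ (Pi.single j 1, 0) with hwdef
    set β : ℝ := φ (0, 1) with hβdef
    have hφdecomp : ∀ (v : Fin n → ℝ) (o : ℝ), φ (v, o) = (∑ j, v j * w j) + o * β := by
      intro v o
      have hsplit : ((v, o) : (Fin n → ℝ) × ℝ) = (v, (0:ℝ)) + ((0 : Fin n → ℝ), o) := by
        simp
      rw [hsplit, map_add]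
      have hpart1 : φ (v, (0:ℝ)) = ∑ j, v j * w j := by
        have h1 : φ (v, (0:ℝ))
            = (φ.toLinearMap.comp (LinearMap.inl ℝ (Fin n → ℝ) ℝ)) v := rfl
        rw [h1, LinearMap.pi_apply_eq_sum_univ]
        refine Finset.sum_congr rfl fun j _ => ?_
        rw [smul_eq_mul]
        congr 1
        have h2 : (fun k => if j = k then (1:ℝ) else 0) = Pi.single j 1 := by
          funext k
          simp [Pi.single_apply, eq_comm]
        rw [h2]
        rfl
      have hpart2 : φ ((0 : Fin n → ℝ), o) = o * β := by
        have h2 : ((0:Fin n → ℝ), o) = o • (((0:Fin n → ℝ), (1:ℝ)) : (Fin n → ℝ) × ℝ) := by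
          simp
        rw [h2, _root_.map_smul, smul_eq_mul, hβdef]
      rw [hpart1, hpart2]
    have hgen_sc : ∀ τ0 : ℝ, (((fun j => τ0 * (dj j:ℝ)) : Fin n → ℝ), τ0 * (d:ℝ)) ∈ Cs := by
      intro τ0
      refine ⟨τ0, 0, fun q => le_rfl, 0, fun j => le_rfl, 0, le_rfl, ?_, ?_⟩
      · funext j; simp
      · simp
    have hsc : (∑ j, (dj j:ℝ) * w j) + (d:ℝ) * β = 0 := by
      have hp := hφnn _ (hgen_sc 1)
      have hm := hφnn _ (hgen_sc (-1))
      rw [hφdecomp] at hp hm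
      have e1 : ∑ j, (1 * (dj j:ℝ)) * w j = ∑ j, (dj j:ℝ) * w j :=
        Finset.sum_congr rfl fun j _ => by ring
      have e2 : ∑ j, ((-1) * (dj j:ℝ)) * w j = -(∑ j, (dj j:ℝ) * w j) := by
        rw [← Finset.sum_neg_distrib]
        exact Finset.sum_congr rfl fun j _ => by ring
      rw [e1] at hp
      rw [e2] at hm
      have := hp
      nlinarith [hp, hm]
    have hgen_q : ∀ q ∈ S,
        (((fun j => -((dj j:ℝ) - (q.1 j:ℝ))) : Fin n → ℝ), -((d:ℝ) - (q.2:ℝ))) ∈ Cs := by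
      intro q hq
      refine ⟨0, fun q' => if q' = q then 1 else 0,
        fun q' => by by_cases h : q' = q <;> simp [h], 0, fun j => le_rfl, 0, le_rfl, ?_, ?_⟩
      · funext j
        have hsum : ∑ q' ∈ S, (if q' = q then (1:ℝ) else 0) * ((dj j:ℝ) - (q'.1 j:ℝ))
            = (dj j:ℝ) - (q.1 j:ℝ) := by
          simp only [ite_mul, one_mul, zero_mul]
          rw [Finset.sum_ite_eq' S q (fun q' => ((dj j:ℝ) - (q'.1 j:ℝ)))]
          simp [hq]
        rw [hsum]
        simp
      · have hsum : ∑ q' ∈ S, (if q' = q then (1:ℝ) else 0) * ((d:ℝ) - (q'.2:ℝ))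
            = (d:ℝ) - (q.2:ℝ) := by
          simp only [ite_mul, one_mul, zero_mul]
          rw [Finset.sum_ite_eq' S q (fun q' => ((d:ℝ) - (q'.2:ℝ)))]
          simp [hq]
        rw [hsum]
        simp
    have hq_ineq : ∀ q ∈ S,
        ∑ j, ((dj j:ℝ) - (q.1 j:ℝ)) * w j ≤ (q.2:ℝ) * β - (d:ℝ) * β := by
      intro q hq
      have h1 := hφnn _ (hgen_q q hq)
      rw [hφdecomp] at h1
      have e1 : ∑ j, (-((dj j:ℝ) - (q.1 j:ℝ))) * w j
          = -(∑ j, ((dj j:ℝ) - (q.1 j:ℝ)) * w j) := by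
        rw [← Finset.sum_neg_distrib]
        exact Finset.sum_congr rfl fun j _ => by ring
      rw [e1] at h1
      nlinarith [h1]
    have hw0 : ∀ j, 0 ≤ w j := by
      intro j
      have hmem' : ((Pi.single j 1 : Fin n → ℝ), (0:ℝ)) ∈ Cs := by
        refine ⟨0, 0, fun q => le_rfl, Pi.single j 1, fun k => ?_, 0, le_rfl, ?_, ?_⟩
        · rw [Pi.single_apply]
          split <;> norm_num
        · funext k; simp
        · simp
      have h1 := hφnn _ hmem'
      rw [hφdecomp] at h1
      simpa [Pi.single_apply, ite_mul, one_mul, zero_mul] using h1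
    have hβ0 : β ≤ 0 := by
      have hmem' : (((0:Fin n → ℝ)), (-1:ℝ)) ∈ Cs := by
        refine ⟨0, 0, fun q => le_rfl, 0, fun j => le_rfl, 1, zero_le_one, ?_, ?_⟩
        · funext j; simp
        · simp
      have h1 := hφnn _ hmem'
      rw [hφdecomp] at h1
      simp only [Pi.zero_apply, zero_mul, Finset.sum_const_zero, zero_add] at h1
      nlinarith [h1]
    have hφμM : (∑ j, μ j * w j) + M * β < 0 := by
      have h1 := lt_trans hφx hu0
      rw [hφdecomp] at h1
      exact h1
    rcases lt_or_eq_of_le hβ0 with hβneg | hβeq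
    · -- β < 0 : build a ∈ P and contradict
      set a : Fin n → ℝ := fun j => w j / (-β) with hadef
      have hβpos : 0 < -β := by linarith
      have hβne : β ≠ 0 := by intro h; rw [h] at hβneg; exact lt_irrefl 0 hβneg
      have ha0 : ∀ j, 0 ≤ a j := fun j => div_nonneg (hw0 j) hβpos.le
      have hsum_a : ∑ j, a j * (dj j:ℝ) = (d:ℝ) := by
        have e1 : ∑ j, a j * (dj j:ℝ) = (∑ j, (dj j:ℝ) * w j) / (-β) := by
          rw [Finset.sum_div]
          refine Finset.sum_congr rfl fun j _ => ?_
          rw [hadef]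
          ring
        rw [e1]
        rw [show ∑ j, (dj j:ℝ) * w j = (d:ℝ) * (-β) by linarith [hsc]]
        field_simp
      have hsub_a : ∀ V : Submodule ℝ (Fin d → ℝ),
          (finrank ℝ V : ℝ) ≤ ∑ j, a j * (finrank ℝ (V.map (L j)) : ℝ) := by
        intro V
        have hq := hq_ineq (pr V) (hprS V)
        have hq1 : ∀ j, ((pr V).1 j : ℝ) = (finrank ℝ (V.map (L j)) : ℝ) := fun j => rfl
        have hq2 : ((pr V).2 : ℝ) = (finrank ℝ V : ℝ) := rfl
        have hsplit : ∑ j, ((dj j:ℝ) - ((pr V).1 j:ℝ)) * w j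
            = ∑ j, (dj j:ℝ) * w j - ∑ j, ((pr V).1 j:ℝ) * w j := by
          rw [← Finset.sum_sub_distrib]
          exact Finset.sum_congr rfl fun j _ => by ring
        rw [hsplit] at hq
        have hdw : ∑ j, (dj j:ℝ) * w j = (d:ℝ) * (-β) := by linarith [hsc]
        rw [hdw] at hq
        -- hq : d*(-β) - ∑ (pr V).1 j * w j ≤ (pr V).2 * β - d * β
        have h2 : ((pr V).2:ℝ) * (-β) ≤ ∑ j, ((pr V).1 j:ℝ) * w j := by nlinarith [hq]
        have h3 : ∑ j, ((pr V).1 j:ℝ) * w j = (∑ j, a j * ((pr V).1 j:ℝ)) * (-β) := by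
          rw [Finset.sum_mul]
          refine Finset.sum_congr rfl fun j _ => ?_
          rw [hadef]
          field_simp
        rw [h3] at h2
        have h4 : ((pr V).2:ℝ) ≤ ∑ j, a j * ((pr V).1 j:ℝ) :=
          le_of_mul_le_mul_right (by linarith [h2]) hβpos
        calc (finrank ℝ V : ℝ) = ((pr V).2:ℝ) := hq2.symm
          _ ≤ ∑ j, a j * ((pr V).1 j:ℝ) := h4
          _ = ∑ j, a j * (finrank ℝ (V.map (L j)) : ℝ) :=
              Finset.sum_congr rfl fun j _ => by rw [hq1 j]
      have haP : a ∈ P := ⟨ha0, hsum_a, hsub_a⟩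
      have hMle : M ≤ ∑ j, a j * μ j := csInf_le hbddQ ⟨a, haP, rfl⟩
      have hwa : ∑ j, μ j * w j = (∑ j, a j * μ j) * (-β) := by
        rw [Finset.sum_mul]
        refine Finset.sum_congr rfl fun j _ => ?_
        rw [hadef]
        field_simp
      rw [hwa] at hφμM
      nlinarith [hMle, hβpos, hφμM]
    · -- β = 0
      have hβz : β = 0 := hβeq
      have hwz : ∀ j, w j = 0 := by
        have hzero : ∑ j, (dj j:ℝ) * w j = 0 := by
          rw [hβz] at hsc
          linarith [hsc]
        intro j
        have hterm := (Finset.sum_eq_zero_iff_of_nonneg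
          (fun j (_ : j ∈ Finset.univ) => mul_nonneg (by positivity) (hw0 j))).1 hzero j
          (Finset.mem_univ j)
        have hdjne : (dj j:ℝ) ≠ 0 := Nat.cast_ne_zero.2 (hdj j).ne'
        exact (mul_eq_zero.1 hterm).resolve_left hdjne
      rw [hβz] at hφμM
      simp only [mul_zero, add_zero] at hφμM
      have : ∑ j, μ j * w j = 0 := Finset.sum_eq_zero fun j _ => by rw [hwz j, mul_zero]
      linarith [hφμM, this]
  obtain ⟨z, hzC, hzdist⟩ := Metric.mem_closure_iff.1 hmem 1 one_pos
  obtain ⟨τ, g, hg, bb, hbb, e₀, he₀, hz1, hz2⟩ := hzC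
  have hν : ∀ j, z.1 j ≤ μ j + 1 := by
    intro j
    have h1 : dist (μ j) (z.1 j) ≤ dist (μ, M).1 z.1 := dist_le_pi_dist _ _ j
    have hmax : max (dist (μ, M).1 z.1) (dist (μ, M).2 z.2) < 1 := by
      rw [← Prod.dist_eq]; exact hzdist
    have h2 : dist (μ, M).1 z.1 < 1 := lt_of_le_of_lt (le_max_left _ _) hmax
    have h3 : |μ j - z.1 j| < 1 := by
      rw [← Real.dist_eq]
      exact lt_of_le_of_lt h1 h2
    linarith [(abs_lt.1 h3).1]
  have hο : M - 1 ≤ z.2 := by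
    have hmax : max (dist (μ, M).1 z.1) (dist (μ, M).2 z.2) < 1 := by
      rw [← Prod.dist_eq]; exact hzdist
    have h2 : dist (μ, M).2 z.2 < 1 := lt_of_le_of_lt (le_max_right _ _) hmax
    have h3 : |M - z.2| < 1 := by
      rw [← Real.dist_eq]
      exact h2
    linarith [(abs_lt.1 h3).2]
  -- assemble
  set τ' : ℝ := τ - Γ with hτ'def
  set t : ℝ := Real.exp τ' with htdef
  have ht0 : 0 < t := Real.exp_pos _
  set z' : Fin n → ℝ := fun j =>
    C₁ * Real.exp (-(∑ q ∈ S, g q * ((dj j:ℝ) - (q.1 j:ℝ)))) * y j with hz'def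
  have hz'0 : ∀ j, 0 < z' j := by
    intro j
    have h1 := Real.exp_pos (-(∑ q ∈ S, g q * ((dj j:ℝ) - (q.1 j:ℝ))))
    have h2 := hy j
    simp only [hz'def]
    positivity
  have key1 := hchain g hg y hy
  have key2 := hstep t 1 ht0 one_pos le_rfl z' hz'0
  simp only [one_pow, mul_one, htopd, htopj] at key2
  -- key2 : c₀ * t ^ d * B z' ≤ B (fun j => CCt * t ^ (dj j) * z' j)
  have key3 : B (fun j => CCt * (t ^ (dj j)) * z' j) ≤ B (fun j => lam j * y j) := by
    refine hBmono _ _ (fun j => ?_) (fun j => ?_)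
    · have := (hz'0 j).le
      positivity
    · -- coordinatewise bound
      have hsum : -(∑ q ∈ S, g q * ((dj j:ℝ) - (q.1 j:ℝ)))
          = z.1 j - τ * (dj j:ℝ) - bb j := by
        have h8 := congrFun hz1 j
        simp only [h8]
        ring
      have hEq : CCt * t ^ (dj j) * z' j
          = (CCt * C₁) * Real.exp ((dj j:ℝ) * τ' + (z.1 j - τ * (dj j:ℝ) - bb j)) * y j := by
        simp only [hz'def, htdef]
        rw [← Real.exp_nat_mul, hsum, Real.exp_add]
        ring
      rw [hEq]
      have hX : (dj j:ℝ) * τ' + (z.1 j - τ * (dj j:ℝ) - bb j)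
          = z.1 j - Γ * (dj j:ℝ) - bb j := by
        simp only [hτ'def]
        ring
      rw [hX]
      have hlog : CCt * C₁ = Real.exp (Real.log (CCt * C₁)) := by
        rw [Real.exp_log (by positivity)]
      have hexple : Real.log (CCt * C₁) + (z.1 j - Γ * (dj j:ℝ) - bb j) ≤ μ j := by
        have h9 : Γ * 1 ≤ Γ * (dj j:ℝ) := mul_le_mul_of_nonneg_left (hdj1 j) hΓ0.le
        have h10 : Real.log (CCt * C₁) ≤ |Real.log (CCt * C₁)| := le_abs_self _
        have h11 := hν j
        have h12 := hbb j
        simp only [hΓdef] at h9 ⊢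
        nlinarith
      calc CCt * C₁ * Real.exp (z.1 j - Γ * (dj j:ℝ) - bb j) * y j
          = Real.exp (Real.log (CCt * C₁) + (z.1 j - Γ * (dj j:ℝ) - bb j)) * y j := by
            rw [Real.exp_add, ← hlog]
        _ ≤ Real.exp (μ j) * y j := by
            refine mul_le_mul_of_nonneg_right (Real.exp_le_exp.2 hexple) (hy j).le
        _ = lam j * y j := by rw [hμdef, Real.exp_log (hlam j)]
  -- numeric chase
  have hnum : c * Real.exp M * B y ≤ c₀ * (t ^ d) * (c₁ *
      Real.exp (-(∑ q ∈ S, g q * ((d:ℝ) - (q.2:ℝ)))) * B y) := by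
    have hsum : -(∑ q ∈ S, g q * ((d:ℝ) - (q.2:ℝ))) = z.2 + e₀ - τ * (d:ℝ) := by
      simp only [hz2]
      ring
    have hBy0' : 0 ≤ B y := hBnonneg y fun j => (hy j).le
    have hEq : c₀ * (t ^ d) * (c₁ * Real.exp (-(∑ q ∈ S, g q * ((d:ℝ) - (q.2:ℝ)))) * B y)
        = (c₀ * c₁) * Real.exp (z.2 + e₀ - Γ * (d:ℝ)) * B y := by
      simp only [htdef]
      have h8 : z.2 + e₀ - Γ * (d:ℝ) = (d:ℝ) * τ' + (z.2 + e₀ - τ * (d:ℝ)) := by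
        simp only [hτ'def]; ring
      rw [← Real.exp_nat_mul, hsum, h8, Real.exp_add]
      ring
    rw [hEq]
    have hEq2 : c * Real.exp M = (c₀ * c₁) * Real.exp (M - 1 - Γ * (d:ℝ)) := by
      simp only [hcdef]
      rw [mul_assoc, ← Real.exp_add]
      congr 2
      ring
    rw [hEq2]
    refine mul_le_mul_of_nonneg_right ?_ hBy0'
    refine mul_le_mul_of_nonneg_left (Real.exp_le_exp.2 ?_) (by positivity)
    linarith [hο, he₀]
  have hBy0 : 0 ≤ B y := hBnonneg y fun j => (hy j).le
  calc c * Real.exp M * B y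
      ≤ c₀ * (t ^ d) * (c₁ * Real.exp (-(∑ q ∈ S, g q * ((d:ℝ) - (q.2:ℝ)))) * B y) := hnum
    _ ≤ c₀ * (t ^ d) * B z' := mul_le_mul_of_nonneg_left key1 (by positivity)
    _ ≤ B (fun j => CCt * (t ^ (dj j)) * z' j) := key2
    _ ≤ B (fun j => lam j * y j) := key3
end
end

section
/- Let d, n, d_1, ..., d_n be positive integers and let L_j : ℝ^d → ℝ^{d_j} (1 ≤ j ≤ n) be surjective linear maps whose Hölder–Brascamp–Lieb polytope 𝒫 is nonempty. If B : [0,∞)^n → [0,∞) is a Borel measurable HBL function for {L_j}, then there exist constants 0 < c ≤ C < ∞ such that c · R^d · B(y_1,...,y_n) ≤ B(R^{d_1} y_1, ..., R^{d_n} y_n) ≤ C · R^d · B(y_1,...,y_n) for all 0 < R < ∞ and all 0 < y_j < ∞. -/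
open MeasureTheory Pointwise

noncomputable section

open Pointwise in
/-- Scaling helper for the symmetric interval. -/
lemma scale_Ioo_aux {R t : ℝ} (hR : 0 < R) :
    R⁻¹ * t ∈ Set.Ioo (-(1/2) : ℝ) (1/2) ↔ t ∈ Set.Ioo (-(R/2)) (R/2) := by
  rw [Set.mem_Ioo, Set.mem_Ioo, ← abs_lt, ← abs_lt, abs_mul, abs_inv, abs_of_pos hR,
    inv_mul_lt_iff₀ hR]
  constructor <;> intro h <;> linarith

theorem stmt4 (d n : ℕ) (hd : 0 < d) (hn : 0 < n) (dj : Fin n → ℕ) (hdj : ∀ j, 0 < dj j)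
    (L : (j : Fin n) → (Fin d → ℝ) →ₗ[ℝ] (Fin (dj j) → ℝ))
    (hL : ∀ j, Function.Surjective (L j))
    (hP : (HBLpolytope d n dj L).Nonempty)
    (B : (Fin n → ℝ) → ℝ) (hBmeas : Measurable B)
    (hBnonneg : ∀ y : Fin n → ℝ, (∀ j, 0 ≤ y j) → 0 ≤ B y)
    (hB : IsHBLFunction d n dj L B) :
    ∃ c C : ℝ, 0 < c ∧ c ≤ C ∧ ∀ R : ℝ, 0 < R → ∀ y : Fin n → ℝ, (∀ j, 0 < y j) →
      c * R ^ d * B y ≤ B (fun j => R ^ (dj j) * y j) ∧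
      B (fun j => R ^ (dj j) * y j) ≤ C * R ^ d * B y := by
  classical
  obtain ⟨C₀, hC₀⟩ := hB
  set C₁ : ℝ := max C₀ 0 + 1 with hC₁def
  have hC₁pos : 0 < C₁ := by
    have := le_max_right C₀ 0
    simp only [hC₁def]; linarith
  have hC₀le : C₀ ≤ C₁ := by
    have := le_max_left C₀ 0
    simp only [hC₁def]; linarith
  have hC₁ : ∀ f : (j : Fin n) → (Fin (dj j) → ℝ) → ℝ,
      (∀ j, ∀ y, 0 ≤ f j y) → (∀ j, Integrable (f j)) →
      ∫⁻ x : Fin d → ℝ, ENNReal.ofReal (B (fun j => f j (L j x)))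
        ≤ ENNReal.ofReal (C₁ * B (fun j => ∫ y, f j y)) := by
    intro f hf hfi
    refine (hC₀ f hf hfi).trans (ENNReal.ofReal_le_ofReal ?_)
    have hBn : 0 ≤ B fun j => ∫ y, f j y :=
      hBnonneg _ fun j => integral_nonneg (hf j)
    exact mul_le_mul_of_nonneg_right hC₀le hBn
  -- cubes and the intersection set
  set Q : ℝ → (j : Fin n) → Set (Fin (dj j) → ℝ) :=
    fun R j => Set.pi Set.univ fun _ => Set.Ioo (-(R/2)) (R/2) with hQ
  have hQmeas : ∀ (R : ℝ) (j : Fin n), MeasurableSet (Q R j) := fun R j =>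
    MeasurableSet.univ_pi fun _ => measurableSet_Ioo
  have hQvol : ∀ R : ℝ, 0 < R → ∀ j, volume (Q R j) = ENNReal.ofReal R ^ (dj j) := by
    intro R hR j
    rw [hQ]
    rw [volume_pi_pi]
    have : ∀ _i : Fin (dj j), volume (Set.Ioo (-(R/2)) (R/2)) = ENNReal.ofReal R := by
      intro _i
      rw [Real.volume_Ioo]
      congr 1
      ring
    rw [Finset.prod_congr rfl fun i _ => this i, Finset.prod_const, Finset.card_univ,
      Fintype.card_fin]
  set S : ℝ → Set (Fin d → ℝ) := fun R => ⋂ j, L j ⁻¹' Q R j with hS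
  have hSopen : ∀ R : ℝ, IsOpen (S R) := by
    intro R
    refine isOpen_iInter_of_finite fun j => ?_
    exact (isOpen_set_pi Set.finite_univ fun _ _ => isOpen_Ioo).preimage
      (L j).continuous_of_finiteDimensional
  have hSmeas : ∀ R : ℝ, MeasurableSet (S R) := fun R => (hSopen R).measurableSet
  have hS0 : (0 : Fin d → ℝ) ∈ S 1 := by
    rw [hS]
    refine Set.mem_iInter.2 fun j => ?_
    simp only [Set.mem_preimage, map_zero, hQ, Set.mem_pi, Set.mem_univ, forall_true_left]
    intro i
    constructor <;> norm_num
  have hSsmul : ∀ R : ℝ, 0 < R → S R = R • S 1 := by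
    intro R hR
    ext x
    rw [Set.mem_smul_set_iff_inv_smul_mem₀ hR.ne']
    simp only [hS, Set.mem_iInter, Set.mem_preimage, LinearMap.map_smul, hQ, Set.mem_pi, Set.mem_univ,
      forall_true_left, Pi.smul_apply, smul_eq_mul]
    constructor
    · intro h j i
      exact (scale_Ioo_aux hR).2 (h j i)
    · intro h j i
      exact (scale_Ioo_aux hR).1 (h j i)
  have hfinrank : Module.finrank ℝ (Fin d → ℝ) = d := Module.finrank_fin_fun ℝ
  have hvol : ∀ R : ℝ, 0 < R →
      volume (S R) = ENNReal.ofReal (R ^ d) * volume (S 1) := by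
    intro R hR
    rw [hSsmul R hR, Measure.addHaar_smul, hfinrank, abs_of_nonneg (pow_nonneg hR.le d)]
  -- the master inequality
  have master : ∀ R : ℝ, 0 < R → ∀ y : Fin n → ℝ, (∀ j, 0 < y j) →
      ENNReal.ofReal (B y) * volume (S R)
        ≤ ENNReal.ofReal (C₁ * B fun j => R ^ (dj j) * y j) := by
    intro R hR y hy
    set f : (j : Fin n) → (Fin (dj j) → ℝ) → ℝ :=
      fun j => (Q R j).indicator (fun _ => y j) with hf
    have hfnn : ∀ j, ∀ z, 0 ≤ f j z := fun j z =>
      Set.indicator_nonneg (fun _ _ => (hy j).le) z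
    have hfint : ∀ j, Integrable (f j) := by
      intro j
      rw [hf, integrable_indicator_iff (hQmeas R j)]
      refine integrableOn_const (hs := ?_)
      rw [hQvol R hR j]
      exact ENNReal.pow_ne_top ENNReal.ofReal_ne_top
    have hint : (fun j => ∫ z, f j z) = fun j => R ^ (dj j) * y j := by
      funext j
      rw [hf]
      rw [integral_indicator_const (y j) (hQmeas R j), measureReal_def, hQvol R hR j, smul_eq_mul]
      rw [ENNReal.toReal_pow, ENNReal.toReal_ofReal hR.le]
    have key := hC₁ f hfnn hfint
    rw [hint] at key
    refine le_trans ?_ key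
    have hpt : ∀ x, (S R).indicator (fun _ => ENNReal.ofReal (B y)) x
        ≤ ENNReal.ofReal (B fun j => f j (L j x)) := by
      intro x
      by_cases hx : x ∈ S R
      · rw [Set.indicator_of_mem hx]
        have harg : (fun j => f j (L j x)) = y := by
          funext j
          rw [hf]
          exact Set.indicator_of_mem (Set.mem_preimage.1 (Set.mem_iInter.1 hx j)) _
        rw [harg]
      · rw [Set.indicator_of_notMem hx]
        exact zero_le
    calc ENNReal.ofReal (B y) * volume (S R)
        = ∫⁻ x, (S R).indicator (fun _ => ENNReal.ofReal (B y)) x := by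
          rw [lintegral_indicator (hSmeas R), setLIntegral_const]
      _ ≤ _ := lintegral_mono hpt
  by_cases hfin : volume (S 1) = ⊤
  · -- degenerate case : B vanishes on positive vectors
    have hBzero : ∀ y : Fin n → ℝ, (∀ j, 0 < y j) → B y = 0 := by
      intro y hy
      have h := master 1 one_pos y hy
      by_contra hne
      have hBy : 0 < B y :=
        lt_of_le_of_ne (hBnonneg y fun j => (hy j).le) (Ne.symm hne)
      rw [hfin, ENNReal.mul_top (by simpa [ENNReal.ofReal_eq_zero] using hBy.not_ge)] at h
      exact ENNReal.ofReal_ne_top (top_le_iff.1 h)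
    refine ⟨1, 1, one_pos, le_refl 1, ?_⟩
    intro R hR y hy
    have h1 := hBzero y hy
    have h2 := hBzero (fun j => R ^ (dj j) * y j)
      (fun j => mul_pos (pow_pos hR _) (hy j))
    constructor <;> simp [h1, h2]
  · -- main case
    have hmpos : 0 < volume (S 1) := (hSopen 1).measure_pos volume ⟨0, hS0⟩
    set mr : ℝ := (volume (S 1)).toReal with hmr
    have hmrpos : 0 < mr := ENNReal.toReal_pos hmpos.ne' hfin
    have key : ∀ R : ℝ, 0 < R → ∀ y : Fin n → ℝ, (∀ j, 0 < y j) →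
        B y * (R ^ d * mr) ≤ C₁ * B (fun j => R ^ (dj j) * y j) := by
      intro R hR y hy
      have h := master R hR y hy
      rw [hvol R hR] at h
      have hBy := hBnonneg y fun j => (hy j).le
      have hBRy := hBnonneg (fun j => R ^ (dj j) * y j)
        fun j => (mul_pos (pow_pos hR _) (hy j)).le
      rw [← ENNReal.ofReal_toReal hfin, ← hmr,
        ← ENNReal.ofReal_mul (pow_nonneg hR.le d), ← ENNReal.ofReal_mul hBy] at h
      exact (ENNReal.ofReal_le_ofReal_iff (mul_nonneg hC₁pos.le hBRy)).1 h
    set c : ℝ := min (mr / C₁) 1 with hc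
    have hcpos : 0 < c := lt_min (div_pos hmrpos hC₁pos) one_pos
    have hc1 : c ≤ 1 := min_le_right _ _
    have lower : ∀ R : ℝ, 0 < R → ∀ y : Fin n → ℝ, (∀ j, 0 < y j) →
        c * R ^ d * B y ≤ B (fun j => R ^ (dj j) * y j) := by
      intro R hR y hy
      have hk := key R hR y hy
      have hBy := hBnonneg y fun j => (hy j).le
      have hcC : c * C₁ ≤ mr := by
        have hle : c ≤ mr / C₁ := min_le_left _ _
        calc c * C₁ ≤ (mr / C₁) * C₁ := by nlinarith
          _ = mr := by field_simp
      have hpow : (0:ℝ) ≤ R ^ d := (pow_pos hR d).le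
      have step : C₁ * (c * R ^ d * B y) ≤ C₁ * B (fun j => R ^ (dj j) * y j) := by
        nlinarith [mul_le_mul_of_nonneg_right hcC (mul_nonneg hpow hBy)]
      exact le_of_mul_le_mul_left step hC₁pos
    refine ⟨c, c⁻¹, hcpos, hc1.trans ((one_le_inv₀ hcpos).2 hc1), ?_⟩
    intro R hR y hy
    refine ⟨lower R hR y hy, ?_⟩
    have hyR : ∀ j, 0 < R ^ (dj j) * y j := fun j => mul_pos (pow_pos hR _) (hy j)
    have h := lower R⁻¹ (inv_pos.2 hR) (fun j => R ^ (dj j) * y j) hyR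
    have harg : (fun j => R⁻¹ ^ (dj j) * (R ^ (dj j) * y j)) = y := by
      funext j
      rw [inv_pow]
      field_simp
    rw [harg] at h
    have hRd : (0:ℝ) < R ^ d := pow_pos hR d
    have heq : B (fun j => R ^ (dj j) * y j)
        = c⁻¹ * R ^ d * (c * R⁻¹ ^ d * B (fun j => R ^ (dj j) * y j)) := by
      rw [inv_pow]
      field_simp
    rw [heq]
    exact mul_le_mul_of_nonneg_left h (by positivity)
end
end

section
/- Let d, n, d_1, ..., d_n be positive integers and let L_j : ℝ^d → ℝ^{d_j} (1 ≤ j ≤ n) be surjective linear maps whose Hölder–Brascamp–Lieb polytope 𝒫 is nonempty, and let B : [0,∞)^n → [0,∞) be a Borel measurable HBL function for {L_j}. Suppose there exists c > 0 such that B(λ_1 y_1, ..., λ_n y_n) ≥ c · min_{s ∈ 𝒫} λ_1^{s_1}···λ_n^{s_n} · B(y_1,...,y_n) for all λ_j ≥ 1 and all 0 < y_j < ∞. Then there exists c' > 0 such that the same inequality (with c' in place of c) holds for all 0 < λ_j < ∞ and all 0 < y_j < ∞. -/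
open MeasureTheory Pointwise

noncomputable section

/-- Testing the HBL inequality against scaled indicator functions of the images `L j '' K`
of a compact set `K`. -/
lemma hbl_cube_ineq {d n : ℕ} {dj : Fin n → ℕ}
    (L : (j : Fin n) → (Fin d → ℝ) →ₗ[ℝ] (Fin (dj j) → ℝ))
    (B : (Fin n → ℝ) → ℝ) (C : ℝ)
    (hC : ∀ f : (j : Fin n) → (Fin (dj j) → ℝ) → ℝ,
      (∀ j, ∀ y, 0 ≤ f j y) → (∀ j, Integrable (f j)) →
      ∫⁻ x : Fin d → ℝ, ENNReal.ofReal (B (fun j => f j (L j x)))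
        ≤ ENNReal.ofReal (C * B (fun j => ∫ y, f j y)))
    (K : Set (Fin d → ℝ)) (hK : IsCompact K)
    (t : Fin n → ℝ) (ht : ∀ j, 0 ≤ t j) :
    volume K * ENNReal.ofReal (B t)
      ≤ ENNReal.ofReal (C * B fun j => t j * (volume (L j '' K)).toReal) := by
  have hcont : ∀ j, Continuous (L j) := fun j => (L j).continuous_of_finiteDimensional
  have hA : ∀ j, MeasurableSet ((L j) '' K) :=
    fun j => ((hK.image (hcont j)).isClosed).measurableSet
  set f : (j : Fin n) → (Fin (dj j) → ℝ) → ℝ :=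
    fun j y => t j * ((L j) '' K).indicator (fun _ => (1:ℝ)) y with hf
  have hf0 : ∀ j, ∀ y, 0 ≤ f j y := fun j y =>
    mul_nonneg (ht j) (Set.indicator_nonneg (fun _ _ => zero_le_one) y)
  have hfi : ∀ j, Integrable (f j) := by
    intro j
    exact ((integrable_indicator_iff (hA j)).2
      (integrableOn_const (hK.image (hcont j)).measure_lt_top.ne)).const_mul _
  have hint : (fun j => (∫ y, f j y)) = fun j => t j * (volume ((L j) '' K)).toReal := by
    funext j
    rw [hf]
    simp only []
    rw [MeasureTheory.integral_const_mul, integral_indicator_const (1:ℝ) (hA j)]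
    simp [Measure.real]
  have key := hC f hf0 hfi
  have hlhs : volume K * ENNReal.ofReal (B t)
      ≤ ∫⁻ x : Fin d → ℝ, ENNReal.ofReal (B (fun j => f j (L j x))) := by
    have hmono : ∀ x, K.indicator (fun _ => ENNReal.ofReal (B t)) x
        ≤ ENNReal.ofReal (B (fun j => f j (L j x))) := by
      intro x
      by_cases hx : x ∈ K
      · rw [Set.indicator_of_mem hx]
        have harg : (fun j => f j (L j x)) = t := by
          funext j
          simp [hf, Set.indicator_of_mem (Set.mem_image_of_mem _ hx)]
        rw [harg]
      · rw [Set.indicator_of_notMem hx]; exact zero_le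
    calc volume K * ENNReal.ofReal (B t)
        = ∫⁻ x, K.indicator (fun _ => ENNReal.ofReal (B t)) x := by
          rw [lintegral_indicator_const hK.isClosed.measurableSet, mul_comm]
      _ ≤ _ := lintegral_mono hmono
  calc volume K * ENNReal.ofReal (B t)
      ≤ ∫⁻ x : Fin d → ℝ, ENNReal.ofReal (B (fun j => f j (L j x))) := hlhs
    _ ≤ ENNReal.ofReal (C * B (fun j => ∫ y, f j y)) := key
    _ = _ := by rw [hint]

theorem stmt5 (d n : ℕ) (hd : 0 < d) (hn : 0 < n) (dj : Fin n → ℕ) (hdj : ∀ j, 0 < dj j)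
    (L : (j : Fin n) → (Fin d → ℝ) →ₗ[ℝ] (Fin (dj j) → ℝ))
    (hL : ∀ j, Function.Surjective (L j))
    (hP : (HBLpolytope d n dj L).Nonempty)
    (B : (Fin n → ℝ) → ℝ) (hBmeas : Measurable B)
    (hBnonneg : ∀ y : Fin n → ℝ, (∀ j, 0 ≤ y j) → 0 ≤ B y)
    (hB : IsHBLFunction d n dj L B)
    (c : ℝ) (hc : 0 < c)
    (hlower : ∀ lam y : Fin n → ℝ, (∀ j, 1 ≤ lam j) → (∀ j, 0 < y j) →
      c * sInf ((fun s : Fin n → ℝ => ∏ j, lam j ^ s j) '' HBLpolytope d n dj L) * B y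
        ≤ B (fun j => lam j * y j)) :
    ∃ c' : ℝ, 0 < c' ∧ ∀ lam y : Fin n → ℝ, (∀ j, 0 < lam j) → (∀ j, 0 < y j) →
      c' * sInf ((fun s : Fin n → ℝ => ∏ j, lam j ^ s j) '' HBLpolytope d n dj L) * B y
        ≤ B (fun j => lam j * y j) := by
  classical
  obtain ⟨C, hC⟩ := hB
  set P := HBLpolytope d n dj L with hPdef
  by_cases htriv : ∀ y : Fin n → ℝ, (∀ j, 0 < y j) → B y = 0
  · refine ⟨1, one_pos, fun lam y hlam hy => ?_⟩
    rw [htriv y hy, mul_zero]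
    exact hBnonneg _ fun j => (mul_pos (hlam j) (hy j)).le
  push_neg at htriv
  obtain ⟨y0, hy0, hBy0ne⟩ := htriv
  have hBy0 : 0 < B y0 := (hBnonneg y0 fun j => (hy0 j).le).lt_of_ne (Ne.symm hBy0ne)
  have hnne : Nonempty (Fin n) := ⟨⟨0, hn⟩⟩
  -- the unit cube and the volumes of its images
  set K₁ : Set (Fin d → ℝ) := Set.univ.pi fun _ => Set.Icc (0:ℝ) 1 with hK₁
  have hK₁c : IsCompact K₁ := isCompact_univ_pi fun _ => isCompact_Icc
  have hvolK₁ : volume K₁ = 1 := by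
    rw [hK₁, volume_pi_pi]
    simp
  set a : Fin n → ℝ := fun j => (volume ((L j) '' K₁)).toReal with ha
  have hcont : ∀ j, Continuous (L j) := fun j => (L j).continuous_of_finiteDimensional
  have hapos : ∀ j, 0 < a j := by
    intro j
    have hopen : IsOpen ((L j) '' (Set.univ.pi fun _ : Fin d => Set.Ioo (0:ℝ) 1)) := by
      have hs : Function.Surjective (LinearMap.toContinuousLinearMap (L j)) := hL j
      exact (ContinuousLinearMap.isOpenMap _ hs) _
        (isOpen_set_pi Set.finite_univ fun _ _ => isOpen_Ioo)
    have hne : ((L j) '' (Set.univ.pi fun _ : Fin d => Set.Ioo (0:ℝ) 1)).Nonempty := by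
      refine ⟨L j (fun _ => 1/2), Set.mem_image_of_mem _ ?_⟩
      intro i _
      constructor <;> norm_num
    have hpos : 0 < volume ((L j) '' (Set.univ.pi fun _ : Fin d => Set.Ioo (0:ℝ) 1)) :=
      hopen.measure_pos volume hne
    have hsub : ((L j) '' (Set.univ.pi fun _ : Fin d => Set.Ioo (0:ℝ) 1)) ⊆ (L j) '' K₁ := by
      apply Set.image_mono
      rw [hK₁]
      exact Set.pi_mono fun i _ => Set.Ioo_subset_Icc_self
    have hpos2 : 0 < volume ((L j) '' K₁) := lt_of_lt_of_le hpos (measure_mono hsub)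
    exact ENNReal.toReal_pos hpos2.ne' (hK₁c.image (hcont j)).measure_lt_top.ne
  -- positivity of the HBL constant
  have hCpos : 0 < C := by
    have h1 := hbl_cube_ineq L B C hC K₁ hK₁c y0 (fun j => (hy0 j).le)
    rw [hvolK₁, one_mul] at h1
    have h2 : 0 < ENNReal.ofReal (C * B fun j => y0 j * (volume ((L j) '' K₁)).toReal) :=
      lt_of_lt_of_le (ENNReal.ofReal_pos.2 hBy0) h1
    have h3 : 0 < C * B fun j => y0 j * (volume ((L j) '' K₁)).toReal := ENNReal.ofReal_pos.1 h2
    have h4 : 0 ≤ B fun j => y0 j * (volume ((L j) '' K₁)).toReal :=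
      hBnonneg _ fun j => mul_nonneg (hy0 j).le ENNReal.toReal_nonneg
    nlinarith
  set M : ℝ := ∏ j, max (a j) 1 ^ d with hM
  have hM1 : (1:ℝ) ≤ M := by
    rw [hM]
    calc (1:ℝ) = ∏ _j : Fin n, 1 := by simp
      _ ≤ ∏ j, max (a j) 1 ^ d :=
        Finset.prod_le_prod (by simp) fun j _ => one_le_pow₀ (le_max_right (a j) 1)
  have hM0 : (0:ℝ) < M := lt_of_lt_of_le one_pos hM1
  -- nonnegativity of the infima
  have hmnn : ∀ (v : Fin n → ℝ), (∀ j, 0 < v j) →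
      0 ≤ sInf ((fun s : Fin n → ℝ => ∏ j, v j ^ s j) '' P) := by
    intro v hv
    refine le_csInf (hP.image _) ?_
    rintro b ⟨s, -, rfl⟩
    exact Finset.prod_nonneg fun j _ => (Real.rpow_pos_of_pos (hv j) _).le
  have hbdd : ∀ (v : Fin n → ℝ), (∀ j, 0 < v j) →
      BddBelow ((fun s : Fin n → ℝ => ∏ j, v j ^ s j) '' P) := by
    intro v hv
    refine ⟨0, ?_⟩
    rintro b ⟨s, -, rfl⟩
    exact Finset.prod_nonneg fun j _ => (Real.rpow_pos_of_pos (hv j) _).le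
  have hsle : ∀ s ∈ P, ∀ j, s j ≤ (d:ℝ) := by
    intro s hs j
    have hs0 : ∀ i, 0 ≤ s i := hs.1
    have hsum : (∑ i, s i * (dj i : ℝ)) = (d:ℝ) := hs.2.1
    have h1 : s j * (dj j : ℝ) ≤ ∑ i, s i * (dj i : ℝ) :=
      Finset.single_le_sum (fun i _ => mul_nonneg (hs0 i) (Nat.cast_nonneg _))
        (Finset.mem_univ j)
    have h2 : s j ≤ s j * (dj j : ℝ) :=
      le_mul_of_one_le_right (hs0 j) (by exact_mod_cast hdj j)
    rw [hsum] at h1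
    linarith
  refine ⟨c / (M * C), div_pos hc (mul_pos hM0 hCpos), fun lam y hlam hy => ?_⟩
  -- choose a small scale r
  obtain ⟨r, hr0, hr1, hrle⟩ : ∃ r : ℝ, 0 < r ∧ r ≤ 1 ∧ ∀ j, r * a j ≤ lam j := by
    refine ⟨min 1 (Finset.univ.inf' Finset.univ_nonempty fun j => lam j / a j), ?_,
      min_le_left _ _, ?_⟩
    · refine lt_min one_pos ?_
      rw [Finset.lt_inf'_iff]
      exact fun j _ => div_pos (hlam j) (hapos j)
    · intro j
      have h1 : min 1 (Finset.univ.inf' Finset.univ_nonempty fun j => lam j / a j)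
          ≤ lam j / a j :=
        le_trans (min_le_right _ _) (Finset.inf'_le _ (Finset.mem_univ j))
      calc min 1 (Finset.univ.inf' Finset.univ_nonempty fun j => lam j / a j) * a j
          ≤ (lam j / a j) * a j := mul_le_mul_of_nonneg_right h1 (hapos j).le
        _ = lam j := div_mul_cancel₀ _ (hapos j).ne'
  set β : Fin n → ℝ := fun j => r ^ dj j * a j with hβ
  have hβpos : ∀ j, 0 < β j := fun j => mul_pos (pow_pos hr0 _) (hapos j)
  have hβle : ∀ j, β j ≤ lam j := by
    intro j
    have h1 : r ^ dj j ≤ r := le_of_le_of_eq (pow_le_pow_of_le_one hr0.le hr1 (hdj j)) (pow_one r)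
    calc β j ≤ r * a j := mul_le_mul_of_nonneg_right h1 (hapos j).le
      _ ≤ lam j := hrle j
  set μ : Fin n → ℝ := fun j => lam j / β j with hμ
  have hμ1 : ∀ j, 1 ≤ μ j := fun j => (one_le_div (hβpos j)).2 (hβle j)
  have hμpos : ∀ j, 0 < μ j := fun j => lt_of_lt_of_le one_pos (hμ1 j)
  set z : Fin n → ℝ := fun j => β j * y j with hz
  have hzpos : ∀ j, 0 < z j := fun j => mul_pos (hβpos j) (hy j)
  have hmain := hlower μ z hμ1 hzpos
  have heq : (fun j => μ j * z j) = fun j => lam j * y j := by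
    funext j
    show lam j / β j * (β j * y j) = lam j * y j
    field_simp
    rw [mul_right_comm, mul_div_cancel_right₀ _ (hβpos j).ne']
  rw [heq] at hmain
  -- the cube inequality at scale r
  have hKrc : IsCompact (r • K₁) := IsCompact.smul r hK₁c
  have hKrvol : volume (r • K₁) = ENNReal.ofReal (r ^ d) := by
    rw [Measure.addHaar_smul, hvolK₁, mul_one, Module.finrank_fin_fun, abs_of_pos (pow_pos hr0 _)]
  have hKrim : ∀ j, (volume ((L j) '' (r • K₁))).toReal = β j := by
    intro j
    rw [show ((L j) '' (r • K₁)) = r • ((L j) '' K₁) from image_smul_set (L j) r K₁]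
    rw [Measure.addHaar_smul, Module.finrank_fin_fun, abs_of_pos (pow_pos hr0 _),
      ENNReal.toReal_mul, ENNReal.toReal_ofReal (by positivity)]
  have hcube := hbl_cube_ineq L B C hC (r • K₁) hKrc y (fun j => (hy j).le)
  rw [hKrvol] at hcube
  have hiarg : (fun j => y j * (volume ((L j) '' (r • K₁))).toReal) = z := by
    funext j
    rw [hKrim j]
    exact mul_comm _ _
  rw [hiarg, ← ENNReal.ofReal_mul (by positivity)] at hcube
  have hzB : r ^ d * B y ≤ C * B z := by
    rcases eq_or_lt_of_le (hBnonneg y fun j => (hy j).le) with h0 | h0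
    · rw [← h0, mul_zero]
      exact mul_nonneg hCpos.le (hBnonneg z fun j => (hzpos j).le)
    · have hpos : (0:ℝ) < r ^ d * B y := by positivity
      have h2 : 0 < ENNReal.ofReal (C * B z) :=
        lt_of_lt_of_le (ENNReal.ofReal_pos.2 hpos) hcube
      exact (ENNReal.ofReal_le_ofReal_iff (ENNReal.ofReal_pos.1 h2).le).1 hcube
  -- comparison of the infima
  have hkey : ∀ s ∈ P, (∏ j, lam j ^ s j) ≤ (∏ j, μ j ^ s j) * (r ^ d * M) := by
    intro s hs
    have hs0 : ∀ i, 0 ≤ s i := hs.1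
    have hsum : (∑ i, s i * (dj i : ℝ)) = (d:ℝ) := hs.2.1
    have h1 : (∏ j, lam j ^ s j) = (∏ j, μ j ^ s j) * ∏ j, β j ^ s j := by
      rw [← Finset.prod_mul_distrib]
      refine Finset.prod_congr rfl fun j _ => ?_
      rw [show lam j = μ j * β j from (div_mul_cancel₀ _ (hβpos j).ne').symm,
        Real.mul_rpow (hμpos j).le (hβpos j).le]
    have h2 : (∏ j, β j ^ s j) = r ^ d * ∏ j, a j ^ s j := by
      have hterm : ∀ j, β j ^ s j = r ^ ((dj j : ℝ) * s j) * a j ^ s j := by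
        intro j
        rw [show β j = r ^ dj j * a j from rfl,
          Real.mul_rpow (pow_nonneg hr0.le _) (hapos j).le, ← Real.rpow_natCast r (dj j),
          ← Real.rpow_mul hr0.le]
      rw [Finset.prod_congr rfl fun j _ => hterm j, Finset.prod_mul_distrib,
        ← Real.rpow_sum_of_pos hr0]
      congr 1
      rw [show (∑ j, (dj j : ℝ) * s j) = (d:ℝ) by
          rw [← hsum]; exact Finset.sum_congr rfl fun j _ => mul_comm _ _,
        Real.rpow_natCast]
    have h3 : (∏ j, a j ^ s j) ≤ M := by
      rw [hM]
      refine Finset.prod_le_prod (fun j _ => (Real.rpow_pos_of_pos (hapos j) _).le) ?_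
      intro j _
      calc a j ^ s j ≤ max (a j) 1 ^ s j :=
            Real.rpow_le_rpow (hapos j).le (le_max_left _ _) (hs0 j)
        _ ≤ max (a j) 1 ^ (d:ℝ) :=
            Real.rpow_le_rpow_of_exponent_le (le_max_right _ _) (hsle s hs j)
        _ = max (a j) 1 ^ d := Real.rpow_natCast _ d
    calc (∏ j, lam j ^ s j) = (∏ j, μ j ^ s j) * ∏ j, β j ^ s j := h1
      _ = (∏ j, μ j ^ s j) * (r ^ d * ∏ j, a j ^ s j) := by rw [h2]
      _ ≤ (∏ j, μ j ^ s j) * (r ^ d * M) := by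
          refine mul_le_mul_of_nonneg_left ?_
            (Finset.prod_nonneg fun j _ => (Real.rpow_pos_of_pos (hμpos j) _).le)
          exact mul_le_mul_of_nonneg_left h3 (pow_nonneg hr0.le d)
  have hmlam_le : sInf ((fun s : Fin n → ℝ => ∏ j, lam j ^ s j) '' P) / (r ^ d * M)
      ≤ sInf ((fun s : Fin n → ℝ => ∏ j, μ j ^ s j) '' P) := by
    refine le_csInf (hP.image _) ?_
    rintro b ⟨s, hs, rfl⟩
    rw [div_le_iff₀ (mul_pos (pow_pos hr0 d) hM0)]
    exact (csInf_le (hbdd lam hlam) (Set.mem_image_of_mem _ hs)).trans (hkey s hs)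
  -- putting everything together
  have hBz : r ^ d * B y / C ≤ B z := by
    rw [div_le_iff₀ hCpos]
    linarith
  have hstep0 : c / (M * C) * sInf ((fun s : Fin n → ℝ => ∏ j, lam j ^ s j) '' P) * B y
      = c * (sInf ((fun s : Fin n → ℝ => ∏ j, lam j ^ s j) '' P) / (r ^ d * M))
        * (r ^ d * B y / C) := by
    field_simp
  rw [hstep0]
  calc c * (sInf ((fun s : Fin n → ℝ => ∏ j, lam j ^ s j) '' P) / (r ^ d * M))
        * (r ^ d * B y / C)
      ≤ c * (sInf ((fun s : Fin n → ℝ => ∏ j, lam j ^ s j) '' P) / (r ^ d * M)) * B z := by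
        refine mul_le_mul_of_nonneg_left hBz ?_
        exact mul_nonneg hc.le (div_nonneg (hmnn lam hlam)
          (mul_pos (pow_pos hr0 d) hM0).le)
    _ ≤ c * sInf ((fun s : Fin n → ℝ => ∏ j, μ j ^ s j) '' P) * B z := by
        refine mul_le_mul_of_nonneg_right ?_ (hBnonneg z fun j => (hzpos j).le)
        exact mul_le_mul_of_nonneg_left hmlam_le hc.le
    _ ≤ B fun j => lam j * y j := hmain
end
end

section
/- Let d ≥ 1 and let E_1, ..., E_k be linear subspaces of ℝ^d. Then: (a) for every choice of nonnegative rationals y_1, ..., y_k and rational y_0 (a weight attached to ℝ^d), there exist a flag of subspaces W_1 ⊊ W_2 ⊊ ... ⊊ W_t = ℝ^d and rationals z_1, ..., z_t with z_i ≥ 0 for all i < t, such that ∑_{i=1}^t z_i dim W_i = y_0 · d + ∑_{i=1}^k y_i dim E_i, and such that for every finite-dimensional real vector space V' and every linear map L : ℝ^d → V', ∑_{i=1}^t z_i dim L(W_i) ≤ y_0 · dim L(ℝ^d) + ∑_{i=1}^k y_i dim L(E_i); (b) moreover, there is a finite collection E' of subspaces of ℝ^d, depending only on (E_1,...,E_k),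 such that the subspaces W_1,...,W_t in (a) may always be chosen from E', uniformly over all choices of (y_0, y_1, ..., y_k). -/
noncomputable section

open Module Finset

namespace Stmt9Aux

variable {V : Type} [AddCommGroup V] [Module ℝ V] [FiniteDimensional ℝ V]

open Classical in
noncomputable def SS : List (Submodule ℝ V) → Finset (Submodule ℝ V)
  | [] => {⊥, ⊤}
  | E :: l => ((SS l) ×ˢ (SS l)).image fun p => p.1 ⊔ (E ⊓ p.2)

lemma top_mem_SS (l : List (Submodule ℝ V)) : (⊤ : Submodule ℝ V) ∈ SS l := by
  classical
  induction l with
  | nil => simp [SS]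
  | cons E l ih =>
      simp only [SS, Finset.mem_image]
      exact ⟨(⊤, ⊤), Finset.mem_product.mpr ⟨ih, ih⟩, by simp⟩

lemma core (l : List (Submodule ℝ V × ℕ)) :
    ∃ (G : ℕ → Submodule ℝ V) (N : ℕ),
      (∀ s t : ℕ, s ≤ t → G t ≤ G s) ∧
      (∀ s, N ≤ s → G s = ⊥) ∧
      (∀ s, G s ∈ SS (l.map Prod.fst)) ∧
      ((∑ s ∈ Finset.range N, finrank ℝ (G s))
          = (l.map fun p => p.2 * finrank ℝ p.1).sum) ∧
      (∀ (V' : Type) [AddCommGroup V'] [Module ℝ V'] [FiniteDimensional ℝ V']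
          (L : V →ₗ[ℝ] V'),
        (∑ s ∈ Finset.range N, finrank ℝ ((G s).map L))
          ≤ (l.map fun p => p.2 * finrank ℝ (p.1.map L)).sum) := by
  classical
  induction l with
  | nil =>
      refine ⟨fun _ => ⊥, 0, ?_, ?_, ?_, ?_, ?_⟩
      · intro s t _; exact le_rfl
      · intro s _; rfl
      · intro s; simp [SS]
      · simp
      · intro V' _ _ _ L; simp
  | cons p l ih =>
      obtain ⟨E, c⟩ := p
      obtain ⟨G, N, hmono, hvan, hmem, hdim, hineq⟩ := ih
      set I : ℕ → Submodule ℝ V := fun s => if s < c then ⊤ else G (s - c) with hI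
      set H : ℕ → Submodule ℝ V := fun s => G s ⊔ (E ⊓ I s) with hH
      have hImono : ∀ s t : ℕ, s ≤ t → I t ≤ I s := by
        intro s t hst
        by_cases h1 : t < c
        · have h2 : s < c := lt_of_le_of_lt hst h1
          simp [hI, h1, h2]
        · by_cases h2 : s < c
          · simp [hI, h2]
          · simp only [hI, if_neg h1, if_neg h2]
            exact hmono _ _ (Nat.sub_le_sub_right hst c)
      have hIG : ∀ s, G s ≤ I s := by
        intro s
        by_cases h : s < c
        · simp [hI, h]
        · simp only [hI, if_neg h]
          exact hmono _ _ (Nat.sub_le s c)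
      have hGE : ∀ s, G s ⊓ (E ⊓ I s) = E ⊓ G s := by
        intro s
        rw [inf_left_comm, inf_eq_left.mpr (hIG s)]
      -- auxiliary sum identities
      have haux : ∀ f : Submodule ℝ V → ℕ, f ⊥ = 0 →
          (∑ s ∈ Finset.range (N + c), f (E ⊓ G s) = ∑ s ∈ Finset.range N, f (E ⊓ G s)) ∧
          (∑ s ∈ Finset.range (N + c), f (G s) = ∑ s ∈ Finset.range N, f (G s)) ∧
          (∑ s ∈ Finset.range (N + c), f (E ⊓ I s)
              = c * f E + ∑ s ∈ Finset.range N, f (E ⊓ G s)) := by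
        intro f hf
        have hsub : Finset.range N ⊆ Finset.range (N + c) :=
          Finset.range_subset_range.mpr (Nat.le_add_right N c)
        refine ⟨?_, ?_, ?_⟩
        · refine (Finset.sum_subset hsub ?_).symm
          intro s _ hs
          rw [hvan s (Nat.not_lt.mp (fun h => hs (Finset.mem_range.mpr h))), inf_bot_eq, hf]
        · refine (Finset.sum_subset hsub ?_).symm
          intro s _ hs
          rw [hvan s (Nat.not_lt.mp (fun h => hs (Finset.mem_range.mpr h))), hf]
        · rw [Finset.range_eq_Ico,
            ← Finset.sum_Ico_consecutive _ (Nat.zero_le c) (Nat.le_add_left c N)]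
          have h1 : ∑ s ∈ Finset.Ico 0 c, f (E ⊓ I s) = c * f E := by
            rw [← Finset.range_eq_Ico]
            have : ∀ s ∈ Finset.range c, f (E ⊓ I s) = f E := by
              intro s hs
              simp [hI, Finset.mem_range.mp hs]
            rw [Finset.sum_congr rfl this, Finset.sum_const, Finset.card_range,
              smul_eq_mul]
          have h2 : ∑ s ∈ Finset.Ico c (N + c), f (E ⊓ I s)
              = ∑ s ∈ Finset.range N, f (E ⊓ G s) := by
            rw [Finset.sum_Ico_eq_sum_range]
            have hNc : N + c - c = N := by omega
            rw [hNc]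
            refine Finset.sum_congr rfl ?_
            intro s _
            have h3 : ¬ (c + s < c) := by omega
            have h4 : c + s - c = s := by omega
            simp [hI, h3, h4]
          rw [h1, h2, Finset.range_eq_Ico]
      refine ⟨H, N + c, ?_, ?_, ?_, ?_, ?_⟩
      · -- antitone
        intro s t hst
        exact sup_le_sup (hmono s t hst) (inf_le_inf_left E (hImono s t hst))
      · -- vanishing
        intro s hs
        have h1 : G s = ⊥ := hvan s (by omega)
        have h2 : ¬ (s < c) := by omega
        have h3 : G (s - c) = ⊥ := hvan _ (by omega)
        simp [hH, hI, h1, h2, h3]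
      · -- membership
        intro s
        have hmap : ((E, c) :: l).map Prod.fst = E :: l.map Prod.fst := by simp
        rw [hmap]
        simp only [SS, Finset.mem_image]
        refine ⟨(G s, I s), Finset.mem_product.mpr ⟨hmem s, ?_⟩, rfl⟩
        by_cases h : s < c
        · simp only [hI, if_pos h]; exact top_mem_SS _
        · simp only [hI, if_neg h]; exact hmem _
      · -- dimension equality
        have hpt : ∀ s, finrank ℝ ↥(H s) + finrank ℝ ↥(E ⊓ G s)
            = finrank ℝ ↥(G s) + finrank ℝ ↥(E ⊓ I s) := by
          intro s
          have := Submodule.finrank_sup_add_finrank_inf_eq (G s) (E ⊓ I s)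
          rwa [hGE s] at this
        have hsum : (∑ s ∈ Finset.range (N + c), finrank ℝ ↥(H s))
            + (∑ s ∈ Finset.range (N + c), finrank ℝ ↥(E ⊓ G s))
            = (∑ s ∈ Finset.range (N + c), finrank ℝ ↥(G s))
            + (∑ s ∈ Finset.range (N + c), finrank ℝ ↥(E ⊓ I s)) := by
          rw [← Finset.sum_add_distrib, ← Finset.sum_add_distrib]
          exact Finset.sum_congr rfl fun s _ => hpt s
        obtain ⟨e1, e2, e3⟩ := haux (fun A => finrank ℝ ↥A) (finrank_bot ℝ V)
        rw [e1, e2, e3] at hsum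
        have heq : (∑ s ∈ Finset.range (N + c), finrank ℝ ↥(H s))
            = c * finrank ℝ ↥E + ∑ s ∈ Finset.range N, finrank ℝ ↥(G s) := by omega
        rw [heq, hdim, List.map_cons, List.sum_cons]
      · -- inequality
        intro V' _ _ _ L
        have hpt : ∀ s, finrank ℝ ↥((H s).map L) + finrank ℝ ↥((E ⊓ G s).map L)
            ≤ finrank ℝ ↥((G s).map L) + finrank ℝ ↥((E ⊓ I s).map L) := by
          intro s
          have h1 := Submodule.finrank_sup_add_finrank_inf_eq
            ((G s).map L) ((E ⊓ I s).map L)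
          have h2 : (H s).map L = (G s).map L ⊔ (E ⊓ I s).map L :=
            Submodule.map_sup _ _ _
          have h3 : finrank ℝ ↥((E ⊓ G s).map L)
              ≤ finrank ℝ ↥((G s).map L ⊓ (E ⊓ I s).map L) := by
            rw [← hGE s]
            exact Submodule.finrank_mono (Submodule.map_inf_le L)
          rw [h2]
          omega
        have hsum : (∑ s ∈ Finset.range (N + c), finrank ℝ ↥((H s).map L))
            + (∑ s ∈ Finset.range (N + c), finrank ℝ ↥((E ⊓ G s).map L))
            ≤ (∑ s ∈ Finset.range (N + c), finrank ℝ ↥((G s).map L))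
            + (∑ s ∈ Finset.range (N + c), finrank ℝ ↥((E ⊓ I s).map L)) := by
          rw [← Finset.sum_add_distrib, ← Finset.sum_add_distrib]
          exact Finset.sum_le_sum fun s _ => hpt s
        obtain ⟨e1, e2, e3⟩ := haux (fun A => finrank ℝ ↥(A.map L))
          (by simp [Submodule.map_bot])
        rw [e1, e2, e3] at hsum
        have hfin : (∑ s ∈ Finset.range (N + c), finrank ℝ ↥((H s).map L))
            ≤ c * finrank ℝ ↥(E.map L) + ∑ s ∈ Finset.range N, finrank ℝ ↥((G s).map L) := by
          omega
        calc (∑ s ∈ Finset.range (N + c), finrank ℝ ↥((H s).map L))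
            ≤ c * finrank ℝ ↥(E.map L) + ∑ s ∈ Finset.range N, finrank ℝ ↥((G s).map L) := hfin
          _ ≤ c * finrank ℝ ↥(E.map L)
                + (l.map fun p => p.2 * finrank ℝ ↥(Submodule.map L p.1)).sum :=
              Nat.add_le_add_left (hineq V' L) _
          _ = (((E, c) :: l).map fun p => p.2 * finrank ℝ ↥(Submodule.map L p.1)).sum := by
              rw [List.map_cons, List.sum_cons]

end Stmt9Aux


open Stmt9Aux in
theorem stmt9 (d k : ℕ) (hd : 0 < d) (E : Fin k → Submodule ℝ (Fin d → ℝ)) :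
    ∃ E' : Finset (Submodule ℝ (Fin d → ℝ)),
      ∀ (y0 : ℚ) (y : Fin k → ℚ), (∀ i, 0 ≤ y i) →
        ∃ (t : ℕ) (W : Fin (t + 1) → Submodule ℝ (Fin d → ℝ)) (z : Fin (t + 1) → ℚ),
          (∀ i, W i ∈ E') ∧
          (∀ i j : Fin (t + 1), i < j → W i < W j) ∧
          W (Fin.last t) = ⊤ ∧
          (∀ i : Fin (t + 1), i ≠ Fin.last t → 0 ≤ z i) ∧
          (∑ i, z i * (Module.finrank ℝ (W i) : ℚ))
            = y0 * (d : ℚ) + ∑ i, y i * (Module.finrank ℝ (E i) : ℚ) ∧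
          ∀ (V' : Type) [AddCommGroup V'] [Module ℝ V'] [FiniteDimensional ℝ V']
            (L : (Fin d → ℝ) →ₗ[ℝ] V'),
            (∑ i, z i * (Module.finrank ℝ ((W i).map L) : ℚ))
              ≤ y0 * (Module.finrank ℝ ((⊤ : Submodule ℝ (Fin d → ℝ)).map L) : ℚ)
                + ∑ i, y i * (Module.finrank ℝ ((E i).map L) : ℚ) := by
  classical
  refine ⟨SS (List.ofFn E) ∪ {⊤}, ?_⟩
  intro y0 y hy
  -- scaling to natural numbers
  set N₀ : ℕ := ∏ i, (y i).den with hN₀def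
  have hN₀pos : 0 < N₀ := Finset.prod_pos fun i _ => (y i).den_pos
  have hN₀Q : (0:ℚ) < (N₀:ℚ) := by exact_mod_cast hN₀pos
  have hN₀ne : (N₀:ℚ) ≠ 0 := ne_of_gt hN₀Q
  set n : Fin k → ℕ := fun i => (y i).num.toNat * (N₀ / (y i).den) with hndef
  have hcast : ∀ i, (n i : ℚ) = (N₀ : ℚ) * y i := by
    intro i
    have hdvd : (y i).den ∣ N₀ := Finset.dvd_prod_of_mem _ (Finset.mem_univ i)
    have hden : ((y i).den : ℚ) ≠ 0 := Nat.cast_ne_zero.mpr (y i).den_nz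
    have h1 : n i * (y i).den = (y i).num.toNat * N₀ := by
      rw [hndef]; dsimp only; rw [mul_assoc, Nat.div_mul_cancel hdvd]
    have h1' : (n i : ℚ) * ((y i).den : ℚ) = ((y i).num.toNat : ℚ) * (N₀ : ℚ) := by
      exact_mod_cast h1
    have htn : (((y i).num.toNat : ℕ) : ℚ) = ((y i).num : ℚ) := by
      exact_mod_cast Int.toNat_of_nonneg (Rat.num_nonneg.mpr (hy i))
    have hyd : y i * ((y i).den : ℚ) = ((y i).num : ℚ) := Rat.mul_den_eq_num (y i)
    apply mul_right_cancel₀ hden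
    rw [h1', htn, mul_assoc, hyd]
    ring
  -- core construction
  obtain ⟨G, N, hmono, hvan, hmem, hdim, hineq⟩ :=
    core (V := Fin d → ℝ) (List.ofFn fun i => (E i, n i))
  have hmapfst : (List.ofFn fun i => (E i, n i)).map Prod.fst = List.ofFn E := by
    rw [List.map_ofFn]; rfl
  rw [hmapfst] at hmem
  have hdim' : (∑ s ∈ Finset.range N, Module.finrank ℝ (G s))
      = ∑ i, n i * Module.finrank ℝ (E i) := by
    rw [hdim, List.map_ofFn, List.sum_ofFn]; rfl
  have hineq' : ∀ (V' : Type) [AddCommGroup V'] [Module ℝ V'] [FiniteDimensional ℝ V']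
      (L : (Fin d → ℝ) →ₗ[ℝ] V'),
      (∑ s ∈ Finset.range N, Module.finrank ℝ ((G s).map L))
        ≤ ∑ i, n i * Module.finrank ℝ ((E i).map L) := by
    intro V' _ _ _ L
    have h := hineq V' L
    rwa [List.map_ofFn, List.sum_ofFn] at h
  -- the chain set
  set T : Finset (Submodule ℝ (Fin d → ℝ)) := (Finset.range N).image G ∪ {⊤} with hTdef
  have htopT : (⊤ : Submodule ℝ (Fin d → ℝ)) ∈ T :=
    Finset.mem_union_right _ (Finset.mem_singleton_self _)
  have hTpos : 0 < T.card := Finset.card_pos.mpr ⟨⊤, htopT⟩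
  have hTE' : ∀ A ∈ T, A ∈ SS (List.ofFn E) ∪ {⊤} := by
    intro A hA
    rcases Finset.mem_union.mp hA with h | h
    · obtain ⟨s, _, rfl⟩ := Finset.mem_image.mp h
      exact Finset.mem_union_left _ (hmem s)
    · exact Finset.mem_union_right _ h
  have hcomp : ∀ A ∈ T, ∀ B ∈ T, A ≤ B ∨ B ≤ A := by
    intro A hA B hB
    rcases Finset.mem_union.mp hA with h | h
    · rcases Finset.mem_union.mp hB with h' | h'
      · obtain ⟨s, _, rfl⟩ := Finset.mem_image.mp h
        obtain ⟨s', _, rfl⟩ := Finset.mem_image.mp h'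
        rcases le_total s s' with hss | hss
        · exact Or.inr (hmono s s' hss)
        · exact Or.inl (hmono s' s hss)
      · rw [Finset.mem_singleton.mp h']
        exact Or.inl le_top
    · rw [Finset.mem_singleton.mp h]
      exact Or.inr le_top
  have hinj : Set.InjOn (fun A : Submodule ℝ (Fin d → ℝ) => Module.finrank ℝ A) (T : Set (Submodule ℝ (Fin d → ℝ))) := by
    intro A hA B hB hAB
    simp only at hAB
    rcases hcomp A (Finset.mem_coe.mp hA) B (Finset.mem_coe.mp hB) with h | h
    · exact Submodule.eq_of_le_of_finrank_le h (le_of_eq hAB.symm)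
    · exact (Submodule.eq_of_le_of_finrank_le h (le_of_eq hAB)).symm
  set K : Finset ℕ := T.image (fun A : Submodule ℝ (Fin d → ℝ) => Module.finrank ℝ A) with hKdef
  have hKcard : K.card = T.card := Finset.card_image_of_injOn hinj
  set t : ℕ := T.card - 1 with htdef
  have hT1 : T.card = t + 1 := by omega
  have hK1 : K.card = t + 1 := by omega
  have hex : ∀ i : Fin (t+1), ∃! A, A ∈ T ∧ Module.finrank ℝ A = K.orderEmbOfFin hK1 i := by
    intro i
    have hKi : K.orderEmbOfFin hK1 i ∈ K := Finset.orderEmbOfFin_mem K hK1 i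
    obtain ⟨A, hA, hrk⟩ := Finset.mem_image.mp hKi
    exact ⟨A, ⟨hA, hrk⟩, fun B hB =>
      hinj (Finset.mem_coe.mpr hB.1) (Finset.mem_coe.mpr hA) (by simp only; rw [hB.2, hrk])⟩
  set W : Fin (t+1) → Submodule ℝ (Fin d → ℝ) := fun i => Finset.choose _ T (hex i) with hWdef
  have hWT : ∀ i, W i ∈ T := fun i => Finset.choose_mem _ T (hex i)
  have hWrk : ∀ i, Module.finrank ℝ (W i) = K.orderEmbOfFin hK1 i :=
    fun i => Finset.choose_property _ T (hex i)
  have hWmono : ∀ i j : Fin (t+1), i < j → W i < W j := by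
    intro i j hij
    have hlt : K.orderEmbOfFin hK1 i < K.orderEmbOfFin hK1 j :=
      (K.orderEmbOfFin hK1).strictMono hij
    rcases hcomp _ (hWT i) _ (hWT j) with h | h
    · refine lt_of_le_of_ne h fun hEq => ?_
      have h1 := hWrk i
      have h2 := hWrk j
      rw [hEq] at h1
      omega
    · exfalso
      have hle := Submodule.finrank_mono h
      have h1 := hWrk i
      have h2 := hWrk j
      omega
  have hWinj : Function.Injective W := by
    intro i j hij
    have heq : K.orderEmbOfFin hK1 i = K.orderEmbOfFin hK1 j := by
      rw [← hWrk i, ← hWrk j, hij]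
    exact (K.orderEmbOfFin hK1).injective heq
  have hrkV : Module.finrank ℝ (Fin d → ℝ) = d := Module.finrank_fin_fun ℝ
  have hrkTop : Module.finrank ℝ (⊤ : Submodule ℝ (Fin d → ℝ)) = d := by
    rw [finrank_top]; exact hrkV
  have hle : ∀ i : Fin (t+1), K.orderEmbOfFin hK1 i ≤ d := by
    intro i
    have hKi : K.orderEmbOfFin hK1 i ∈ K := Finset.orderEmbOfFin_mem K hK1 i
    obtain ⟨A, _, hrk⟩ := Finset.mem_image.mp hKi
    rw [← hrk]
    exact le_trans (Submodule.finrank_le A) (le_of_eq hrkV)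
  have hWlast : W (Fin.last t) = ⊤ := by
    have hdK : d ∈ K := Finset.mem_image.mpr ⟨⊤, htopT, hrkTop⟩
    obtain ⟨i0, hi0⟩ : ∃ i0 : Fin (t+1), K.orderEmbOfFin hK1 i0 = d := by
      have hr := Finset.range_orderEmbOfFin K hK1
      have : d ∈ Set.range (K.orderEmbOfFin hK1) := by rw [hr]; exact_mod_cast hdK
      exact this
    have hlast : K.orderEmbOfFin hK1 (Fin.last t) = d :=
      le_antisymm (hle _) (hi0 ▸ (K.orderEmbOfFin hK1).monotone (Fin.le_last i0))
    exact Submodule.eq_top_of_finrank_eq (by rw [hWrk, hlast, hrkV])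
  -- weights
  set cw : Submodule ℝ (Fin d → ℝ) → ℕ :=
    fun A => ((Finset.range N).filter (fun s => G s = A)).card with hcwdef
  have himg : Finset.image W Finset.univ = T := by
    refine Finset.eq_of_subset_of_card_le (fun A hA => ?_) ?_
    · obtain ⟨i, _, rfl⟩ := Finset.mem_image.mp hA
      exact hWT i
    · rw [Finset.card_image_of_injective _ hWinj, Finset.card_univ, Fintype.card_fin, hT1]
  have key : ∀ g : Submodule ℝ (Fin d → ℝ) → ℚ,
      (∑ i : Fin (t+1), (cw (W i) : ℚ) * g (W i)) = ∑ s ∈ Finset.range N, g (G s) := by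
    intro g
    have h1 : ∑ s ∈ Finset.range N, g (G s)
        = ∑ A ∈ (Finset.range N).image G, (cw A : ℚ) * g A := by
      rw [Finset.sum_comp g G]
      exact Finset.sum_congr rfl fun A _ => by rw [hcwdef]; simp [nsmul_eq_mul]
    have h2 : ∑ A ∈ (Finset.range N).image G, (cw A : ℚ) * g A
        = ∑ A ∈ T, (cw A : ℚ) * g A := by
      refine Finset.sum_subset Finset.subset_union_left (fun A hA hnA => ?_)
      have : cw A = 0 := by
        rw [hcwdef]
        simp only
        rw [Finset.card_eq_zero, Finset.filter_eq_empty_iff]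
        intro s hs hGs
        exact hnA (Finset.mem_image.mpr ⟨s, hs, hGs⟩)
      rw [this]
      simp
    have h3 : ∑ A ∈ T, (cw A : ℚ) * g A = ∑ i : Fin (t+1), (cw (W i) : ℚ) * g (W i) := by
      rw [← himg, Finset.sum_image (fun i _ j _ h => hWinj h)]
    rw [h3.symm, h2.symm, h1.symm]
  refine ⟨t, W, fun i => (cw (W i) : ℚ)/(N₀:ℚ) + if i = Fin.last t then y0 else 0,
    fun i => hTE' _ (hWT i), hWmono, hWlast, ?_, ?_, ?_⟩
  · intro i hi
    simp only [if_neg hi, add_zero]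
    exact div_nonneg (Nat.cast_nonneg _) (Nat.cast_nonneg _)
  · -- dimension equality
    have hsplit : (∑ i : Fin (t+1), ((cw (W i) : ℚ)/(N₀:ℚ) + if i = Fin.last t then y0 else 0)
          * (Module.finrank ℝ (W i) : ℚ))
        = (∑ i : Fin (t+1), ((cw (W i) : ℚ) * (Module.finrank ℝ (W i) : ℚ)))/(N₀:ℚ)
          + ∑ i : Fin (t+1), (if i = Fin.last t then y0 * (Module.finrank ℝ (W i) : ℚ) else 0) := by
      rw [Finset.sum_div, ← Finset.sum_add_distrib]
      refine Finset.sum_congr rfl fun i _ => ?_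
      split <;> ring
    rw [hsplit]
    have h2 : (∑ i : Fin (t+1), (if i = Fin.last t then y0 * (Module.finrank ℝ (W i) : ℚ) else 0))
        = y0 * (d : ℚ) := by
      rw [Finset.sum_ite_eq' Finset.univ (Fin.last t)
        (fun i => y0 * (Module.finrank ℝ (W i) : ℚ)), if_pos (Finset.mem_univ _), hWlast]
      rw [hrkTop]
    have h1 : (∑ i : Fin (t+1), ((cw (W i) : ℚ) * (Module.finrank ℝ (W i) : ℚ)))
        = (N₀ : ℚ) * ∑ i, y i * (Module.finrank ℝ (E i) : ℚ) := by
      rw [key (fun A : Submodule ℝ (Fin d → ℝ) => (Module.finrank ℝ A : ℚ))]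
      rw [← Nat.cast_sum, hdim', Nat.cast_sum, Finset.mul_sum]
      refine Finset.sum_congr rfl fun i _ => ?_
      push_cast
      rw [hcast i]
      ring
    rw [h1, h2]
    field_simp
    ring
  · -- the inequality
    intro V' _ _ _ L
    have hsplit : (∑ i : Fin (t+1), ((cw (W i) : ℚ)/(N₀:ℚ) + if i = Fin.last t then y0 else 0)
          * (Module.finrank ℝ ((W i).map L) : ℚ))
        = (∑ i : Fin (t+1), ((cw (W i) : ℚ) * (Module.finrank ℝ ((W i).map L) : ℚ)))/(N₀:ℚ)
          + ∑ i : Fin (t+1), (if i = Fin.last t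
              then y0 * (Module.finrank ℝ ((W i).map L) : ℚ) else 0) := by
      rw [Finset.sum_div, ← Finset.sum_add_distrib]
      refine Finset.sum_congr rfl fun i _ => ?_
      split <;> ring
    rw [hsplit]
    have h2 : (∑ i : Fin (t+1), (if i = Fin.last t
          then y0 * (Module.finrank ℝ ((W i).map L) : ℚ) else 0))
        = y0 * (Module.finrank ℝ ((⊤ : Submodule ℝ (Fin d → ℝ)).map L) : ℚ) := by
      rw [Finset.sum_ite_eq' Finset.univ (Fin.last t)
        (fun i => y0 * (Module.finrank ℝ ((W i).map L) : ℚ)), if_pos (Finset.mem_univ _), hWlast]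
    have h1 : (∑ i : Fin (t+1), ((cw (W i) : ℚ) * (Module.finrank ℝ ((W i).map L) : ℚ)))
        ≤ (N₀ : ℚ) * ∑ i, y i * (Module.finrank ℝ ((E i).map L) : ℚ) := by
      rw [key (fun A : Submodule ℝ (Fin d → ℝ) => (Module.finrank ℝ (A.map L) : ℚ))]
      have hq : ((∑ s ∈ Finset.range N, Module.finrank ℝ ((G s).map L) : ℕ) : ℚ)
          ≤ ((∑ i, n i * Module.finrank ℝ ((E i).map L) : ℕ) : ℚ) := by
        exact_mod_cast hineq' V' L
      rw [Nat.cast_sum, Nat.cast_sum] at hq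
      refine le_trans hq (le_of_eq ?_)
      rw [Finset.mul_sum]
      refine Finset.sum_congr rfl fun i _ => ?_
      push_cast
      rw [hcast i]
      ring
    have h1' : (∑ i : Fin (t+1), ((cw (W i) : ℚ) * (Module.finrank ℝ ((W i).map L) : ℚ)))/(N₀:ℚ)
        ≤ ∑ i, y i * (Module.finrank ℝ ((E i).map L) : ℚ) := by
      rw [div_le_iff₀ hN₀Q]
      calc _ ≤ (N₀ : ℚ) * ∑ i, y i * (Module.finrank ℝ ((E i).map L) : ℚ) := h1
        _ = _ := by ring
    linarith [h1', le_of_eq h2]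
end
end

section
/- Let V be a linear subspace of ℝ^d and let W_1 ⊆ W_2 ⊆ ... ⊆ W_t be a chain of linear subspaces of ℝ^d. Then the smallest collection of subspaces of ℝ^d that contains {V, W_1, ..., W_t} and is closed under pairwise sum and pairwise intersection is finite; indeed, it is contained in the explicit finite set {V} ∪ {W_i : 1 ≤ i ≤ t} ∪ {V + W_i : 1 ≤ i ≤ t} ∪ {V ∩ W_i : 1 ≤ i ≤ t} ∪ {W_i + (V ∩ W_j) : 1 ≤ i < j ≤ t}. -/
noncomputable section

namespace Stmt10Aux

variable {α : Type*} [Lattice α] [OrderBot α] [IsModularLattice α] {t : ℕ}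

/-- Extension of the chain `W` by a bottom element. -/
def Wb (W : Fin t → α) : WithBot (Fin t) → α :=
  WithBot.recBotCoe ⊥ W

@[simp] lemma Wb_bot (W : Fin t → α) : Wb W ⊥ = ⊥ := rfl
@[simp] lemma Wb_coe (W : Fin t → α) (i : Fin t) : Wb W (i : WithBot (Fin t)) = W i := rfl

variable {W : Fin t → α}

lemma Wb_mono (hW : Monotone W) : Monotone (Wb W) := by
  intro a b h
  induction a using WithBot.recBotCoe with
  | bot => simp
  | coe i =>
    induction b using WithBot.recBotCoe with
    | bot => simp at h
    | coe j => exact hW (WithBot.coe_le_coe.mp h)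

lemma Wb_sup (hW : Monotone W) (i j : WithBot (Fin t)) : Wb W i ⊔ Wb W j = Wb W (i ⊔ j) := by
  rcases le_total i j with h | h
  · rw [sup_eq_right.2 (Wb_mono hW h), sup_eq_right.2 h]
  · rw [sup_eq_left.2 (Wb_mono hW h), sup_eq_left.2 h]

lemma W_min (hW : Monotone W) (j l : Fin t) : W j ⊓ W l = W (min j l) := by
  rcases le_total j l with h | h
  · rw [inf_eq_left.2 (hW h), min_eq_left h]
  · rw [inf_eq_right.2 (hW h), min_eq_right h]

lemma inf_W_sup (hW : Monotone W) (V : α) (j l : Fin t) : (V ⊓ W j) ⊔ (V ⊓ W l) = V ⊓ W (max j l) := by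
  rcases le_total j l with h | h
  · rw [sup_eq_right.2 (inf_le_inf_left V (hW h)), max_eq_right h]
  · rw [sup_eq_left.2 (inf_le_inf_left V (hW h)), max_eq_left h]

/-- `W' k ⊓ (V ⊔ W' i)`. -/
lemma Lw (hW : Monotone W) (V : α) (i k : WithBot (Fin t)) :
    Wb W k ⊓ (V ⊔ Wb W i) = Wb W (min i k) ⊔ (V ⊓ Wb W k) := by
  rcases le_total k i with h | h
  · rw [min_eq_right h, inf_eq_left.2 ((Wb_mono hW h).trans le_sup_right),
      sup_eq_left.2 inf_le_right]
  · rw [min_eq_left h, inf_comm, sup_comm V, sup_inf_assoc_of_le _ (Wb_mono hW h)]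

/-- sup of two type-A elements. -/
lemma Laa_sup (hW : Monotone W) (V : α) (i j : WithBot (Fin t)) :
    (V ⊔ Wb W i) ⊔ (V ⊔ Wb W j) = V ⊔ Wb W (i ⊔ j) := by
  rw [sup_sup_sup_comm, sup_idem, Wb_sup hW]

/-- sup of a type-A and a type-B element. -/
lemma Lab_sup (hW : Monotone W) (V : α) (i k : WithBot (Fin t)) (l : Fin t) :
    (V ⊔ Wb W i) ⊔ (Wb W k ⊔ (V ⊓ W l)) = V ⊔ Wb W (i ⊔ k) := by
  rw [← sup_assoc, sup_assoc V, Wb_sup hW,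
    sup_eq_left.2 (inf_le_left.trans le_sup_left)]

/-- sup of two type-B elements. -/
lemma Lbb_sup (hW : Monotone W) (V : α) (i k : WithBot (Fin t)) (j l : Fin t) :
    (Wb W i ⊔ (V ⊓ W j)) ⊔ (Wb W k ⊔ (V ⊓ W l)) = Wb W (i ⊔ k) ⊔ (V ⊓ W (max j l)) := by
  rw [sup_sup_sup_comm, Wb_sup hW, inf_W_sup hW]

/-- inf of two type-A elements. -/
lemma Laa_inf (hW : Monotone W) (V : α) (i j : WithBot (Fin t)) :
    (V ⊔ Wb W i) ⊓ (V ⊔ Wb W j) = V ⊔ Wb W (min i j) := by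
  rcases le_total i j with h | h
  · rw [inf_eq_left.2 (sup_le_sup_left (Wb_mono hW h) V), min_eq_left h]
  · rw [inf_eq_right.2 (sup_le_sup_left (Wb_mono hW h) V), min_eq_right h]

/-- inf of a type-A and a type-B element. -/
lemma Lab_inf (hW : Monotone W) (V : α) (i k : WithBot (Fin t)) (l : Fin t) (hkl : k ≤ (l : WithBot (Fin t))) :
    (V ⊔ Wb W i) ⊓ (Wb W k ⊔ (V ⊓ W l)) = Wb W (min i k) ⊔ (V ⊓ W l) := by
  have hVl : V ⊓ W l ≤ V ⊔ Wb W i := inf_le_left.trans le_sup_left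
  rw [inf_comm, sup_comm (Wb W k), sup_inf_assoc_of_le _ hVl, Lw hW,
    sup_comm (V ⊓ W l), sup_assoc]
  congr 1
  have : V ⊓ Wb W k ≤ V ⊓ W l := by
    simpa using inf_le_inf_left V (Wb_mono hW hkl)
  rw [sup_eq_right.2 this]

/-- inf of `V ⊓ W j` with a type-B element. -/
lemma Linf (hW : Monotone W) (V : α) (j l : Fin t) (k : WithBot (Fin t)) (hkl : k ≤ (l : WithBot (Fin t))) :
    (V ⊓ W j) ⊓ (Wb W k ⊔ (V ⊓ W l)) = V ⊓ W (min j l) := by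
  rcases le_total (j : WithBot (Fin t)) k with h | h
  · have hjl : j ≤ l := WithBot.coe_le_coe.mp (h.trans hkl)
    have hWjk : W j ≤ Wb W k := by simpa using Wb_mono hW h
    have : V ⊓ W j ≤ Wb W k ⊔ (V ⊓ W l) := (inf_le_right.trans hWjk).trans le_sup_left
    rw [inf_eq_left.2 this, min_eq_left hjl]
  · have hk : Wb W k ≤ W j := by simpa using Wb_mono hW h
    have key : W j ⊓ (V ⊓ W l) = V ⊓ W (min j l) := by
      rw [inf_left_comm, W_min hW]
    have step1 : W j ⊓ (Wb W k ⊔ (V ⊓ W l)) = Wb W k ⊔ (V ⊓ W (min j l)) := by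
      rw [sup_comm (Wb W k), ← inf_sup_assoc_of_le _ hk, key]
      exact sup_comm _ _
    have hkm : Wb W k ≤ W (min j l) := by
      have hc : k ≤ ((min j l : Fin t) : WithBot (Fin t)) := by
        rw [WithBot.coe_min]; exact le_min h hkl
      exact Wb_mono hW hc
    rw [inf_assoc, step1, ← inf_sup_assoc_of_le _ (inf_le_left : V ⊓ W (min j l) ≤ V),
      sup_eq_right.2 (inf_le_inf_left V hkm)]

/-- inf of two type-B elements, ordered case. -/
lemma Lbb1 (hW : Monotone W) (V : α) (i k : WithBot (Fin t)) (j l : Fin t) (hik : i ≤ k)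
    (hkl : k ≤ (l : WithBot (Fin t))) :
    (Wb W i ⊔ (V ⊓ W j)) ⊓ (Wb W k ⊔ (V ⊓ W l)) = Wb W i ⊔ (V ⊓ W (min j l)) := by
  have h : Wb W i ≤ Wb W k ⊔ (V ⊓ W l) := (Wb_mono hW hik).trans le_sup_left
  rw [sup_inf_assoc_of_le _ h, Linf hW V j l k hkl]

/-- inf of two type-B elements. -/
lemma Lbb (hW : Monotone W) (V : α) (i k : WithBot (Fin t)) (j l : Fin t)
    (hij : i ≤ (j : WithBot (Fin t))) (hkl : k ≤ (l : WithBot (Fin t))) :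
    (Wb W i ⊔ (V ⊓ W j)) ⊓ (Wb W k ⊔ (V ⊓ W l)) = Wb W (min i k) ⊔ (V ⊓ W (min j l)) := by
  rcases le_total i k with h | h
  · rw [Lbb1 hW V i k j l h hkl, min_eq_left h]
  · rw [inf_comm, Lbb1 hW V k i l j h hij, min_eq_right h, min_comm l j]

end Stmt10Aux

open Stmt10Aux

theorem stmt10 (d t : ℕ) (V : Submodule ℝ (Fin d → ℝ))
    (W : Fin t → Submodule ℝ (Fin d → ℝ)) (hW : Monotone W) :
    (⋂₀ {S : Set (Submodule ℝ (Fin d → ℝ)) |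
        ({V} ∪ Set.range W) ⊆ S ∧ ∀ A ∈ S, ∀ B ∈ S, A ⊔ B ∈ S ∧ A ⊓ B ∈ S}).Finite ∧
    (⋂₀ {S : Set (Submodule ℝ (Fin d → ℝ)) |
        ({V} ∪ Set.range W) ⊆ S ∧ ∀ A ∈ S, ∀ B ∈ S, A ⊔ B ∈ S ∧ A ⊓ B ∈ S})
      ⊆ ({V} ∪ Set.range W ∪ (Set.range fun i => V ⊔ W i) ∪ (Set.range fun i => V ⊓ W i)
          ∪ {U | ∃ i j : Fin t, i < j ∧ U = W i ⊔ (V ⊓ W j)}) := by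
  classical
  set E' : Set (Submodule ℝ (Fin d → ℝ)) :=
    {U | (∃ i : WithBot (Fin t), U = V ⊔ Wb W i) ∨
      ∃ (i : WithBot (Fin t)) (j : Fin t), i ≤ (j : WithBot (Fin t)) ∧
        U = Wb W i ⊔ (V ⊓ W j)} with hE'def
  have hE'mem : E' ∈ {S : Set (Submodule ℝ (Fin d → ℝ)) |
      ({V} ∪ Set.range W) ⊆ S ∧ ∀ A ∈ S, ∀ B ∈ S, A ⊔ B ∈ S ∧ A ⊓ B ∈ S} := by
    constructor
    · rintro U (rfl | ⟨i, rfl⟩)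
      · exact Or.inl ⟨⊥, by simp⟩
      · exact Or.inr ⟨(i : WithBot (Fin t)), i, le_rfl,
          by simp [sup_eq_left.2 (inf_le_right : V ⊓ W i ≤ W i)]⟩
    · rintro A (⟨i, rfl⟩ | ⟨i, j, hij, rfl⟩) B (⟨k, rfl⟩ | ⟨k, l, hkl, rfl⟩)
      · exact ⟨Or.inl ⟨i ⊔ k, Laa_sup hW V i k⟩,
          Or.inl ⟨min i k, Laa_inf hW V i k⟩⟩
      · exact ⟨Or.inl ⟨i ⊔ k, Lab_sup hW V i k l⟩,
          Or.inr ⟨min i k, l, (min_le_right i k).trans hkl, Lab_inf hW V i k l hkl⟩⟩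
      · refine ⟨Or.inl ⟨k ⊔ i, ?_⟩,
          Or.inr ⟨min k i, j, (min_le_right k i).trans hij, ?_⟩⟩
        · rw [sup_comm]; exact Lab_sup hW V k i j
        · rw [inf_comm]; exact Lab_inf hW V k i j hij
      · refine ⟨Or.inr ⟨i ⊔ k, max j l, ?_, Lbb_sup hW V i k j l⟩,
          Or.inr ⟨min i k, min j l, ?_, Lbb hW V i k j l hij hkl⟩⟩
        · exact sup_le (hij.trans (WithBot.coe_le_coe.2 (le_max_left j l)))
            (hkl.trans (WithBot.coe_le_coe.2 (le_max_right j l)))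
        · rw [WithBot.coe_min]
          exact le_min ((min_le_left i k).trans hij) ((min_le_right i k).trans hkl)
  have hsub : E' ⊆ ({V} ∪ Set.range W ∪ (Set.range fun i => V ⊔ W i)
      ∪ (Set.range fun i => V ⊓ W i)
      ∪ {U | ∃ i j : Fin t, i < j ∧ U = W i ⊔ (V ⊓ W j)}) := by
    rintro U (⟨i, rfl⟩ | ⟨i, j, hij, rfl⟩) <;>
      simp only [Set.mem_union, Set.mem_singleton_iff, Set.mem_range, Set.mem_setOf_eq]
    · induction i using WithBot.recBotCoe with
      | bot => exact Or.inl (Or.inl (Or.inl (Or.inl (by simp))))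
      | coe i => exact Or.inl (Or.inl (Or.inr ⟨i, by simp⟩))
    · induction i using WithBot.recBotCoe with
      | bot => exact Or.inl (Or.inr ⟨j, by simp⟩)
      | coe i =>
        obtain h | h := (WithBot.coe_le_coe.mp hij).lt_or_eq
        · exact Or.inr ⟨i, j, h, by simp⟩
        · subst h
          exact Or.inl (Or.inl (Or.inl (Or.inr ⟨i,
            by simp [sup_eq_left.2 (inf_le_right : V ⊓ W i ≤ W i)]⟩)))
  haveI : Finite (WithBot (Fin t)) := inferInstanceAs (Finite (Option (Fin t)))
  have hfin : E'.Finite := by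
    have hsub2 : E' ⊆ (Set.range fun i : WithBot (Fin t) => V ⊔ Wb W i) ∪
        (Set.range fun p : WithBot (Fin t) × Fin t => Wb W p.1 ⊔ (V ⊓ W p.2)) := by
      rintro U (⟨i, rfl⟩ | ⟨i, j, _, rfl⟩)
      · exact Or.inl ⟨i, rfl⟩
      · exact Or.inr ⟨(i, j), rfl⟩
    exact ((Set.finite_range _).union (Set.finite_range _)).subset hsub2
  have hinter : (⋂₀ {S : Set (Submodule ℝ (Fin d → ℝ)) |
      ({V} ∪ Set.range W) ⊆ S ∧ ∀ A ∈ S, ∀ B ∈ S, A ⊔ B ∈ S ∧ A ⊓ B ∈ S}) ⊆ E' :=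
    Set.sInter_subset_of_mem hE'mem
  exact ⟨hfin.subset hinter, hinter.trans hsub⟩
end
end

section
/- Let Y_1, ..., Y_t be linear subspaces of ℝ^d with ℝ^d = Y_1 ⊕ ... ⊕ Y_t (internal direct sum), fix a basis {v_i^1, ..., v_i^{j_i}} of each Y_i, and set W_0 = {0}, W_i = Y_1 + ... + Y_i for 1 ≤ i ≤ t. Let L : ℝ^d → ℝ^{d'} be a linear map and set c_i = dim L(W_i) − dim L(W_{i−1}). For y ∈ ℝ^t let S_y = {∑_{i=1}^t ∑_{j=1}^{j_i} a_i^j v_i^j : 0 ≤ a_i^j ≤ e^{y_i}}. Then there exists C < ∞, depending only on L and the chosen bases, such that for every y = (y_1,...,y_t) ∈ ℝ^t with y_1 ≥ y_2 ≥ ... ≥ y_t, the Lebesgue measure of L(S_y) in ℝ^{d'} satisfies |L(S_y)| ≤ C · e^{∑_{i=1}^t y_i c_i}. -/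
open MeasureTheory

noncomputable section

/-- The parallelepiped `S_y` spanned by the basis vectors `v i j` of the subspaces `Y i`,
with side lengths `e^{y_i}` in the directions coming from `Y i`. -/
def Spar (d t : ℕ) (m : Fin t → ℕ) (Y : Fin t → Submodule ℝ (Fin d → ℝ))
    (v : (i : Fin t) → Module.Basis (Fin (m i)) ℝ (Y i)) (y : Fin t → ℝ) : Set (Fin d → ℝ) :=
  {x | ∃ a : (i : Fin t) → Fin (m i) → ℝ,
    (∀ i j, a i j ∈ Set.Icc (0 : ℝ) (Real.exp (y i))) ∧
    x = ∑ i, ∑ j, a i j • ((v i j : Fin d → ℝ))}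

private lemma exists_compl_of_le' {K V : Type*} [Field K] [AddCommGroup V] [Module K V]
    {p q : Submodule K V} (h : p ≤ q) :
    ∃ r : Submodule K V, Disjoint p r ∧ p ⊔ r = q := by
  obtain ⟨r', hr'⟩ := Submodule.exists_isCompl (p.comap q.subtype)
  refine ⟨r'.map q.subtype, ?_, ?_⟩
  · rw [Submodule.disjoint_def]
    intro x hxp hxm
    obtain ⟨z, hz, rfl⟩ := Submodule.mem_map.mp hxm
    have hz2 : z ∈ p.comap q.subtype := hxp
    have h0 := Submodule.disjoint_def.mp hr'.disjoint z hz2 hz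
    simp [h0]
  · have h2 := congrArg (Submodule.map q.subtype) hr'.sup_eq_top
    rwa [Submodule.map_sup, Submodule.map_comap_subtype, Submodule.map_top,
      Submodule.range_subtype, inf_eq_right.mpr h] at h2

theorem stmt12 (d d' t : ℕ) (Y : Fin t → Submodule ℝ (Fin d → ℝ))
    (hY : DirectSum.IsInternal Y)
    (m : Fin t → ℕ) (hm : ∀ i, m i = Module.finrank ℝ (Y i))
    (v : (i : Fin t) → Module.Basis (Fin (m i)) ℝ (Y i))
    (L : (Fin d → ℝ) →ₗ[ℝ] (Fin d' → ℝ))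
    (W : Fin (t + 1) → Submodule ℝ (Fin d → ℝ))
    (hW0 : W 0 = ⊥)
    (hWsucc : ∀ i : Fin t, W i.succ = W i.castSucc ⊔ Y i)
    (c : Fin t → ℝ)
    (hc : ∀ i : Fin t, c i = (Module.finrank ℝ ((W i.succ).map L) : ℝ)
        - (Module.finrank ℝ ((W i.castSucc).map L) : ℝ)) :
    ∃ C : ℝ, 0 < C ∧ ∀ y : Fin t → ℝ, Antitone y →
      volume (L '' Spar d t m Y v y) ≤ ENNReal.ofReal (C * Real.exp (∑ i, y i * c i)) := by
  classical
  by_cases hsurj : LinearMap.range L = ⊤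
  case neg =>
    refine ⟨1, one_pos, fun y hy => ?_⟩
    have h1 : L '' Spar d t m Y v y ⊆ (LinearMap.range L : Submodule ℝ (Fin d' → ℝ)) := by
      rintro x' ⟨x, -, rfl⟩; exact LinearMap.mem_range_self L x
    have h2 : volume ((LinearMap.range L : Submodule ℝ (Fin d' → ℝ)) : Set (Fin d' → ℝ)) = 0 :=
      Measure.addHaar_submodule _ _ hsurj
    exact le_trans (le_trans (measure_mono h1) h2.le) zero_le
  case pos =>
  obtain ⟨U, hU⟩ : ∃ U : Fin (t + 1) → Submodule ℝ (Fin d' → ℝ),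
      ∀ k, U k = (W k).map L := ⟨_, fun _ => rfl⟩
  have hWmono : Monotone W := Fin.monotone_iff_le_succ.mpr fun i => by
    rw [hWsucc i]; exact le_sup_left
  have hUle : ∀ i : Fin t, U i.castSucc ≤ U i.succ := fun i => by
    rw [hU, hU]; exact Submodule.map_mono (hWmono (Fin.castSucc_le_succ i))
  have hU0 : U 0 = ⊥ := by rw [hU, hW0, Submodule.map_bot]
  have hWlast : W (Fin.last t) = ⊤ := by
    refine le_antisymm le_top ?_
    rw [← hY.submodule_iSup_eq_top]
    refine iSup_le fun i => le_trans ?_ (hWmono (Fin.le_last i.succ))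
    rw [hWsucc i]; exact le_sup_right
  have hUlast : U (Fin.last t) = ⊤ := by
    rw [hU, hWlast, Submodule.map_top, hsurj]
  choose V hVdisj hVsup using fun i : Fin t => exists_compl_of_le' (hUle i)
  set n : Fin t → ℕ := fun i => Module.finrank ℝ (V i) with hn
  let b : (i : Fin t) → Module.Basis (Fin (n i)) ℝ (V i) := fun i => Module.finBasis ℝ (V i)
  set u : (Σ i : Fin t, Fin (n i)) → (Fin d' → ℝ) := fun σ => ((b σ.1 σ.2 : V σ.1) : Fin d' → ℝ)
    with hu
  have hrank : ∀ i : Fin t,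
      Module.finrank ℝ (U i.succ) = Module.finrank ℝ (U i.castSucc) + n i := by
    intro i
    have h1 := Submodule.finrank_sup_add_finrank_inf_eq (U i.castSucc) (V i)
    rw [hVsup i, (hVdisj i).eq_bot] at h1
    simpa using h1
  have hVspan : ∀ i : Fin t, V i =
      Submodule.span ℝ (Set.range fun j : Fin (n i) => ((b i j : V i) : Fin d' → ℝ)) := by
    intro i
    conv_lhs => rw [← Submodule.range_subtype (V i), LinearMap.range_eq_map,
      ← (b i).span_eq, Submodule.map_span]
    rw [← Set.range_comp]
    rfl
  have hspan : ∀ k : ℕ, (hk : k ≤ t) → U ⟨k, Nat.lt_succ_of_le hk⟩ ≤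
      Submodule.span ℝ (u '' {σ : Σ i : Fin t, Fin (n i) | (σ.1 : ℕ) < k}) := by
    intro k
    induction k with
    | zero =>
      intro hk
      have h0 : U ⟨0, Nat.lt_succ_of_le hk⟩ = ⊥ := hU0
      rw [h0]; exact bot_le
    | succ k ih =>
      intro hk
      have hkt : k < t := hk
      set i : Fin t := ⟨k, hkt⟩ with hi
      have hsucc : (⟨k + 1, Nat.lt_succ_of_le hk⟩ : Fin (t + 1)) = i.succ := rfl
      rw [hsucc, ← hVsup i]
      apply sup_le
      · exact le_trans (ih hkt.le) (Submodule.span_mono (Set.image_mono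
          (fun σ hσ => Nat.lt_succ_of_lt hσ)))
      · rw [hVspan i]
        refine Submodule.span_le.mpr ?_
        rintro x ⟨j, rfl⟩
        exact Submodule.subset_span ⟨⟨i, j⟩, Nat.lt_succ_self k, rfl⟩
  have hUcard : ∀ k : ℕ, (hk : k ≤ t) → Module.finrank ℝ (U ⟨k, Nat.lt_succ_of_le hk⟩) =
      ∑ j ∈ Finset.range k, (if h : j < t then n ⟨j, h⟩ else 0) := by
    intro k
    induction k with
    | zero =>
      intro hk
      have h0 : U ⟨0, Nat.lt_succ_of_le hk⟩ = ⊥ := hU0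
      rw [h0]; simp
    | succ k ih =>
      intro hk
      have hkt : k < t := hk
      have h1 : U ⟨k + 1, Nat.lt_succ_of_le hk⟩ = U (⟨k, hkt⟩ : Fin t).succ := rfl
      have h2 : U ((⟨k, hkt⟩ : Fin t).castSucc) = U ⟨k, Nat.lt_succ_of_le hkt.le⟩ := rfl
      rw [h1, hrank ⟨k, hkt⟩, h2, ih hkt.le, Finset.sum_range_succ, dif_pos hkt]
  have hsum : ∑ i : Fin t, n i = d' := by
    have h1 := hUcard t le_rfl
    have h2 : U ⟨t, Nat.lt_succ_of_le le_rfl⟩ = ⊤ := hUlast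
    rw [h2, finrank_top, Module.finrank_fin_fun] at h1
    calc ∑ i : Fin t, n i
        = ∑ i : Fin t, (if h : (i : ℕ) < t then n ⟨(i : ℕ), h⟩ else 0) := by
          refine Finset.sum_congr rfl fun i _ => ?_
          rw [dif_pos i.2]
      _ = ∑ j ∈ Finset.range t, (if h : j < t then n ⟨j, h⟩ else 0) :=
          Fin.sum_univ_eq_sum_range (fun j => if h : j < t then n ⟨j, h⟩ else 0) t
      _ = d' := h1.symm
  have hcard : Fintype.card (Σ i : Fin t, Fin (n i)) = d' := by
    simp [Fintype.card_sigma, hsum]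
  have hfr : Fintype.card (Σ i : Fin t, Fin (n i)) = Module.finrank ℝ (Fin d' → ℝ) := by
    rw [hcard, Module.finrank_fin_fun]
  have hspan_top : ⊤ ≤ Submodule.span ℝ (Set.range u) := by
    rw [← hUlast]
    exact le_trans (hspan t le_rfl) (Submodule.span_mono (Set.image_subset_range _ _))
  set B : Module.Basis (Σ i : Fin t, Fin (n i)) ℝ (Fin d' → ℝ) :=
    basisOfTopLeSpanOfCardEqFinrank u hspan_top hfr with hBdef
  have hB : ⇑B = u := coe_basisOfTopLeSpanOfCardEqFinrank u hspan_top hfr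
  have hrepr0 : ∀ (i : Fin t) (j : Fin (m i)) (σ : Σ i : Fin t, Fin (n i)),
      (i : ℕ) < (σ.1 : ℕ) → B.repr (L (v i j)) σ = 0 := by
    intro i j σ hij
    have hmem : L (v i j) ∈ U i.succ := by
      rw [hU]
      refine Submodule.mem_map_of_mem ?_
      rw [hWsucc i]
      exact Submodule.mem_sup_right (v i j).2
    have hle : U i.succ ≤ Submodule.span ℝ
        (⇑B '' {σ' : Σ i : Fin t, Fin (n i) | (σ'.1 : ℕ) < (i : ℕ) + 1}) := by
      rw [hB]
      exact hspan ((i : ℕ) + 1) i.2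
    have hsupp := (B.mem_span_image).mp (hle hmem)
    by_contra h0
    have hσ : σ ∈ (B.repr (L (v i j))).support := Finsupp.mem_support_iff.mpr h0
    have := hsupp hσ
    simp only [Set.mem_setOf_eq] at this
    omega
  set C0 : ℝ := 1 + ∑ σ : Σ i : Fin t, Fin (n i), ∑ i : Fin t, ∑ j : Fin (m i),
    |B.repr (L (v i j)) σ| with hC0
  have hC0ge1 : 1 ≤ C0 := by
    rw [hC0]
    have : (0:ℝ) ≤ ∑ σ : Σ i : Fin t, Fin (n i), ∑ i : Fin t, ∑ j : Fin (m i),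
        |B.repr (L (v i j)) σ| := by positivity
    linarith
  have hC0pos : (0:ℝ) < C0 := lt_of_lt_of_le one_pos hC0ge1
  have hC0ge : ∀ σ, ∑ i : Fin t, ∑ j : Fin (m i), |B.repr (L (v i j)) σ| ≤ C0 := by
    intro σ
    rw [hC0]
    have h1 : ∑ i : Fin t, ∑ j : Fin (m i), |B.repr (L (v i j)) σ|
        ≤ ∑ σ' : Σ i : Fin t, Fin (n i), ∑ i : Fin t, ∑ j : Fin (m i),
          |B.repr (L (v i j)) σ'| :=
      Finset.single_le_sum (f := fun σ' : Σ i : Fin t, Fin (n i) =>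
        ∑ i : Fin t, ∑ j : Fin (m i), |B.repr (L (v i j)) σ'|)
        (fun σ' _ => by positivity) (Finset.mem_univ σ)
    linarith
  have hcn : ∀ i : Fin t, c i = (n i : ℝ) := by
    intro i
    rw [hc i, ← hU, ← hU, hrank i]
    push_cast
    ring
  let e : (Σ i : Fin t, Fin (n i)) ≃ Fin d' := Fintype.equivFinOfCardEq hcard
  let B' : Module.Basis (Fin d') ℝ (Fin d' → ℝ) := B.reindex e
  let φ : (Fin d' → ℝ) ≃ₗ[ℝ] (Fin d' → ℝ) := B'.equivFun
  set D : ℝ := |LinearMap.det (φ.symm.toLinearMap)| with hD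
  have hD0 : 0 ≤ D := hD ▸ abs_nonneg _
  have hpow : (0:ℝ) < (2 * C0) ^ d' := pow_pos (by linarith) _
  refine ⟨(D + 1) * (2 * C0) ^ d', by nlinarith, fun y hy => ?_⟩
  set R : Fin d' → ℝ := fun ℓ => C0 * Real.exp (y (e.symm ℓ).1) with hR
  set box : Set (Fin d' → ℝ) := Set.univ.pi fun ℓ => Set.Icc (-R ℓ) (R ℓ) with hbox
  have himage : L '' Spar d t m Y v y ⊆ φ.symm.toLinearMap '' box := by
    rintro x' ⟨x, ⟨a, ha, rfl⟩, rfl⟩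
    refine ⟨φ (L (∑ i, ∑ j, a i j • ((v i j : Fin d → ℝ)))), ?_, φ.symm_apply_apply _⟩
    intro ℓ _
    have hrepr : ∀ σ : Σ i : Fin t, Fin (n i),
        B.repr (L (∑ i, ∑ j, a i j • ((v i j : Fin d → ℝ)))) σ
        = ∑ i, ∑ j, a i j * B.repr (L (v i j)) σ := by
      intro σ
      simp only [map_sum, _root_.map_smul, Finsupp.coe_finset_sum, Finset.sum_apply,
        Finsupp.coe_smul, Pi.smul_apply, smul_eq_mul]
    have habs : ∀ σ : Σ i : Fin t, Fin (n i),
        |B.repr (L (∑ i, ∑ j, a i j • ((v i j : Fin d → ℝ)))) σ|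
          ≤ C0 * Real.exp (y σ.1) := by
      intro σ
      rw [hrepr σ]
      calc |∑ i, ∑ j, a i j * B.repr (L (v i j)) σ|
          ≤ ∑ i, |∑ j, a i j * B.repr (L (v i j)) σ| := Finset.abs_sum_le_sum_abs _ _
        _ ≤ ∑ i, ∑ j, |a i j * B.repr (L (v i j)) σ| :=
            Finset.sum_le_sum fun i _ => Finset.abs_sum_le_sum_abs _ _
        _ ≤ ∑ i, ∑ j, Real.exp (y σ.1) * |B.repr (L (v i j)) σ| := by
            refine Finset.sum_le_sum fun i _ => Finset.sum_le_sum fun j _ => ?_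
            rcases lt_or_ge (i : ℕ) (σ.1 : ℕ) with h | h
            · rw [hrepr0 i j σ h]
              simp
            · rw [abs_mul]
              refine mul_le_mul_of_nonneg_right ?_ (abs_nonneg _)
              have h1 : |a i j| ≤ Real.exp (y i) := by
                rw [abs_of_nonneg (ha i j).1]
                exact (ha i j).2
              refine le_trans h1 (Real.exp_le_exp.mpr (hy (show σ.1 ≤ i from h)))
        _ = Real.exp (y σ.1) * ∑ i, ∑ j, |B.repr (L (v i j)) σ| := by
            rw [Finset.mul_sum]
            exact Finset.sum_congr rfl fun i _ => (Finset.mul_sum _ _ _).symm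
        _ ≤ Real.exp (y σ.1) * C0 :=
            mul_le_mul_of_nonneg_left (hC0ge σ) (Real.exp_pos _).le
        _ = C0 * Real.exp (y σ.1) := mul_comm _ _
    have hφ : φ (L (∑ i, ∑ j, a i j • ((v i j : Fin d → ℝ)))) ℓ
        = B.repr (L (∑ i, ∑ j, a i j • ((v i j : Fin d → ℝ)))) (e.symm ℓ) := by
      show B'.equivFun _ ℓ = _
      rw [Module.Basis.equivFun_apply, Module.Basis.repr_reindex_apply]
    rw [hφ]
    exact abs_le.mp (habs (e.symm ℓ))
  have hboxvol : volume box
      = ENNReal.ofReal ((2 * C0) ^ d' * Real.exp (∑ i, y i * c i)) := by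
    rw [hbox, volume_pi_pi]
    simp_rw [Real.volume_Icc]
    rw [← ENNReal.ofReal_prod_of_nonneg (fun ℓ _ => by
      simp only [hR]
      nlinarith [hC0pos, Real.exp_pos (y (e.symm ℓ).fst)])]
    congr 1
    have hRl : ∀ ℓ : Fin d', R ℓ - (-R ℓ) = 2 * C0 * Real.exp (y (e.symm ℓ).1) := by
      intro ℓ; simp only [hR]; ring
    rw [Finset.prod_congr rfl fun ℓ _ => hRl ℓ, Finset.prod_mul_distrib,
      Finset.prod_const, ← Real.exp_sum, Finset.card_univ, Fintype.card_fin]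
    have hsum2 : ∑ ℓ : Fin d', y (e.symm ℓ).1 = ∑ i, y i * c i := by
      rw [Equiv.sum_comp e.symm (fun σ : Σ i : Fin t, Fin (n i) => y σ.1)]
      rw [← Finset.univ_sigma_univ, Finset.sum_sigma]
      refine Finset.sum_congr rfl fun i _ => ?_
      show ∑ _j : Fin (n i), y i = y i * c i
      rw [Finset.sum_const, Finset.card_univ, Fintype.card_fin, hcn i,
        nsmul_eq_mul]
      ring
    rw [hsum2]
  calc volume (L '' Spar d t m Y v y)
      ≤ volume (φ.symm.toLinearMap '' box) := measure_mono himage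
    _ = ENNReal.ofReal D * volume box := by
        rw [Measure.addHaar_image_linearMap, hD]
    _ = ENNReal.ofReal D * ENNReal.ofReal ((2 * C0) ^ d' * Real.exp (∑ i, y i * c i)) := by
        rw [hboxvol]
    _ = ENNReal.ofReal (D * ((2 * C0) ^ d' * Real.exp (∑ i, y i * c i))) := by
        rw [← ENNReal.ofReal_mul hD0]
    _ ≤ ENNReal.ofReal ((D + 1) * (2 * C0) ^ d' * Real.exp (∑ i, y i * c i)) := by
        refine ENNReal.ofReal_le_ofReal ?_
        have h2 := Real.exp_pos (∑ i, y i * c i)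
        nlinarith [hpow, hD0, h2]
end
end

section
/- Let F : ℝ³ → ℝ be continuous and suppose Δ₃(F; a, b, c, d, e, f) ≥ 0 for all real numbers a ≤ b, c ≤ d, e ≤ f. Then there exists a nonnegative Borel measure μ on ℝ³ such that for all a ≤ b, c ≤ d, e ≤ f, μ([a,b] × [c,d] × [e,f]) = Δ₃(F; a, b, c, d, e, f). -/
open MeasureTheory Set Filter Topology
open scoped ENNReal NNReal
noncomputable section

/-- The third-order difference `Δ₃(F; a, b, c, d, e, f)`. -/
def Delta3 (F : ℝ → ℝ → ℝ → ℝ) (a b c d e f : ℝ) : ℝ :=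
  F b d f - F a d f - F b c f - F b d e + F b c e + F a d e + F a c f - F a c e

namespace Stmt13

def D (F : ℝ → ℝ → ℝ → ℝ) (u v : ℝ × ℝ × ℝ) : ℝ :=
  Delta3 F u.1 v.1 u.2.1 v.2.1 u.2.2 v.2.2

variable {F : ℝ → ℝ → ℝ → ℝ}

section Algebra

lemma Delta3_add_x (a m b c d e f : ℝ) :
    Delta3 F a m c d e f + Delta3 F m b c d e f = Delta3 F a b c d e f := by
  unfold Delta3; ring

lemma Delta3_add_y (a b c m d e f : ℝ) :
    Delta3 F a b c m e f + Delta3 F a b m d e f = Delta3 F a b c d e f := by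
  unfold Delta3; ring

lemma Delta3_add_z (a b c d e m f : ℝ) :
    Delta3 F a b c d e m + Delta3 F a b c d m f = Delta3 F a b c d e f := by
  unfold Delta3; ring

lemma Delta3_self_x (a c d e f : ℝ) : Delta3 F a a c d e f = 0 := by unfold Delta3; ring
lemma Delta3_self_y (a b c e f : ℝ) : Delta3 F a b c c e f = 0 := by unfold Delta3; ring
lemma Delta3_self_z (a b c d e : ℝ) : Delta3 F a b c d e e = 0 := by unfold Delta3; ring

end Algebra

section Mono

variable (hΔ : ∀ a b c d e f : ℝ, a ≤ b → c ≤ d → e ≤ f → 0 ≤ Delta3 F a b c d e f)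
include hΔ

lemma mono_x {a' a b b' c d e f : ℝ} (h1 : a' ≤ a) (h2 : a ≤ b) (h3 : b ≤ b')
    (hcd : c ≤ d) (hef : e ≤ f) : Delta3 F a b c d e f ≤ Delta3 F a' b' c d e f := by
  have e1 := Delta3_add_x (F := F) a' a b' c d e f
  have e2 := Delta3_add_x (F := F) a b b' c d e f
  nlinarith [hΔ a' a c d e f h1 hcd hef, hΔ b b' c d e f h3 hcd hef]

lemma mono_y {a b c' c d d' e f : ℝ} (h1 : c' ≤ c) (h2 : c ≤ d) (h3 : d ≤ d')
    (hab : a ≤ b) (hef : e ≤ f) : Delta3 F a b c d e f ≤ Delta3 F a b c' d' e f := by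
  have e1 := Delta3_add_y (F := F) a b c' c d' e f
  have e2 := Delta3_add_y (F := F) a b c d d' e f
  nlinarith [hΔ a b c' c e f hab h1 hef, hΔ a b d d' e f hab h3 hef]

lemma mono_z {a b c d e' e f f' : ℝ} (h1 : e' ≤ e) (h2 : e ≤ f) (h3 : f ≤ f')
    (hab : a ≤ b) (hcd : c ≤ d) : Delta3 F a b c d e f ≤ Delta3 F a b c d e' f' := by
  have e1 := Delta3_add_z (F := F) a b c d e' e f'
  have e2 := Delta3_add_z (F := F) a b c d e f f'
  nlinarith [hΔ a b c d e' e hab hcd h1, hΔ a b c d f f' hab hcd h3]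

/-- Monotonicity of `D` under inclusion of (well-ordered) boxes. -/
lemma D_mono {u' u v v' : ℝ × ℝ × ℝ} (h1 : u' ≤ u) (h2 : u ≤ v) (h3 : v ≤ v') :
    D F u v ≤ D F u' v' := by
  obtain ⟨u'1, u'2, u'3⟩ : _ ∧ _ ∧ _ := ⟨h1.1, h1.2.1, h1.2.2⟩
  obtain ⟨h21, h22, h23⟩ : _ ∧ _ ∧ _ := ⟨h2.1, h2.2.1, h2.2.2⟩
  obtain ⟨h31, h32, h33⟩ : _ ∧ _ ∧ _ := ⟨h3.1, h3.2.1, h3.2.2⟩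
  calc D F u v ≤ Delta3 F u'.1 v'.1 u.2.1 v.2.1 u.2.2 v.2.2 :=
        mono_x hΔ u'1 h21 h31 h22 h23
    _ ≤ Delta3 F u'.1 v'.1 u'.2.1 v'.2.1 u.2.2 v.2.2 :=
        mono_y hΔ u'2 h22 h32 (u'1.trans (h21.trans h31)) h23
    _ ≤ D F u' v' :=
        mono_z hΔ u'3 h23 h33 (u'1.trans (h21.trans h31)) (u'2.trans (h22.trans h32))

lemma D_nonneg {u v : ℝ × ℝ × ℝ} (h : u ≤ v) : 0 ≤ D F u v :=
  hΔ _ _ _ _ _ _ h.1 h.2.1 h.2.2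

end Mono

section Cont

variable (hFc : Continuous fun p : ℝ × ℝ × ℝ => F p.1 p.2.1 p.2.2)
include hFc

lemma contF {α : Type*} [TopologicalSpace α] {g₁ g₂ g₃ : α → ℝ}
    (h₁ : Continuous g₁) (h₂ : Continuous g₂) (h₃ : Continuous g₃) :
    Continuous fun t => F (g₁ t) (g₂ t) (g₃ t) :=
  hFc.comp (h₁.prodMk (h₂.prodMk h₃))

lemma contDelta {α : Type*} [TopologicalSpace α] {g₁ g₂ g₃ g₄ g₅ g₆ : α → ℝ}
    (h₁ : Continuous g₁) (h₂ : Continuous g₂) (h₃ : Continuous g₃)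
    (h₄ : Continuous g₄) (h₅ : Continuous g₅) (h₆ : Continuous g₆) :
    Continuous fun t => Delta3 F (g₁ t) (g₂ t) (g₃ t) (g₄ t) (g₅ t) (g₆ t) := by
  unfold Delta3
  exact ((((((((contF hFc h₂ h₄ h₆).sub (contF hFc h₁ h₄ h₆)).sub
    (contF hFc h₂ h₃ h₆)).sub (contF hFc h₂ h₄ h₅)).add
    (contF hFc h₂ h₃ h₅)).add (contF hFc h₁ h₄ h₅)).add
    (contF hFc h₁ h₃ h₆)).sub (contF hFc h₁ h₃ h₅))

end Cont

lemma tele (φ : ℤ → ℝ) {m M : ℤ} (h : m ≤ M) :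
    ∑ i ∈ Finset.Ico m M, (φ (i + 1) - φ i) = φ M - φ m := by
  refine Int.le_induction (motive := fun M _ => ∑ i ∈ Finset.Ico m M, (φ (i + 1) - φ i) = φ M - φ m)
    ?_ (fun n hn ih => ?_) M h
  · simp
  · show ∑ i ∈ Finset.Ico m (n + 1), (φ (i + 1) - φ i) = φ (n + 1) - φ m
    have hs : Finset.Ico m (n + 1) = insert n (Finset.Ico m n) := by
      ext x; simp only [Finset.mem_Ico, Finset.mem_insert]; omega
    rw [hs, Finset.sum_insert (by simp [Finset.mem_Ico])]
    rw [ih]; ring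

variable {F : ℝ → ℝ → ℝ → ℝ}

/-! ### Telescoping sums of `Delta3` over grids -/

lemma sum_z (a b c d : ℝ) (h : ℝ) {m M : ℤ} (hmM : m ≤ M + 1) :
    ∑ i ∈ Finset.Icc m M, Delta3 F a b c d (i * h) (i * h + h)
      = Delta3 F a b c d (m * h) (M * h + h) := by
  have hIcc : Finset.Icc m M = Finset.Ico m (M + 1) := by
    ext x; simp only [Finset.mem_Icc, Finset.mem_Ico]; omega
  rw [hIcc]
  calc ∑ i ∈ Finset.Ico m (M + 1), Delta3 F a b c d (↑i * h) (↑i * h + h)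
      = ∑ i ∈ Finset.Ico m (M + 1),
          ((fun i : ℤ => F b d (i * h) - F a d (i * h) - F b c (i * h) + F a c (i * h)) (i + 1)
          - (fun i : ℤ => F b d (i * h) - F a d (i * h) - F b c (i * h) + F a c (i * h)) i) := by
        refine Finset.sum_congr rfl fun i _ => ?_
        simp only [Delta3]
        push_cast
        ring_nf
    _ = Delta3 F a b c d (↑m * h) (↑M * h + h) := by
        rw [tele (fun i : ℤ => F b d (i * h) - F a d (i * h) - F b c (i * h) + F a c (i * h)) hmM]
        simp only [Delta3]
        push_cast
        ring

lemma sum_y (a b e f : ℝ) (h : ℝ) {m M : ℤ} (hmM : m ≤ M + 1) :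
    ∑ i ∈ Finset.Icc m M, Delta3 F a b (i * h) (i * h + h) e f
      = Delta3 F a b (m * h) (M * h + h) e f := by
  have hIcc : Finset.Icc m M = Finset.Ico m (M + 1) := by
    ext x; simp only [Finset.mem_Icc, Finset.mem_Ico]; omega
  rw [hIcc]
  calc ∑ i ∈ Finset.Ico m (M + 1), Delta3 F a b (↑i * h) (↑i * h + h) e f
      = ∑ i ∈ Finset.Ico m (M + 1),
          ((fun i : ℤ => F b (i * h) f - F a (i * h) f - F b (i * h) e + F a (i * h) e) (i + 1)
          - (fun i : ℤ => F b (i * h) f - F a (i * h) f - F b (i * h) e + F a (i * h) e) i) := by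
        refine Finset.sum_congr rfl fun i _ => ?_
        simp only [Delta3]
        push_cast
        ring_nf
    _ = Delta3 F a b (↑m * h) (↑M * h + h) e f := by
        rw [tele (fun i : ℤ => F b (i * h) f - F a (i * h) f - F b (i * h) e + F a (i * h) e) hmM]
        simp only [Delta3]
        push_cast
        ring

lemma sum_x (c d e f : ℝ) (h : ℝ) {m M : ℤ} (hmM : m ≤ M + 1) :
    ∑ i ∈ Finset.Icc m M, Delta3 F (i * h) (i * h + h) c d e f
      = Delta3 F (m * h) (M * h + h) c d e f := by
  have hIcc : Finset.Icc m M = Finset.Ico m (M + 1) := by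
    ext x; simp only [Finset.mem_Icc, Finset.mem_Ico]; omega
  rw [hIcc]
  calc ∑ i ∈ Finset.Ico m (M + 1), Delta3 F (↑i * h) (↑i * h + h) c d e f
      = ∑ i ∈ Finset.Ico m (M + 1),
          ((fun i : ℤ => F (i * h) d f - F (i * h) c f - F (i * h) d e + F (i * h) c e) (i + 1)
          - (fun i : ℤ => F (i * h) d f - F (i * h) c f - F (i * h) d e + F (i * h) c e) i) := by
        refine Finset.sum_congr rfl fun i _ => ?_
        simp only [Delta3]
        push_cast
        ring_nf
    _ = Delta3 F (↑m * h) (↑M * h + h) c d e f := by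
        rw [tele (fun i : ℤ => F (i * h) d f - F (i * h) c f - F (i * h) d e + F (i * h) c e) hmM]
        simp only [Delta3]
        push_cast
        ring

def cellD (F : ℝ → ℝ → ℝ → ℝ) (h : ℝ) (k : ℤ × ℤ × ℤ) : ℝ :=
  Delta3 F (k.1 * h) (k.1 * h + h) (k.2.1 * h) (k.2.1 * h + h) (k.2.2 * h) (k.2.2 * h + h)

/-- Sum of `cellD` over a rectangular block of cells. -/
lemma sum_cellD (h : ℝ) {m₁ M₁ m₂ M₂ m₃ M₃ : ℤ}
    (h1 : m₁ ≤ M₁ + 1) (h2 : m₂ ≤ M₂ + 1) (h3 : m₃ ≤ M₃ + 1) :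
    ∑ k ∈ (Finset.Icc m₁ M₁) ×ˢ (Finset.Icc m₂ M₂) ×ˢ (Finset.Icc m₃ M₃), cellD F h k
      = Delta3 F (m₁ * h) (M₁ * h + h) (m₂ * h) (M₂ * h + h) (m₃ * h) (M₃ * h + h) := by
  rw [Finset.sum_product]
  simp only [cellD]
  have inner : ∀ k₁ : ℤ,
      (∑ k₂ ∈ (Finset.Icc m₂ M₂) ×ˢ (Finset.Icc m₃ M₃), Delta3 F (k₁ * h) (k₁ * h + h)
        (k₂.1 * h) (k₂.1 * h + h) (k₂.2 * h) (k₂.2 * h + h))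
      = Delta3 F (k₁ * h) (k₁ * h + h) (m₂ * h) (M₂ * h + h) (m₃ * h) (M₃ * h + h) := by
    intro k₁
    rw [Finset.sum_product]
    have step1 : ∀ k₂ : ℤ, (∑ k₃ ∈ Finset.Icc m₃ M₃, Delta3 F (k₁ * h) (k₁ * h + h)
        (k₂ * h) (k₂ * h + h) (k₃ * h) (k₃ * h + h))
        = Delta3 F (k₁ * h) (k₁ * h + h) (k₂ * h) (k₂ * h + h) (m₃ * h) (M₃ * h + h) :=
      fun k₂ => sum_z _ _ _ _ h h3
    rw [Finset.sum_congr rfl fun k₂ _ => step1 k₂]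
    exact sum_y _ _ _ _ h h2
  rw [Finset.sum_congr rfl fun k₁ _ => inner k₁]
  exact sum_x _ _ _ _ h h1

end Stmt13

namespace Chunk3

variable {F : ℝ → ℝ → ℝ → ℝ}
open Stmt13

/-! ### 1D grid bounds -/

lemma lb {h : ℝ} (hh : 0 < h) (x : ℝ) : x - h ≤ ((⌈x / h⌉ - 1 : ℤ) : ℝ) * h := by
  have h1 : x / h ≤ (⌈x / h⌉ : ℝ) := Int.le_ceil _
  have := mul_le_mul_of_nonneg_right h1 hh.le
  rw [div_mul_cancel₀ _ hh.ne'] at this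
  push_cast
  nlinarith

lemma lb' {h : ℝ} (hh : 0 < h) (x : ℝ) : ((⌈x / h⌉ - 1 : ℤ) : ℝ) * h < x := by
  have h1 : (⌈x / h⌉ : ℝ) < x / h + 1 := Int.ceil_lt_add_one _
  have := mul_lt_mul_of_pos_right h1 hh
  rw [add_mul, div_mul_cancel₀ _ hh.ne'] at this
  push_cast
  nlinarith

lemma ub {h : ℝ} (hh : 0 < h) (y : ℝ) : ((⌊y / h⌋ - 1 : ℤ) : ℝ) * h + h ≤ y := by
  have h1 : ((⌊y / h⌋ : ℤ) : ℝ) ≤ y / h := Int.floor_le _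
  have := mul_le_mul_of_nonneg_right h1 hh.le
  rw [div_mul_cancel₀ _ hh.ne'] at this
  push_cast
  nlinarith

lemma ub' {h : ℝ} (hh : 0 < h) (y : ℝ) : y - h < ((⌊y / h⌋ - 1 : ℤ) : ℝ) * h + h := by
  have h1 : y / h - 1 < ((⌊y / h⌋ : ℤ) : ℝ) := Int.sub_one_lt_floor _
  have := mul_lt_mul_of_pos_right h1 hh
  rw [sub_mul, one_mul, div_mul_cancel₀ _ hh.ne'] at this
  push_cast
  nlinarith

lemma coord_iff {h : ℝ} (hh : 0 < h) (x y : ℝ) (k : ℤ) :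
    (x ≤ k * h + h ∧ k * h + h ≤ y) ↔ (⌈x / h⌉ - 1 ≤ k ∧ k ≤ ⌊y / h⌋ - 1) := by
  constructor
  · rintro ⟨hx, hy⟩
    constructor
    · have h1 : x / h ≤ ((k + 1 : ℤ) : ℝ) := by
        rw [div_le_iff₀ hh]; push_cast; linarith
      have := Int.ceil_le.2 h1; omega
    · have h1 : ((k + 1 : ℤ) : ℝ) ≤ y / h := by
        rw [le_div_iff₀ hh]; push_cast; linarith
      have := Int.le_floor.2 h1; omega
  · rintro ⟨h1, h2⟩
    constructor
    · have h1' : (⌈x / h⌉ : ℝ) ≤ ((k + 1 : ℤ) : ℝ) := by exact_mod_cast (by omega : ⌈x / h⌉ ≤ k + 1)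
      have h3 := (Int.le_ceil (x / h)).trans h1'
      rw [div_le_iff₀ hh] at h3
      push_cast at h3
      linarith
    · have h2' : ((k + 1 : ℤ) : ℝ) ≤ (⌊y / h⌋ : ℝ) := by exact_mod_cast (by omega : k + 1 ≤ ⌊y / h⌋)
      have h3 := h2'.trans (Int.floor_le (y / h))
      rw [le_div_iff₀ hh] at h3
      push_cast at h3
      linarith

end Chunk3

namespace Stmt13
open Chunk3

variable {F : ℝ → ℝ → ℝ → ℝ}

def pt (h : ℝ) (k : ℤ × ℤ × ℤ) : ℝ × ℝ × ℝ :=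
  (k.1 * h + h, k.2.1 * h + h, k.2.2 * h + h)

def grid (F : ℝ → ℝ → ℝ → ℝ) (h : ℝ) : Measure (ℝ × ℝ × ℝ) :=
  Measure.sum fun k : ℤ × ℤ × ℤ => ENNReal.ofReal (cellD F h k) • Measure.dirac (pt h k)

def ccBox (u v : ℝ × ℝ × ℝ) : Set (ℝ × ℝ × ℝ) :=
  Icc u.1 v.1 ×ˢ Icc u.2.1 v.2.1 ×ˢ Icc u.2.2 v.2.2

def ocBox (u v : ℝ × ℝ × ℝ) : Set (ℝ × ℝ × ℝ) :=
  Ioc u.1 v.1 ×ˢ Ioc u.2.1 v.2.1 ×ˢ Ioc u.2.2 v.2.2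

def opBox (u v : ℝ × ℝ × ℝ) : Set (ℝ × ℝ × ℝ) :=
  Ioo u.1 v.1 ×ˢ Ioo u.2.1 v.2.1 ×ˢ Ioo u.2.2 v.2.2

lemma measurableSet_ccBox (u v : ℝ × ℝ × ℝ) : MeasurableSet (ccBox u v) :=
  measurableSet_Icc.prod (measurableSet_Icc.prod measurableSet_Icc)

lemma measurableSet_ocBox (u v : ℝ × ℝ × ℝ) : MeasurableSet (ocBox u v) :=
  measurableSet_Ioc.prod (measurableSet_Ioc.prod measurableSet_Ioc)

lemma grid_apply (h : ℝ) {s : Set (ℝ × ℝ × ℝ)} (hs : MeasurableSet s) :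
    grid F h s = ∑' k : ℤ × ℤ × ℤ, ENNReal.ofReal (cellD F h k) * s.indicator 1 (pt h k) := by
  rw [grid, Measure.sum_apply _ hs]
  congr 1
  ext k
  rw [Measure.smul_apply, smul_eq_mul, Measure.dirac_apply' _ hs]

/-- The rectangular block of grid cells whose `pt` lies in `ccBox u v`. -/
def R (h : ℝ) (u v : ℝ × ℝ × ℝ) : Finset (ℤ × ℤ × ℤ) :=
  (Finset.Icc (⌈u.1 / h⌉ - 1) (⌊v.1 / h⌋ - 1)) ×ˢ
    (Finset.Icc (⌈u.2.1 / h⌉ - 1) (⌊v.2.1 / h⌋ - 1)) ×ˢ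
    (Finset.Icc (⌈u.2.2 / h⌉ - 1) (⌊v.2.2 / h⌋ - 1))

lemma pt_mem_iff {h : ℝ} (hh : 0 < h) (u v : ℝ × ℝ × ℝ) (k : ℤ × ℤ × ℤ) :
    pt h k ∈ ccBox u v ↔ k ∈ R h u v := by
  simp only [pt, ccBox, R, Set.mem_prod, Set.mem_Icc, Finset.mem_product, Finset.mem_Icc]
  exact and_congr (coord_iff hh _ _ _) (and_congr (coord_iff hh _ _ _) (coord_iff hh _ _ _))

lemma grid_ccBox {h : ℝ} (hh : 0 < h) (u v : ℝ × ℝ × ℝ) :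
    grid F h (ccBox u v) = ∑ k ∈ R h u v, ENNReal.ofReal (cellD F h k) := by
  rw [grid_apply _ (measurableSet_ccBox u v)]
  rw [tsum_eq_sum (s := R h u v)
    (fun k hk => by
      rw [Set.indicator_of_notMem (fun hmem => hk ((pt_mem_iff hh u v k).1 hmem)), mul_zero])]
  refine Finset.sum_congr rfl fun k hk => ?_
  rw [Set.indicator_of_mem ((pt_mem_iff hh u v k).2 hk)]
  simp

section Bounds

variable (hΔ : ∀ a b c d e f : ℝ, a ≤ b → c ≤ d → e ≤ f → 0 ≤ Delta3 F a b c d e f)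
include hΔ

lemma cellD_nonneg {h : ℝ} (hh : 0 < h) (k : ℤ × ℤ × ℤ) : 0 ≤ cellD F h k :=
  hΔ _ _ _ _ _ _ (by linarith) (by linarith) (by linarith)

lemma grid_ccBox_le {h : ℝ} (hh : 0 < h) {u v : ℝ × ℝ × ℝ} :
    grid F h (ccBox u v)
      ≤ ENNReal.ofReal (Delta3 F (u.1 - h) v.1 (u.2.1 - h) v.2.1 (u.2.2 - h) v.2.2) := by
  rw [grid_ccBox hh]
  by_cases H : ⌈u.1 / h⌉ - 1 ≤ (⌊v.1 / h⌋ - 1) + 1 ∧ ⌈u.2.1 / h⌉ - 1 ≤ (⌊v.2.1 / h⌋ - 1) + 1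
      ∧ ⌈u.2.2 / h⌉ - 1 ≤ (⌊v.2.2 / h⌋ - 1) + 1
  · obtain ⟨H1, H2, H3⟩ := H
    rw [R, ← ENNReal.ofReal_sum_of_nonneg (fun k _ => cellD_nonneg hΔ hh k),
      sum_cellD h H1 H2 H3]
    apply ENNReal.ofReal_le_ofReal
    have o1 : ((⌈u.1 / h⌉ - 1 : ℤ) : ℝ) * h ≤ ((⌊v.1 / h⌋ - 1 : ℤ) : ℝ) * h + h := by
      have : ((⌈u.1 / h⌉ - 1 : ℤ) : ℝ) ≤ ((⌊v.1 / h⌋ - 1 : ℤ) : ℝ) + 1 := by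
        exact_mod_cast (by omega : (⌈u.1 / h⌉ - 1 : ℤ) ≤ (⌊v.1 / h⌋ - 1) + 1)
      nlinarith
    have o2 : ((⌈u.2.1 / h⌉ - 1 : ℤ) : ℝ) * h ≤ ((⌊v.2.1 / h⌋ - 1 : ℤ) : ℝ) * h + h := by
      have : ((⌈u.2.1 / h⌉ - 1 : ℤ) : ℝ) ≤ ((⌊v.2.1 / h⌋ - 1 : ℤ) : ℝ) + 1 := by
        exact_mod_cast (by omega : (⌈u.2.1 / h⌉ - 1 : ℤ) ≤ (⌊v.2.1 / h⌋ - 1) + 1)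
      nlinarith
    have o3 : ((⌈u.2.2 / h⌉ - 1 : ℤ) : ℝ) * h ≤ ((⌊v.2.2 / h⌋ - 1 : ℤ) : ℝ) * h + h := by
      have : ((⌈u.2.2 / h⌉ - 1 : ℤ) : ℝ) ≤ ((⌊v.2.2 / h⌋ - 1 : ℤ) : ℝ) + 1 := by
        exact_mod_cast (by omega : (⌈u.2.2 / h⌉ - 1 : ℤ) ≤ (⌊v.2.2 / h⌋ - 1) + 1)
      nlinarith
    exact D_mono hΔ
      (u' := (u.1 - h, u.2.1 - h, u.2.2 - h))
      (u := (((⌈u.1 / h⌉ - 1 : ℤ) : ℝ) * h, ((⌈u.2.1 / h⌉ - 1 : ℤ) : ℝ) * h,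
        ((⌈u.2.2 / h⌉ - 1 : ℤ) : ℝ) * h))
      (v := (((⌊v.1 / h⌋ - 1 : ℤ) : ℝ) * h + h, ((⌊v.2.1 / h⌋ - 1 : ℤ) : ℝ) * h + h,
        ((⌊v.2.2 / h⌋ - 1 : ℤ) : ℝ) * h + h))
      (v' := v)
      ⟨lb hh u.1, lb hh u.2.1, lb hh u.2.2⟩ ⟨o1, o2, o3⟩ ⟨ub hh v.1, ub hh v.2.1, ub hh v.2.2⟩
  · have hR : R h u v = ∅ := by
      rw [R]
      rcases not_and_or.1 H with H1 | H'
      · rw [Finset.Icc_eq_empty (by omega), Finset.empty_product]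
      rcases not_and_or.1 H' with H2 | H3
      · have he : Finset.Icc (⌈u.2.1 / h⌉ - 1) (⌊v.2.1 / h⌋ - 1) = ∅ :=
          Finset.Icc_eq_empty (by omega)
        rw [he, Finset.empty_product, Finset.product_empty]
      · have he : Finset.Icc (⌈u.2.2 / h⌉ - 1) (⌊v.2.2 / h⌋ - 1) = ∅ :=
          Finset.Icc_eq_empty (by omega)
        rw [he, Finset.product_empty, Finset.product_empty]
    rw [hR, Finset.sum_empty]
    exact zero_le

lemma grid_ccBox_ge {h : ℝ} (hh : 0 < h) {u v : ℝ × ℝ × ℝ}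
    (hs1 : u.1 + h ≤ v.1 - h) (hs2 : u.2.1 + h ≤ v.2.1 - h) (hs3 : u.2.2 + h ≤ v.2.2 - h) :
    ENNReal.ofReal
        (Delta3 F (u.1 + h) (v.1 - h) (u.2.1 + h) (v.2.1 - h) (u.2.2 + h) (v.2.2 - h))
      ≤ grid F h (ccBox u v) := by
  rw [grid_ccBox hh]
  have key : ∀ x y : ℝ, x + h ≤ y - h → (⌈x / h⌉ - 1 ≤ (⌊y / h⌋ - 1) + 1) := by
    intro x y hxy
    have l1 := lb' hh x
    have l2 := ub' hh y
    have : ((⌈x / h⌉ - 1 : ℤ) : ℝ) * h < ((⌊y / h⌋ - 1 : ℤ) : ℝ) * h + h := by linarith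
    have : ((⌈x / h⌉ - 1 : ℤ) : ℝ) < ((⌊y / h⌋ - 1 : ℤ) : ℝ) + 1 := by nlinarith
    exact_mod_cast (by exact_mod_cast this.le : ((⌈x / h⌉ - 1 : ℤ) : ℝ) ≤ ((⌊y / h⌋ - 1 : ℤ) + 1 : ℤ))
  have H1 := key u.1 v.1 hs1
  have H2 := key u.2.1 v.2.1 hs2
  have H3 := key u.2.2 v.2.2 hs3
  rw [R, ← ENNReal.ofReal_sum_of_nonneg (fun k _ => cellD_nonneg hΔ hh k),
    sum_cellD h H1 H2 H3]
  apply ENNReal.ofReal_le_ofReal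
  exact D_mono hΔ
    (u' := (((⌈u.1 / h⌉ - 1 : ℤ) : ℝ) * h, ((⌈u.2.1 / h⌉ - 1 : ℤ) : ℝ) * h,
      ((⌈u.2.2 / h⌉ - 1 : ℤ) : ℝ) * h))
    (u := (u.1 + h, u.2.1 + h, u.2.2 + h))
    (v := (v.1 - h, v.2.1 - h, v.2.2 - h))
    (v' := (((⌊v.1 / h⌋ - 1 : ℤ) : ℝ) * h + h, ((⌊v.2.1 / h⌋ - 1 : ℤ) : ℝ) * h + h,
      ((⌊v.2.2 / h⌋ - 1 : ℤ) : ℝ) * h + h))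
    ⟨by linarith [lb' hh u.1], by linarith [lb' hh u.2.1], by linarith [lb' hh u.2.2]⟩
    ⟨hs1, hs2, hs3⟩
    ⟨(ub' hh v.1).le, (ub' hh v.2.1).le, (ub' hh v.2.2).le⟩

end Bounds
end Stmt13

namespace Stmt13

variable {F : ℝ → ℝ → ℝ → ℝ}

section FiniteCover

variable (hΔ : ∀ a b c d e f : ℝ, a ≤ b → c ≤ d → e ≤ f → 0 ≤ Delta3 F a b c d e f)
variable (hFc : Continuous fun p : ℝ × ℝ × ℝ => F p.1 p.2.1 p.2.2)
include hΔ hFc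

lemma finite_cover {u v : ℝ × ℝ × ℝ} (huv : u ≤ v) {ι : Type*} (s : Finset ι)
    (p q : ι → ℝ × ℝ × ℝ) (hcov : ccBox u v ⊆ ⋃ i ∈ s, opBox (p i) (q i)) :
    ENNReal.ofReal (D F u v) ≤ ∑ i ∈ s, ENNReal.ofReal (D F (p i) (q i)) := by
  -- degenerate boxes have zero mass
  by_cases hstrict : u.1 < v.1 ∧ u.2.1 < v.2.1 ∧ u.2.2 < v.2.2
  swap
  · have hD0 : D F u v = 0 := by
      rcases not_and_or.1 hstrict with h1 | h'
      · have : u.1 = v.1 := le_antisymm huv.1 (not_lt.1 h1)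
        rw [D, ← this]
        exact Delta3_self_x _ _ _ _ _
      rcases not_and_or.1 h' with h2 | h3
      · have : u.2.1 = v.2.1 := le_antisymm huv.2.1 (not_lt.1 h2)
        rw [D, ← this]
        exact Delta3_self_y _ _ _ _ _
      · have : u.2.2 = v.2.2 := le_antisymm huv.2.2 (not_lt.1 h3)
        rw [D, ← this]
        exact Delta3_self_z _ _ _ _ _
    rw [hD0, ENNReal.ofReal_zero]
    exact zero_le
  obtain ⟨hs1, hs2, hs3⟩ := hstrict
  set δ : ℝ := min (v.1 - u.1) (min (v.2.1 - u.2.1) (v.2.2 - u.2.2)) / 2 with hδdef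
  have hδpos : 0 < δ := by
    apply div_pos _ (by norm_num)
    exact lt_min (by linarith) (lt_min (by linarith) (by linarith))
  -- the key inequality for each small positive `h`
  have key : ∀ h : ℝ, h ∈ Ioo (0 : ℝ) δ →
      ENNReal.ofReal
          (Delta3 F (u.1 + h) (v.1 - h) (u.2.1 + h) (v.2.1 - h) (u.2.2 + h) (v.2.2 - h))
        ≤ ∑ i ∈ s, ENNReal.ofReal
            (Delta3 F ((p i).1 - h) (q i).1 ((p i).2.1 - h) (q i).2.1
              ((p i).2.2 - h) (q i).2.2) := by
    intro h hh
    obtain ⟨hh0, hhδ⟩ := hh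
    have sep1 : u.1 + h ≤ v.1 - h := by
      have := min_le_left (v.1 - u.1) (min (v.2.1 - u.2.1) (v.2.2 - u.2.2)); simp only [hδdef] at hhδ; linarith
    have sep2 : u.2.1 + h ≤ v.2.1 - h := by
      have h1 := min_le_right (v.1 - u.1) (min (v.2.1 - u.2.1) (v.2.2 - u.2.2))
      have h2 := min_le_left (v.2.1 - u.2.1) (v.2.2 - u.2.2); linarith
    have sep3 : u.2.2 + h ≤ v.2.2 - h := by
      have h1 := min_le_right (v.1 - u.1) (min (v.2.1 - u.2.1) (v.2.2 - u.2.2))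
      have h2 := min_le_right (v.2.1 - u.2.1) (v.2.2 - u.2.2); linarith
    calc ENNReal.ofReal
          (Delta3 F (u.1 + h) (v.1 - h) (u.2.1 + h) (v.2.1 - h) (u.2.2 + h) (v.2.2 - h))
        ≤ grid F h (ccBox u v) := grid_ccBox_ge hΔ hh0 sep1 sep2 sep3
      _ ≤ grid F h (⋃ i ∈ s, opBox (p i) (q i)) := measure_mono hcov
      _ ≤ ∑ i ∈ s, grid F h (opBox (p i) (q i)) := measure_biUnion_finset_le _ _
      _ ≤ ∑ i ∈ s, ENNReal.ofReal
            (Delta3 F ((p i).1 - h) (q i).1 ((p i).2.1 - h) (q i).2.1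
              ((p i).2.2 - h) (q i).2.2) := by
          refine Finset.sum_le_sum fun i _ => ?_
          refine le_trans (measure_mono ?_) (grid_ccBox_le hΔ hh0 (u := p i) (v := q i))
          exact Set.prod_mono Ioo_subset_Icc_self
            (Set.prod_mono Ioo_subset_Icc_self Ioo_subset_Icc_self)
  -- pass to the limit `h → 0⁺`
  have hmem : Ioo (0 : ℝ) δ ∈ 𝓝[>] (0 : ℝ) := Ioo_mem_nhdsGT_of_mem ⟨le_refl 0, hδpos⟩
  have ev : ∀ᶠ h in 𝓝[>] (0 : ℝ),
      ENNReal.ofReal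
          (Delta3 F (u.1 + h) (v.1 - h) (u.2.1 + h) (v.2.1 - h) (u.2.2 + h) (v.2.2 - h))
        ≤ ∑ i ∈ s, ENNReal.ofReal
            (Delta3 F ((p i).1 - h) (q i).1 ((p i).2.1 - h) (q i).2.1
              ((p i).2.2 - h) (q i).2.2) := by
    filter_upwards [hmem] with h hh using key h hh
  have tL : Filter.Tendsto
      (fun h : ℝ => ENNReal.ofReal
        (Delta3 F (u.1 + h) (v.1 - h) (u.2.1 + h) (v.2.1 - h) (u.2.2 + h) (v.2.2 - h)))
      (𝓝[>] (0 : ℝ)) (𝓝 (ENNReal.ofReal (D F u v))) := by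
    have hc : Continuous (fun h : ℝ => ENNReal.ofReal
        (Delta3 F (u.1 + h) (v.1 - h) (u.2.1 + h) (v.2.1 - h) (u.2.2 + h) (v.2.2 - h))) :=
      ENNReal.continuous_ofReal.comp (contDelta hFc
        (continuous_const.add continuous_id) (continuous_const.sub continuous_id)
        (continuous_const.add continuous_id) (continuous_const.sub continuous_id)
        (continuous_const.add continuous_id) (continuous_const.sub continuous_id))
    have := hc.tendsto' 0 (ENNReal.ofReal (D F u v)) (by simp [D])
    exact this.mono_left nhdsWithin_le_nhds
  have tR : Filter.Tendsto
      (fun h : ℝ => ∑ i ∈ s, ENNReal.ofReal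
        (Delta3 F ((p i).1 - h) (q i).1 ((p i).2.1 - h) (q i).2.1
          ((p i).2.2 - h) (q i).2.2))
      (𝓝[>] (0 : ℝ)) (𝓝 (∑ i ∈ s, ENNReal.ofReal (D F (p i) (q i)))) := by
    refine tendsto_finset_sum _ fun i _ => ?_
    have hc : Continuous (fun h : ℝ => ENNReal.ofReal
        (Delta3 F ((p i).1 - h) (q i).1 ((p i).2.1 - h) (q i).2.1
          ((p i).2.2 - h) (q i).2.2)) :=
      ENNReal.continuous_ofReal.comp (contDelta hFc
        (continuous_const.sub continuous_id) continuous_const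
        (continuous_const.sub continuous_id) continuous_const
        (continuous_const.sub continuous_id) continuous_const)
    have := hc.tendsto' 0 (ENNReal.ofReal (D F (p i) (q i))) (by simp [D])
    exact this.mono_left nhdsWithin_le_nhds
  exact le_of_tendsto_of_tendsto tL tR ev

end FiniteCover
end Stmt13

namespace Stmt13

variable {F : ℝ → ℝ → ℝ → ℝ}

/-! ### The length function and outer measure -/

def length (F : ℝ → ℝ → ℝ → ℝ) (s : Set (ℝ × ℝ × ℝ)) : ℝ≥0∞ :=
  ⨅ (u : ℝ × ℝ × ℝ) (v : ℝ × ℝ × ℝ) (_ : s ⊆ ocBox u v), ENNReal.ofReal (D F u v)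

lemma length_le {s : Set (ℝ × ℝ × ℝ)} {u v : ℝ × ℝ × ℝ} (h : s ⊆ ocBox u v) :
    length F s ≤ ENNReal.ofReal (D F u v) :=
  iInf_le_of_le u (iInf_le_of_le v (iInf_le _ h))

lemma length_empty : length F ∅ = 0 := by
  refine le_antisymm ?_ zero_le
  have h := length_le (F := F) (u := (0, 0, 0)) (v := (0, 0, 0)) (Set.empty_subset _)
  simpa [D, Delta3] using h

lemma length_mono {s₁ s₂ : Set (ℝ × ℝ × ℝ)} (h : s₁ ⊆ s₂) : length F s₁ ≤ length F s₂ :=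
  iInf_mono fun _ => iInf_mono fun _ => iInf_mono' fun h' => ⟨h.trans h', le_rfl⟩

section WithHyp

variable (hΔ : ∀ a b c d e f : ℝ, a ≤ b → c ≤ d → e ≤ f → 0 ≤ Delta3 F a b c d e f)
include hΔ

lemma length_ocBox {u v : ℝ × ℝ × ℝ} (huv : u ≤ v) :
    length F (ocBox u v) = ENNReal.ofReal (D F u v) := by
  refine le_antisymm (length_le Subset.rfl) ?_
  refine le_iInf fun u' => le_iInf fun v' => le_iInf fun hsub => ?_
  by_cases hstrict : u.1 < v.1 ∧ u.2.1 < v.2.1 ∧ u.2.2 < v.2.2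
  · obtain ⟨h1, h2, h3⟩ := hstrict
    have hne1 : (Ioc u.1 v.1).Nonempty := nonempty_Ioc.2 h1
    have hne2 : (Ioc u.2.1 v.2.1).Nonempty := nonempty_Ioc.2 h2
    have hne3 : (Ioc u.2.2 v.2.2).Nonempty := nonempty_Ioc.2 h3
    rw [ocBox, ocBox, Set.prod_subset_prod_iff] at hsub
    rcases hsub with ⟨hx, hyz⟩ | hbad | hbad
    · rw [Set.prod_subset_prod_iff] at hyz
      rcases hyz with ⟨hy, hz⟩ | hbad | hbad
      · have c1 := (Ioc_subset_Ioc_iff h1).1 hx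
        have c2 := (Ioc_subset_Ioc_iff h2).1 hy
        have c3 := (Ioc_subset_Ioc_iff h3).1 hz
        exact ENNReal.ofReal_le_ofReal
          (D_mono hΔ ⟨c1.2, c2.2, c3.2⟩ huv ⟨c1.1, c2.1, c3.1⟩)
      · exact absurd hbad hne2.ne_empty
      · exact absurd hbad hne3.ne_empty
    · exact absurd hbad hne1.ne_empty
    · exact absurd hbad (hne2.prod hne3).ne_empty
  · have hD0 : D F u v = 0 := by
      rcases not_and_or.1 hstrict with h1 | h'
      · rw [D, ← le_antisymm huv.1 (not_lt.1 h1)]; exact Delta3_self_x _ _ _ _ _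
      rcases not_and_or.1 h' with h2 | h3
      · rw [D, ← le_antisymm huv.2.1 (not_lt.1 h2)]; exact Delta3_self_y _ _ _ _ _
      · rw [D, ← le_antisymm huv.2.2 (not_lt.1 h3)]; exact Delta3_self_z _ _ _ _ _
    rw [hD0, ENNReal.ofReal_zero]
    exact zero_le

end WithHyp

def outer (F : ℝ → ℝ → ℝ → ℝ) : OuterMeasure (ℝ × ℝ × ℝ) :=
  OuterMeasure.ofFunction (length F) length_empty

lemma outer_le_length (s : Set (ℝ × ℝ × ℝ)) : outer F s ≤ length F s :=
  OuterMeasure.ofFunction_le _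

section Subadd

variable (hΔ : ∀ a b c d e f : ℝ, a ≤ b → c ≤ d → e ≤ f → 0 ≤ Delta3 F a b c d e f)
variable (hFc : Continuous fun p : ℝ × ℝ × ℝ => F p.1 p.2.1 p.2.2)
include hΔ hFc

lemma countable_cover {u v : ℝ × ℝ × ℝ} (huv : u ≤ v) {pq : ℕ → (ℝ × ℝ × ℝ) × (ℝ × ℝ × ℝ)}
    (hcov : ccBox u v ⊆ ⋃ i, opBox (pq i).1 (pq i).2) :
    ENNReal.ofReal (D F u v) ≤ ∑' i, ENNReal.ofReal (D F (pq i).1 (pq i).2) := by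
  have hcomp : IsCompact (ccBox u v) :=
    (isCompact_Icc.prod (isCompact_Icc.prod isCompact_Icc))
  have hopen : ∀ i : ℕ, IsOpen (opBox (pq i).1 (pq i).2) := fun i =>
    (isOpen_Ioo.prod (isOpen_Ioo.prod isOpen_Ioo))
  obtain ⟨t, ht⟩ := hcomp.elim_finite_subcover _ hopen hcov
  calc ENNReal.ofReal (D F u v)
      ≤ ∑ i ∈ t, ENNReal.ofReal (D F (pq i).1 (pq i).2) :=
        finite_cover hΔ hFc huv t _ _ ht
    _ ≤ ∑' i, ENNReal.ofReal (D F (pq i).1 (pq i).2) := ENNReal.sum_le_tsum t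

end Subadd
end Stmt13

namespace Stmt13

variable {F : ℝ → ℝ → ℝ → ℝ}

lemma D_degenerate {u v : ℝ × ℝ × ℝ} (huv : u ≤ v)
    (h : ¬(u.1 < v.1 ∧ u.2.1 < v.2.1 ∧ u.2.2 < v.2.2)) : D F u v = 0 := by
  rcases not_and_or.1 h with h1 | h'
  · rw [D, ← le_antisymm huv.1 (not_lt.1 h1)]; exact Delta3_self_x _ _ _ _ _
  rcases not_and_or.1 h' with h2 | h3
  · rw [D, ← le_antisymm huv.2.1 (not_lt.1 h2)]; exact Delta3_self_y _ _ _ _ _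
  · rw [D, ← le_antisymm huv.2.2 (not_lt.1 h3)]; exact Delta3_self_z _ _ _ _ _

section OuterBox

variable (hΔ : ∀ a b c d e f : ℝ, a ≤ b → c ≤ d → e ≤ f → 0 ≤ Delta3 F a b c d e f)
variable (hFc : Continuous fun p : ℝ × ℝ × ℝ => F p.1 p.2.1 p.2.2)
include hΔ hFc

lemma outer_ocBox {u v : ℝ × ℝ × ℝ} (huv : u ≤ v) :
    outer F (ocBox u v) = ENNReal.ofReal (D F u v) := by
  refine le_antisymm ((outer_le_length _).trans_eq (length_ocBox hΔ huv)) ?_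
  refine le_iInf₂ fun t ht => ENNReal.le_of_forall_pos_le_add fun ε εpos h => ?_
  by_cases hstrict : u.1 < v.1 ∧ u.2.1 < v.2.1 ∧ u.2.2 < v.2.2
  swap
  · rw [D_degenerate huv hstrict, ENNReal.ofReal_zero]
    exact zero_le
  obtain ⟨hg1, hg2, hg3⟩ := hstrict
  set δ : ℝ≥0 := ε / 2 with hδdef
  have δpos : 0 < (δ : ℝ≥0∞) := by
    simp only [hδdef, ENNReal.coe_pos]
    exact half_pos εpos
  rcases ENNReal.exists_pos_sum_of_countable δpos.ne' ℕ with ⟨ε', ε'0, hε⟩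
  have hgap : 0 < min (v.1 - u.1) (min (v.2.1 - u.2.1) (v.2.2 - u.2.2)) :=
    lt_min (by linarith) (lt_min (by linarith) (by linarith))
  -- choose a slightly shrunk box
  have cont : Filter.Tendsto
      (fun τ : ℝ => Delta3 F (u.1 + τ) v.1 (u.2.1 + τ) v.2.1 (u.2.2 + τ) v.2.2)
      (𝓝[>] (0 : ℝ)) (𝓝 (D F u v)) := by
    have hc : Continuous
        (fun τ : ℝ => Delta3 F (u.1 + τ) v.1 (u.2.1 + τ) v.2.1 (u.2.2 + τ) v.2.2) :=
      contDelta hFc (continuous_const.add continuous_id) continuous_const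
        (continuous_const.add continuous_id) continuous_const
        (continuous_const.add continuous_id) continuous_const
    exact (hc.tendsto' 0 _ (by simp [D])).mono_left nhdsWithin_le_nhds
  have hδR : (0 : ℝ) < (δ : ℝ) := by exact_mod_cast (by simpa [hδdef] using half_pos εpos : 0 < δ)
  obtain ⟨t0, ht0val, ht0mem⟩ :=
    (((tendsto_order.1 cont).1 (D F u v - (δ : ℝ)) (by linarith)).and
      (Ioo_mem_nhdsGT_of_mem ⟨le_refl (0 : ℝ), hgap⟩)).exists
  set u' : ℝ × ℝ × ℝ := (u.1 + t0, u.2.1 + t0, u.2.2 + t0) with hu'def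
  have ht0pos : 0 < t0 := ht0mem.1
  have ht0gap : t0 < min (v.1 - u.1) (min (v.2.1 - u.2.1) (v.2.2 - u.2.2)) := ht0mem.2
  have hu'v : u' ≤ v := by
    have h1 := (min_le_left _ _).trans_lt' ht0gap
    have h2 := ((min_le_right _ _).trans (min_le_left _ _)).trans_lt' ht0gap
    have h3 := ((min_le_right _ _).trans (min_le_right _ _)).trans_lt' ht0gap
    exact ⟨by show u.1 + t0 ≤ v.1; linarith, by show u.2.1 + t0 ≤ v.2.1; linarith,
      by show u.2.2 + t0 ≤ v.2.2; linarith⟩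
  -- choose slightly enlarged open covers
  have hchoice : ∀ i : ℕ, ∃ wp : (ℝ × ℝ × ℝ) × (ℝ × ℝ × ℝ), t i ⊆ opBox wp.1 wp.2 ∧
      ENNReal.ofReal (D F wp.1 wp.2) < length F (t i) + ε' i := by
    intro i
    have hl : length F (t i) < length F (t i) + ε' i :=
      ENNReal.lt_add_right ((ENNReal.le_tsum i).trans_lt h).ne (ENNReal.coe_ne_zero.2 (ε'0 i).ne')
    conv at hl => lhs; rw [length]
    simp only [iInf_lt_iff, exists_prop] at hl
    rcases hl with ⟨ui, vi, hsub, hlt⟩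
    have cont2 : Filter.Tendsto
        (fun τ : ℝ => ENNReal.ofReal
          (Delta3 F ui.1 (vi.1 + τ) ui.2.1 (vi.2.1 + τ) ui.2.2 (vi.2.2 + τ)))
        (𝓝[>] (0 : ℝ)) (𝓝 (ENNReal.ofReal (D F ui vi))) := by
      have hc : Continuous (fun τ : ℝ => ENNReal.ofReal
          (Delta3 F ui.1 (vi.1 + τ) ui.2.1 (vi.2.1 + τ) ui.2.2 (vi.2.2 + τ))) :=
        ENNReal.continuous_ofReal.comp (contDelta hFc continuous_const
          (continuous_const.add continuous_id) continuous_const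
          (continuous_const.add continuous_id) continuous_const
          (continuous_const.add continuous_id))
      exact (hc.tendsto' 0 _ (by simp [D])).mono_left nhdsWithin_le_nhds
    obtain ⟨τi, hτlt, hτpos⟩ :=
      (((tendsto_order.1 cont2).2 _ hlt).and self_mem_nhdsWithin).exists
    refine ⟨(ui, (vi.1 + τi, vi.2.1 + τi, vi.2.2 + τi)), hsub.trans ?_, hτlt⟩
    rintro x ⟨hx1, hx2, hx3⟩
    exact ⟨⟨hx1.1, lt_of_le_of_lt hx1.2 (by simpa using hτpos)⟩,
      ⟨hx2.1, lt_of_le_of_lt hx2.2 (by simpa using hτpos)⟩,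
      ⟨hx3.1, lt_of_le_of_lt hx3.2 (by simpa using hτpos)⟩⟩
  choose w hw using hchoice
  have hsub0 : ccBox u' v ⊆ ocBox u v := by
    rintro x ⟨hx1, hx2, hx3⟩
    have e1 : u'.1 = u.1 + t0 := rfl
    have e2 : u'.2.1 = u.2.1 + t0 := rfl
    have e3 : u'.2.2 = u.2.2 + t0 := rfl
    refine ⟨⟨?_, hx1.2⟩, ⟨?_, hx2.2⟩, ⟨?_, hx3.2⟩⟩
    · have := hx1.1; rw [e1] at this; linarith
    · have := hx2.1; rw [e2] at this; linarith
    · have := hx3.1; rw [e3] at this; linarith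
  have Isub : ccBox u' v ⊆ ⋃ i, opBox (w i).1 (w i).2 :=
    hsub0.trans (ht.trans (iUnion_mono fun i => (hw i).1))
  calc ENNReal.ofReal (D F u v)
      ≤ ENNReal.ofReal (D F u' v + (δ : ℝ)) := by
        apply ENNReal.ofReal_le_ofReal
        have : Delta3 F (u.1 + t0) v.1 (u.2.1 + t0) v.2.1 (u.2.2 + t0) v.2.2 = D F u' v := rfl
        linarith [ht0val, this]
    _ ≤ ENNReal.ofReal (D F u' v) + ENNReal.ofReal (δ : ℝ) := ENNReal.ofReal_add_le
    _ ≤ ∑' i, ENNReal.ofReal (D F (w i).1 (w i).2) + (δ : ℝ≥0∞) := by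
        refine add_le_add (countable_cover hΔ hFc hu'v Isub) ?_
        rw [ENNReal.ofReal_coe_nnreal]
    _ ≤ ∑' i, (length F (t i) + ε' i) + (δ : ℝ≥0∞) :=
        add_le_add (ENNReal.tsum_le_tsum fun i => (hw i).2.le) le_rfl
    _ = ∑' i, length F (t i) + ∑' i, (ε' i : ℝ≥0∞) + (δ : ℝ≥0∞) := by rw [ENNReal.tsum_add]
    _ ≤ ∑' i, length F (t i) + (δ : ℝ≥0∞) + (δ : ℝ≥0∞) :=
        add_le_add (add_le_add le_rfl hε.le) le_rfl
    _ = ∑' i, length F (t i) + ε := by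
        simp [hδdef, add_assoc, ENNReal.add_halves]

end OuterBox
end Stmt13

namespace Stmt13

variable {F : ℝ → ℝ → ℝ → ℝ}

section Carath

variable (hΔ : ∀ a b c d e f : ℝ, a ≤ b → c ≤ d → e ≤ f → 0 ≤ Delta3 F a b c d e f)
include hΔ

lemma ocBox_empty_of_not_strict {u v : ℝ × ℝ × ℝ}
    (h : ¬(u.1 < v.1 ∧ u.2.1 < v.2.1 ∧ u.2.2 < v.2.2)) : ocBox u v = ∅ := by
  rcases not_and_or.1 h with h1 | h'
  · rw [ocBox, Ioc_eq_empty h1, Set.empty_prod]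
  rcases not_and_or.1 h' with h2 | h3
  · rw [ocBox, Ioc_eq_empty h2, Set.empty_prod, Set.prod_empty]
  · rw [ocBox, Ioc_eq_empty h3, Set.prod_empty, Set.prod_empty]

lemma carath_x (c : ℝ) :
    MeasurableSet[(outer F).caratheodory] {p : ℝ × ℝ × ℝ | c < p.1} := by
  refine OuterMeasure.ofFunction_caratheodory fun t => ?_
  refine le_iInf fun u => le_iInf fun v => le_iInf fun hsub => ?_
  by_cases hstrict : u.1 < v.1 ∧ u.2.1 < v.2.1 ∧ u.2.2 < v.2.2
  swap
  · have ht' : t = ∅ := eq_empty_of_subset_empty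
      (by rw [← ocBox_empty_of_not_strict hΔ hstrict]; exact hsub)
    rw [ht', Set.empty_inter, Set.empty_diff, length_empty, add_zero]
    exact zero_le
  obtain ⟨hg1, hg2, hg3⟩ := hstrict
  rcases le_or_gt v.1 c with hc1 | hc1
  · -- the halfspace misses the box
    have h1 : t ∩ {p : ℝ × ℝ × ℝ | c < p.1} = ∅ := by
      refine eq_empty_of_subset_empty fun x hx => ?_
      exact absurd (lt_of_le_of_lt ((hsub hx.1).1.2.trans hc1) hx.2) (lt_irrefl _)
    rw [h1, length_empty, zero_add]
    exact (length_mono Set.diff_subset).trans (length_le hsub)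
  rcases le_or_gt c u.1 with hc2 | hc2
  · -- the halfspace contains the box
    have h1 : t \ {p : ℝ × ℝ × ℝ | c < p.1} = ∅ := by
      refine eq_empty_of_subset_empty fun x hx => ?_
      exact hx.2 (lt_of_le_of_lt hc2 (hsub hx.1).1.1)
    rw [h1, length_empty, add_zero]
    exact (length_mono Set.inter_subset_left).trans (length_le hsub)
  · -- the halfspace splits the box
    have hsub1 : t ∩ {p : ℝ × ℝ × ℝ | c < p.1} ⊆ ocBox (c, u.2.1, u.2.2) v := by
      rintro x ⟨hxt, hxc⟩
      obtain ⟨hx1, hx2, hx3⟩ := hsub hxt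
      exact ⟨⟨hxc, hx1.2⟩, hx2, hx3⟩
    have hsub2 : t \ {p : ℝ × ℝ × ℝ | c < p.1} ⊆ ocBox u (c, v.2.1, v.2.2) := by
      rintro x ⟨hxt, hxc⟩
      obtain ⟨hx1, hx2, hx3⟩ := hsub hxt
      exact ⟨⟨hx1.1, not_lt.1 hxc⟩, hx2, hx3⟩
    have hA : 0 ≤ D F (c, u.2.1, u.2.2) v :=
      hΔ _ _ _ _ _ _ hc1.le hg2.le hg3.le
    have hB : 0 ≤ D F u (c, v.2.1, v.2.2) :=
      hΔ _ _ _ _ _ _ hc2.le hg2.le hg3.le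
    calc length F (t ∩ {p : ℝ × ℝ × ℝ | c < p.1}) + length F (t \ {p : ℝ × ℝ × ℝ | c < p.1})
        ≤ ENNReal.ofReal (D F (c, u.2.1, u.2.2) v) + ENNReal.ofReal (D F u (c, v.2.1, v.2.2)) :=
          add_le_add (length_le hsub1) (length_le hsub2)
      _ = ENNReal.ofReal (D F (c, u.2.1, u.2.2) v + D F u (c, v.2.1, v.2.2)) :=
          (ENNReal.ofReal_add hA hB).symm
      _ = ENNReal.ofReal (D F u v) := by
          congr 1
          have := Delta3_add_x (F := F) u.1 c v.1 u.2.1 v.2.1 u.2.2 v.2.2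
          simp only [D]
          linarith
  
lemma carath_y (c : ℝ) :
    MeasurableSet[(outer F).caratheodory] {p : ℝ × ℝ × ℝ | c < p.2.1} := by
  refine OuterMeasure.ofFunction_caratheodory fun t => ?_
  refine le_iInf fun u => le_iInf fun v => le_iInf fun hsub => ?_
  by_cases hstrict : u.1 < v.1 ∧ u.2.1 < v.2.1 ∧ u.2.2 < v.2.2
  swap
  · have ht' : t = ∅ := eq_empty_of_subset_empty
      (by rw [← ocBox_empty_of_not_strict hΔ hstrict]; exact hsub)
    rw [ht', Set.empty_inter, Set.empty_diff, length_empty, add_zero]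
    exact zero_le
  obtain ⟨hg1, hg2, hg3⟩ := hstrict
  rcases le_or_gt v.2.1 c with hc1 | hc1
  · have h1 : t ∩ {p : ℝ × ℝ × ℝ | c < p.2.1} = ∅ := by
      refine eq_empty_of_subset_empty fun x hx => ?_
      exact absurd (lt_of_le_of_lt ((hsub hx.1).2.1.2.trans hc1) hx.2) (lt_irrefl _)
    rw [h1, length_empty, zero_add]
    exact (length_mono Set.diff_subset).trans (length_le hsub)
  rcases le_or_gt c u.2.1 with hc2 | hc2
  · have h1 : t \ {p : ℝ × ℝ × ℝ | c < p.2.1} = ∅ := by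
      refine eq_empty_of_subset_empty fun x hx => ?_
      exact hx.2 (lt_of_le_of_lt hc2 (hsub hx.1).2.1.1)
    rw [h1, length_empty, add_zero]
    exact (length_mono Set.inter_subset_left).trans (length_le hsub)
  · have hsub1 : t ∩ {p : ℝ × ℝ × ℝ | c < p.2.1} ⊆ ocBox (u.1, c, u.2.2) v := by
      rintro x ⟨hxt, hxc⟩
      obtain ⟨hx1, hx2, hx3⟩ := hsub hxt
      exact ⟨hx1, ⟨hxc, hx2.2⟩, hx3⟩
    have hsub2 : t \ {p : ℝ × ℝ × ℝ | c < p.2.1} ⊆ ocBox u (v.1, c, v.2.2) := by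
      rintro x ⟨hxt, hxc⟩
      obtain ⟨hx1, hx2, hx3⟩ := hsub hxt
      exact ⟨hx1, ⟨hx2.1, not_lt.1 hxc⟩, hx3⟩
    have hA : 0 ≤ D F (u.1, c, u.2.2) v :=
      hΔ _ _ _ _ _ _ hg1.le hc1.le hg3.le
    have hB : 0 ≤ D F u (v.1, c, v.2.2) :=
      hΔ _ _ _ _ _ _ hg1.le hc2.le hg3.le
    calc length F (t ∩ {p : ℝ × ℝ × ℝ | c < p.2.1}) + length F (t \ {p : ℝ × ℝ × ℝ | c < p.2.1})
        ≤ ENNReal.ofReal (D F (u.1, c, u.2.2) v) + ENNReal.ofReal (D F u (v.1, c, v.2.2)) :=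
          add_le_add (length_le hsub1) (length_le hsub2)
      _ = ENNReal.ofReal (D F (u.1, c, u.2.2) v + D F u (v.1, c, v.2.2)) :=
          (ENNReal.ofReal_add hA hB).symm
      _ = ENNReal.ofReal (D F u v) := by
          congr 1
          have := Delta3_add_y (F := F) u.1 v.1 u.2.1 c v.2.1 u.2.2 v.2.2
          simp only [D]
          linarith

lemma carath_z (c : ℝ) :
    MeasurableSet[(outer F).caratheodory] {p : ℝ × ℝ × ℝ | c < p.2.2} := by
  refine OuterMeasure.ofFunction_caratheodory fun t => ?_
  refine le_iInf fun u => le_iInf fun v => le_iInf fun hsub => ?_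
  by_cases hstrict : u.1 < v.1 ∧ u.2.1 < v.2.1 ∧ u.2.2 < v.2.2
  swap
  · have ht' : t = ∅ := eq_empty_of_subset_empty
      (by rw [← ocBox_empty_of_not_strict hΔ hstrict]; exact hsub)
    rw [ht', Set.empty_inter, Set.empty_diff, length_empty, add_zero]
    exact zero_le
  obtain ⟨hg1, hg2, hg3⟩ := hstrict
  rcases le_or_gt v.2.2 c with hc1 | hc1
  · have h1 : t ∩ {p : ℝ × ℝ × ℝ | c < p.2.2} = ∅ := by
      refine eq_empty_of_subset_empty fun x hx => ?_
      exact absurd (lt_of_le_of_lt ((hsub hx.1).2.2.2.trans hc1) hx.2) (lt_irrefl _)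
    rw [h1, length_empty, zero_add]
    exact (length_mono Set.diff_subset).trans (length_le hsub)
  rcases le_or_gt c u.2.2 with hc2 | hc2
  · have h1 : t \ {p : ℝ × ℝ × ℝ | c < p.2.2} = ∅ := by
      refine eq_empty_of_subset_empty fun x hx => ?_
      exact hx.2 (lt_of_le_of_lt hc2 (hsub hx.1).2.2.1)
    rw [h1, length_empty, add_zero]
    exact (length_mono Set.inter_subset_left).trans (length_le hsub)
  · have hsub1 : t ∩ {p : ℝ × ℝ × ℝ | c < p.2.2} ⊆ ocBox (u.1, u.2.1, c) v := by
      rintro x ⟨hxt, hxc⟩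
      obtain ⟨hx1, hx2, hx3⟩ := hsub hxt
      exact ⟨hx1, hx2, ⟨hxc, hx3.2⟩⟩
    have hsub2 : t \ {p : ℝ × ℝ × ℝ | c < p.2.2} ⊆ ocBox u (v.1, v.2.1, c) := by
      rintro x ⟨hxt, hxc⟩
      obtain ⟨hx1, hx2, hx3⟩ := hsub hxt
      exact ⟨hx1, hx2, ⟨hx3.1, not_lt.1 hxc⟩⟩
    have hA : 0 ≤ D F (u.1, u.2.1, c) v :=
      hΔ _ _ _ _ _ _ hg1.le hg2.le hc1.le
    have hB : 0 ≤ D F u (v.1, v.2.1, c) :=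
      hΔ _ _ _ _ _ _ hg1.le hg2.le hc2.le
    calc length F (t ∩ {p : ℝ × ℝ × ℝ | c < p.2.2}) + length F (t \ {p : ℝ × ℝ × ℝ | c < p.2.2})
        ≤ ENNReal.ofReal (D F (u.1, u.2.1, c) v) + ENNReal.ofReal (D F u (v.1, v.2.1, c)) :=
          add_le_add (length_le hsub1) (length_le hsub2)
      _ = ENNReal.ofReal (D F (u.1, u.2.1, c) v + D F u (v.1, v.2.1, c)) :=
          (ENNReal.ofReal_add hA hB).symm
      _ = ENNReal.ofReal (D F u v) := by
          congr 1
          have := Delta3_add_z (F := F) u.1 v.1 u.2.1 v.2.1 u.2.2 c v.2.2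
          simp only [D]
          linarith

lemma le_carath :
    (inferInstance : MeasurableSpace (ℝ × ℝ × ℝ)) ≤ (outer F).caratheodory := by
  have hgen : (Real.measurableSpace : MeasurableSpace ℝ)
      = MeasurableSpace.generateFrom (range Ioi) :=
    BorelSpace.measurable_eq.trans (borel_eq_generateFrom_Ioi ℝ)
  have key : ∀ g : ℝ × ℝ × ℝ → ℝ,
      (∀ c : ℝ, MeasurableSet[(outer F).caratheodory] {p : ℝ × ℝ × ℝ | c < g p}) →
      (Real.measurableSpace.comap g ≤ (outer F).caratheodory) := by
    intro g hg
    rw [hgen, MeasurableSpace.comap_generateFrom]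
    refine MeasurableSpace.generateFrom_le ?_
    rintro s ⟨s', ⟨c, rfl⟩, rfl⟩
    exact hg c
  show (Prod.instMeasurableSpace : MeasurableSpace (ℝ × ℝ × ℝ)) ≤ _
  rw [Prod.instMeasurableSpace]
  refine sup_le ?_ ?_
  · exact key Prod.fst (carath_x hΔ)
  · rw [show (Prod.instMeasurableSpace : MeasurableSpace (ℝ × ℝ))
        = Real.measurableSpace.comap Prod.fst ⊔ Real.measurableSpace.comap Prod.snd from rfl,
      MeasurableSpace.comap_sup, MeasurableSpace.comap_comp, MeasurableSpace.comap_comp]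
    refine sup_le ?_ ?_
    · exact key (Prod.fst ∘ Prod.snd) (carath_y hΔ)
    · exact key (Prod.snd ∘ Prod.snd) (carath_z hΔ)

end Carath
end Stmt13

open Stmt13 in
theorem stmt13 (F : ℝ → ℝ → ℝ → ℝ)
    (hFc : Continuous fun p : ℝ × ℝ × ℝ => F p.1 p.2.1 p.2.2)
    (hΔ : ∀ a b c d e f : ℝ, a ≤ b → c ≤ d → e ≤ f → 0 ≤ Delta3 F a b c d e f) :
    ∃ μ : Measure (ℝ × ℝ × ℝ),
      ∀ a b c d e f : ℝ, a ≤ b → c ≤ d → e ≤ f →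
        μ (Set.Icc a b ×ˢ Set.Icc c d ×ˢ Set.Icc e f)
          = ENNReal.ofReal (Delta3 F a b c d e f) := by
  refine ⟨(outer F).toMeasure (le_carath hΔ), fun a b c d e f hab hcd hef => ?_⟩
  set μ : Measure (ℝ × ℝ × ℝ) := (outer F).toMeasure (le_carath hΔ) with hμ
  set v : ℝ × ℝ × ℝ := (b, d, f) with hv
  set s : ℕ → Set (ℝ × ℝ × ℝ) :=
    fun n => ocBox (a - 1 / (n + 1), c - 1 / (n + 1), e - 1 / (n + 1)) v with hs
  have npos : ∀ n : ℕ, (0 : ℝ) < 1 / ((n : ℝ) + 1) := fun n => by positivity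
  have hocv : ∀ n : ℕ, μ (s n) = ENNReal.ofReal
      (Delta3 F (a - 1 / (n + 1)) b (c - 1 / (n + 1)) d (e - 1 / (n + 1)) f) := by
    intro n
    rw [hμ, MeasureTheory.toMeasure_apply _ _ (measurableSet_ocBox _ _),
      outer_ocBox hΔ hFc ⟨by have := npos n; show a - 1 / (n + 1) ≤ b; linarith,
        by have := npos n; show c - 1 / (n + 1) ≤ d; linarith,
        by have := npos n; show e - 1 / (n + 1) ≤ f; linarith⟩]
    rfl
  have hse : ⋂ n, s n = Set.Icc a b ×ˢ Set.Icc c d ×ˢ Set.Icc e f := by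
    ext x
    simp only [Set.mem_iInter, hs]
    constructor
    · intro hx
      have base : Filter.Tendsto (fun n : ℕ => (1 : ℝ) / (n + 1)) atTop (𝓝 0) :=
        tendsto_one_div_add_atTop_nhds_zero_nat
      have l1 : a ≤ x.1 := by
        have t : Filter.Tendsto (fun n : ℕ => a - 1 / ((n : ℝ) + 1)) atTop (𝓝 a) := by
          simpa using tendsto_const_nhds.sub base
        exact le_of_tendsto t (Filter.Eventually.of_forall fun n => (hx n).1.1.le)
      have l2 : c ≤ x.2.1 := by
        have t : Filter.Tendsto (fun n : ℕ => c - 1 / ((n : ℝ) + 1)) atTop (𝓝 c) := by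
          simpa using tendsto_const_nhds.sub base
        exact le_of_tendsto t (Filter.Eventually.of_forall fun n => (hx n).2.1.1.le)
      have l3 : e ≤ x.2.2 := by
        have t : Filter.Tendsto (fun n : ℕ => e - 1 / ((n : ℝ) + 1)) atTop (𝓝 e) := by
          simpa using tendsto_const_nhds.sub base
        exact le_of_tendsto t (Filter.Eventually.of_forall fun n => (hx n).2.2.1.le)
      exact ⟨⟨l1, (hx 0).1.2⟩, ⟨l2, (hx 0).2.1.2⟩, ⟨l3, (hx 0).2.2.2⟩⟩
    · rintro ⟨hx1, hx2, hx3⟩ n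
      exact ⟨⟨by have := npos n; linarith [hx1.1], hx1.2⟩,
        ⟨by have := npos n; linarith [hx2.1], hx2.2⟩,
        ⟨by have := npos n; linarith [hx3.1], hx3.2⟩⟩
  have hanti : Antitone s := by
    intro n m hnm x hx
    have hmono : (1 : ℝ) / ((m : ℝ) + 1) ≤ 1 / ((n : ℝ) + 1) := by
      apply one_div_le_one_div_of_le (by positivity)
      exact_mod_cast add_le_add_left (Nat.cast_le.2 hnm) 1
    obtain ⟨hx1, hx2, hx3⟩ := hx
    exact ⟨⟨by linarith [hx1.1], hx1.2⟩, ⟨by linarith [hx2.1], hx2.2⟩,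
      ⟨by linarith [hx3.1], hx3.2⟩⟩
  have hmeas : ∀ n, NullMeasurableSet (s n) μ := fun n =>
    (measurableSet_ocBox _ _).nullMeasurableSet
  have hfin : ∃ n, μ (s n) ≠ ⊤ := ⟨0, by rw [hocv 0]; exact ENNReal.ofReal_ne_top⟩
  have t1 := tendsto_measure_iInter_atTop hmeas hanti hfin
  rw [hse] at t1
  have base : Filter.Tendsto (fun n : ℕ => (1 : ℝ) / (n + 1)) atTop (𝓝 0) :=
    tendsto_one_div_add_atTop_nhds_zero_nat
  have contc : Continuous (fun τ : ℝ =>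
      ENNReal.ofReal (Delta3 F (a - τ) b (c - τ) d (e - τ) f)) :=
    ENNReal.continuous_ofReal.comp (contDelta hFc
      (continuous_const.sub continuous_id) continuous_const
      (continuous_const.sub continuous_id) continuous_const
      (continuous_const.sub continuous_id) continuous_const)
  have t2 : Filter.Tendsto (fun n : ℕ => μ (s n)) atTop
      (𝓝 (ENNReal.ofReal (Delta3 F a b c d e f))) := by
    have t3 := (contc.tendsto' 0 (ENNReal.ofReal (Delta3 F a b c d e f)) (by simp)).comp base
    exact t3.congr fun n => (hocv n).symm
  exact tendsto_nhds_unique t1 t2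
end
end
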